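/- arXiv:2507.17358 — 12 statements merged into one kernel-verified Lean document; each statement's English description precedes it below -/
import Mathlib

section
/- Let T = (T₁,…,T_n) be a commuting n-tuple of bounded linear operators on a Hilbert space H and h ∈ H. Define the operator L on the Fock space H²(ℂⁿ) by ⟨L z^α, z^β⟩ = ⟨T^α h, T^β h⟩_H for all multi-indices α, β. Then L is a positive Hilbert–Schmidt operator, with ‖L‖_{HS}² ≤ exp(2 Σ_i ‖T_i‖²)·‖h‖⁴. -/
open scoped ComplexOrder BigOperators
set_option maxHeartbeats 1000000

/-- `T^α = T₁^{α₁} ⋯ T_n^{α_n}` for a tuple of operators. -/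
noncomputable def opPow {H : Type*} [NormedAddCommGroup H] [NormedSpace ℂ H]
    {n : ℕ} (T : Fin n → H →L[ℂ] H) (α : Fin n → ℕ) : H →L[ℂ] H :=
  (List.ofFn fun i => (T i) ^ (α i)).prod

lemma list_prod_apply_norm_le {H : Type*} [NormedAddCommGroup H] [NormedSpace ℂ H] :
    ∀ (l : List (H →L[ℂ] H)) (x : H), ‖l.prod x‖ ≤ (l.map (‖·‖)).prod * ‖x‖ := by
  intro l
  induction l with
  | nil => intro x; simp
  | cons a l ih =>
    intro x
    simp only [List.prod_cons, List.map_cons, ContinuousLinearMap.mul_apply]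
    calc ‖a (l.prod x)‖ ≤ ‖a‖ * ‖l.prod x‖ := a.le_opNorm _
      _ ≤ ‖a‖ * ((l.map (‖·‖)).prod * ‖x‖) := by
          apply mul_le_mul_of_nonneg_left (ih x) (norm_nonneg a)
      _ = ‖a‖ * (l.map (‖·‖)).prod * ‖x‖ := by ring

lemma opPow_apply_norm_le {H : Type*} [NormedAddCommGroup H] [NormedSpace ℂ H]
    {n : ℕ} (T : Fin n → H →L[ℂ] H) (α : Fin n → ℕ) (h : H) :
    ‖opPow T α h‖ ≤ (∏ i, ‖T i‖ ^ α i) * ‖h‖ := by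
  refine le_trans (list_prod_apply_norm_le _ h) ?_
  apply mul_le_mul_of_nonneg_right _ (norm_nonneg h)
  rw [List.map_ofFn, List.prod_ofFn]
  apply Finset.prod_le_prod (fun i _ => norm_nonneg _)
  intro i _
  rcases Nat.eq_zero_or_pos (α i) with h0 | hpos
  · simp only [Function.comp_apply, h0, pow_zero]
    exact ContinuousLinearMap.norm_id_le
  · exact norm_pow_le' _ hpos

lemma pi_hasSum_exp : ∀ (n : ℕ) (c : Fin n → ℝ), (∀ i, 0 ≤ c i) →
    HasSum (fun α : Fin n → ℕ => ∏ i, c i ^ α i / (α i).factorial)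
      (∏ i, Real.exp (c i)) := by
  intro n
  induction n with
  | zero =>
    intro c _
    have : (fun α : Fin 0 → ℕ => ∏ i, c i ^ α i / (α i).factorial)
        = fun _ => (1 : ℝ) := by
      funext α; simp
    rw [this]
    have h1 : (∏ i : Fin 0, Real.exp (c i)) = 1 := by simp
    rw [h1]
    have := hasSum_single (f := fun _ : Fin 0 → ℕ => (1 : ℝ)) default
      (fun b' hb' => absurd (Subsingleton.elim b' default) hb')
    simpa using this
  | succ n ih =>
    intro c hc
    have h0 : HasSum (fun k : ℕ => c 0 ^ k / k.factorial) (Real.exp (c 0)) := by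
      rw [Real.exp_eq_exp_ℝ]
      exact NormedSpace.expSeries_div_hasSum_exp (c 0)
    have htail : HasSum (fun β : Fin n → ℕ => ∏ i, c i.succ ^ β i / (β i).factorial)
        (∏ i : Fin n, Real.exp (c i.succ)) := ih _ (fun i => hc i.succ)
    have hsum : Summable (fun p : ℕ × (Fin n → ℕ) =>
        (c 0 ^ p.1 / p.1.factorial) * ∏ i, c i.succ ^ p.2 i / (p.2 i).factorial) := by
      refine Summable.mul_of_nonneg (f := fun k : ℕ => c 0 ^ k / k.factorial)
        (g := fun β : Fin n → ℕ => ∏ i, c i.succ ^ β i / (β i).factorial)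
        h0.summable htail.summable ?_ ?_
      · intro k
        exact div_nonneg (pow_nonneg (hc 0) _) (Nat.cast_nonneg _)
      · intro β
        exact Finset.prod_nonneg fun i _ =>
          div_nonneg (pow_nonneg (hc i.succ) _) (Nat.cast_nonneg _)
    have hprod := h0.mul htail hsum
    have heq : ((fun α : Fin (n + 1) → ℕ => ∏ i, c i ^ α i / (α i).factorial) ∘
        (Fin.consEquiv (fun _ : Fin (n + 1) => ℕ)))
        = fun p : ℕ × (Fin n → ℕ) =>
          (c 0 ^ p.1 / p.1.factorial) * ∏ i, c i.succ ^ p.2 i / (p.2 i).factorial := by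
      funext p
      simp only [Function.comp_apply, Fin.consEquiv_apply]
      rw [Fin.prod_univ_succ]
      simp [Fin.cons_zero, Fin.cons_succ]
    refine ((Fin.consEquiv (fun _ : Fin (n + 1) => ℕ)).hasSum_iff).mp ?_
    rw [heq, Fin.prod_univ_succ]
    exact hprod

/-- for a commuting tuple `T` of bounded operators on a Hilbert space `H`
and `h ∈ H`, the operator `L` on the Fock space `H²(ℂⁿ)` with matrix entries
`⟨L e_α, e_β⟩ = ⟨T^α h, T^β h⟩/√(α! β!)` (w.r.t. the orthonormal basis `e_α = z^α/√α!`) is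
positive and Hilbert–Schmidt, with `‖L‖_{HS}² ≤ exp(2 Σ_i ‖T_i‖²)·‖h‖⁴`.
Positivity of `L` is expressed as positive semidefiniteness of the moment matrix
`[⟨T^α h, T^β h⟩]` (quadratic form over finitely supported coefficient vectors), and the
Hilbert–Schmidt norm as the sum `Σ_{α,β} |⟨T^α h, T^β h⟩|²/(α! β!)`. -/
theorem stmt2 (n : ℕ) {H : Type*} [NormedAddCommGroup H] [InnerProductSpace ℂ H]
    (T : Fin n → H →L[ℂ] H) (hcomm : ∀ i j, T i ∘L T j = T j ∘L T i) (h : H) :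
    (∀ (a : (Fin n → ℕ) →₀ ℂ),
      0 ≤ ∑ α ∈ a.support, ∑ β ∈ a.support,
        (starRingEnd ℂ) (a α) * a β *
          (inner ℂ (opPow T β h) (opPow T α h) : ℂ)) ∧
    Summable (fun p : ((Fin n → ℕ) × (Fin n → ℕ)) =>
      ‖(inner ℂ (opPow T p.2 h) (opPow T p.1 h) : ℂ)‖ ^ 2 /
        ((∏ i, Nat.factorial (p.1 i)) * (∏ i, Nat.factorial (p.2 i)) : ℝ)) ∧
    (∑' p : ((Fin n → ℕ) × (Fin n → ℕ)),
      ‖(inner ℂ (opPow T p.2 h) (opPow T p.1 h) : ℂ)‖ ^ 2 /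
        ((∏ i, Nat.factorial (p.1 i)) * (∏ i, Nat.factorial (p.2 i)) : ℝ))
      ≤ Real.exp (2 * ∑ i, ‖T i‖ ^ 2) * ‖h‖ ^ 4 := by
  classical
  -- Positivity
  have pos : ∀ (a : (Fin n → ℕ) →₀ ℂ),
      0 ≤ ∑ α ∈ a.support, ∑ β ∈ a.support,
        (starRingEnd ℂ) (a α) * a β *
          (inner ℂ (opPow T β h) (opPow T α h) : ℂ) := by
    intro a
    set w : H := ∑ γ ∈ a.support, (starRingEnd ℂ) (a γ) • opPow T γ h with hw
    have key : (∑ α ∈ a.support, ∑ β ∈ a.support,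
        (starRingEnd ℂ) (a α) * a β *
          (inner ℂ (opPow T β h) (opPow T α h) : ℂ)) = (inner ℂ w w : ℂ) := by
      rw [hw, inner_sum]
      refine Finset.sum_congr rfl fun α _ => ?_
      rw [sum_inner]
      refine Finset.sum_congr rfl fun β _ => ?_
      rw [inner_smul_left, inner_smul_right]
      simp only [RingHom.id_apply, starRingEnd_self_apply]
      ring
    rw [key, RCLike.nonneg_iff (K := ℂ)]
    exact ⟨inner_self_nonneg, inner_self_im (𝕜 := ℂ) w⟩
  refine ⟨pos, ?_⟩
  -- Hilbert-Schmidt bound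
  set c : Fin n → ℝ := fun i => ‖T i‖ ^ 2 with hc
  have hc0 : ∀ i, 0 ≤ c i := fun i => sq_nonneg _
  have hF0 := pi_hasSum_exp n c hc0
  set F : (Fin n → ℕ) → ℝ :=
    fun α => ‖h‖ ^ 2 * ∏ i, c i ^ α i / (α i).factorial with hFdef
  have hF : HasSum F (‖h‖ ^ 2 * ∏ i, Real.exp (c i)) := hF0.mul_left _
  have hFnonneg : ∀ α, 0 ≤ F α := fun α =>
    mul_nonneg (sq_nonneg _) (Finset.prod_nonneg fun i _ =>
      div_nonneg (pow_nonneg (hc0 i) _) (Nat.cast_nonneg _))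
  have hFF : Summable (fun p : ((Fin n → ℕ) × (Fin n → ℕ)) => F p.1 * F p.2) :=
    hF.summable.mul_of_nonneg hF.summable hFnonneg hFnonneg
  -- pointwise bound
  have hbound : ∀ p : ((Fin n → ℕ) × (Fin n → ℕ)),
      ‖(inner ℂ (opPow T p.2 h) (opPow T p.1 h) : ℂ)‖ ^ 2 /
        ((∏ i, Nat.factorial (p.1 i)) * (∏ i, Nat.factorial (p.2 i)) : ℝ)
      ≤ F p.1 * F p.2 := by
    rintro ⟨α, β⟩
    have hA : (0 : ℝ) < ∏ i, ((α i).factorial : ℝ) :=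
      Finset.prod_pos fun i _ => by exact_mod_cast (α i).factorial_pos
    have hB : (0 : ℝ) < ∏ i, ((β i).factorial : ℝ) :=
      Finset.prod_pos fun i _ => by exact_mod_cast (β i).factorial_pos
    have hXα : ‖opPow T α h‖ ≤ (∏ i, ‖T i‖ ^ α i) * ‖h‖ := opPow_apply_norm_le T α h
    have hXβ : ‖opPow T β h‖ ≤ (∏ i, ‖T i‖ ^ β i) * ‖h‖ := opPow_apply_norm_le T β h
    have hinner : ‖(inner ℂ (opPow T β h) (opPow T α h) : ℂ)‖
        ≤ ((∏ i, ‖T i‖ ^ β i) * ‖h‖) * ((∏ i, ‖T i‖ ^ α i) * ‖h‖) := by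
      refine le_trans (norm_inner_le_norm _ _) ?_
      exact mul_le_mul hXβ hXα (norm_nonneg _)
        (mul_nonneg (Finset.prod_nonneg fun i _ => pow_nonneg (norm_nonneg _) _)
          (norm_nonneg _))
    have hnum : ‖(inner ℂ (opPow T β h) (opPow T α h) : ℂ)‖ ^ 2
        ≤ (((∏ i, ‖T i‖ ^ β i) * ‖h‖) * ((∏ i, ‖T i‖ ^ α i) * ‖h‖)) ^ 2 :=
      pow_le_pow_left₀ (norm_nonneg _) hinner 2
    have hcastden : (((∏ i, Nat.factorial (α i)) * (∏ i, Nat.factorial (β i)) : ℕ) : ℝ)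
        = (∏ i, ((α i).factorial : ℝ)) * (∏ i, ((β i).factorial : ℝ)) := by
      push_cast; ring
    have hFprod : F α * F β
        = (((∏ i, ‖T i‖ ^ β i) * ‖h‖) * ((∏ i, ‖T i‖ ^ α i) * ‖h‖)) ^ 2 /
            ((∏ i, ((α i).factorial : ℝ)) * (∏ i, ((β i).factorial : ℝ))) := by
      rw [hFdef]
      simp only
      rw [Finset.prod_div_distrib, Finset.prod_div_distrib]
      have hcα : ∏ i, c i ^ α i = (∏ i, ‖T i‖ ^ α i) ^ 2 := by
        rw [← Finset.prod_pow]
        exact Finset.prod_congr rfl fun i _ => by rw [hc]; ring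
      have hcβ : ∏ i, c i ^ β i = (∏ i, ‖T i‖ ^ β i) ^ 2 := by
        rw [← Finset.prod_pow]
        exact Finset.prod_congr rfl fun i _ => by rw [hc]; ring
      rw [hcα, hcβ]
      field_simp
    calc ‖(inner ℂ (opPow T β h) (opPow T α h) : ℂ)‖ ^ 2 /
          ((∏ i, Nat.factorial (α i)) * (∏ i, Nat.factorial (β i)) : ℝ)
        = ‖(inner ℂ (opPow T β h) (opPow T α h) : ℂ)‖ ^ 2 /
          ((∏ i, ((α i).factorial : ℝ)) * (∏ i, ((β i).factorial : ℝ))) := by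
          norm_num
      _ ≤ (((∏ i, ‖T i‖ ^ β i) * ‖h‖) * ((∏ i, ‖T i‖ ^ α i) * ‖h‖)) ^ 2 /
          ((∏ i, ((α i).factorial : ℝ)) * (∏ i, ((β i).factorial : ℝ))) := by
          exact (div_le_div_iff_of_pos_right (mul_pos hA hB)).mpr hnum
      _ = F α * F β := hFprod.symm
  have hgnonneg : ∀ p : ((Fin n → ℕ) × (Fin n → ℕ)),
      0 ≤ ‖(inner ℂ (opPow T p.2 h) (opPow T p.1 h) : ℂ)‖ ^ 2 /
        ((∏ i, Nat.factorial (p.1 i)) * (∏ i, Nat.factorial (p.2 i)) : ℝ) := by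
    intro p
    apply div_nonneg (sq_nonneg _)
    positivity
  have hgsummable : Summable (fun p : ((Fin n → ℕ) × (Fin n → ℕ)) =>
      ‖(inner ℂ (opPow T p.2 h) (opPow T p.1 h) : ℂ)‖ ^ 2 /
        ((∏ i, Nat.factorial (p.1 i)) * (∏ i, Nat.factorial (p.2 i)) : ℝ)) :=
    Summable.of_nonneg_of_le hgnonneg hbound hFF
  refine ⟨hgsummable, ?_⟩
  have hle := Summable.tsum_le_tsum hbound hgsummable hFF
  refine hle.trans ?_
  have htsumFF : (∑' p : ((Fin n → ℕ) × (Fin n → ℕ)), F p.1 * F p.2)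
      = (∑' α, F α) * (∑' α, F α) :=
    (Summable.tsum_mul_tsum hF.summable hF.summable hFF).symm
  rw [htsumFF, hF.tsum_eq, ← Real.exp_sum]
  have : Real.exp (2 * ∑ i, ‖T i‖ ^ 2) = Real.exp (∑ i, c i) * Real.exp (∑ i, c i) := by
    rw [← Real.exp_add, hc]; ring_nf
  rw [this]
  exact le_of_eq (by ring)
end

section
/- Let L be a positive compact operator on the Fock space H²(ℂⁿ) with spectral decomposition L = Σ_j f_j ⊗ f_j, where the f_j ∈ H²(ℂⁿ) are pairwise orthogonal eigenvectors with λ_j := ‖f_j‖²_{H²} > 0. Suppose L arises from a cyclic commuting tuple (T,h) on H via ⟨Lp,q⟩_{H²} = ⟨p(T)h, q(T)h⟩_H for all polynomials p,q. Then the vectors {λ_j^{-1} f_j(T)h} form an orthonormal basis of H. -/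
open scoped ComplexOrder BigOperators

/-- let `(T,h)` be a cyclic commuting tuple on `H`.  Model the Fock space
`H²(ℂⁿ)` as a Hilbert space `Fk` together with the continuous linear map `ev : Fk → H`
extending `p ↦ p(T)h` (so every `T^α h` is in its range, and its range is dense by
cyclicity), and let `L` be the positive compact operator with `⟨Lx,y⟩ = ⟨ev x, ev y⟩`,
with spectral decomposition `L = Σ_j f_j ⊗ f_j` (pairwise orthogonal eigenvectors `f_j`,
`λ_j = ‖f_j‖² > 0`).  Then the vectors `λ_j⁻¹ · ev(f_j) = λ_j⁻¹ · f_j(T)h` form an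
orthonormal basis of `H`. -/
theorem stmt3 {H Fk : Type*}
    [NormedAddCommGroup H] [InnerProductSpace ℂ H] [CompleteSpace H]
    [NormedAddCommGroup Fk] [InnerProductSpace ℂ Fk] [CompleteSpace Fk]
    {n : ℕ} (T : Fin n → H →L[ℂ] H) (hcomm : ∀ i j, T i ∘L T j = T j ∘L T i) (h : H)
    (hcyc : (Submodule.span ℂ
      (Set.range fun α : Fin n → ℕ => opPow T α h)).topologicalClosure = ⊤)
    (ev : Fk →L[ℂ] H)
    (hev : ∀ α : Fin n → ℕ, opPow T α h ∈ Set.range ev)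
    (hdense : DenseRange ev)
    (L : Fk →L[ℂ] Fk)
    (hL : ∀ x y : Fk, (inner ℂ (L x) y : ℂ) = inner ℂ (ev x) (ev y))
    {J : Type*} (f : J → Fk)
    (horth : ∀ j k, j ≠ k → (inner ℂ (f j) (f k) : ℂ) = 0)
    (hnz : ∀ j, f j ≠ 0)
    (hspec : ∀ x : Fk, HasSum (fun j => (inner ℂ (f j) x : ℂ) • f j) (L x)) :
    Orthonormal ℂ (fun j => ((‖f j‖ ^ 2)⁻¹ : ℝ) • ev (f j)) ∧
    (Submodule.span ℂ (Set.range fun j => ev (f j))).topologicalClosure = ⊤ := by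
  classical
  have hfn : ∀ j, (‖f j‖ : ℝ) ^ 2 ≠ 0 := fun j =>
    pow_ne_zero 2 (norm_ne_zero_iff.mpr (hnz j))
  -- key sum formula for inner products against L
  have key : ∀ x y : Fk,
      HasSum (fun m => (inner ℂ (f m) y : ℂ) * (inner ℂ x (f m) : ℂ)) (inner ℂ x (L y) : ℂ) := by
    intro x y
    have := (innerSL ℂ x).hasSum (hspec y)
    simpa [inner_smul_right] using this
  -- L (f j)
  have hLf : ∀ j, L (f j) = (((‖f j‖ : ℝ) ^ 2 : ℝ) : ℂ) • f j := by
    intro j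
    have h1 : HasSum (fun m => (inner ℂ (f m) (f j) : ℂ) • f m) (L (f j)) := hspec (f j)
    have h2 : HasSum (fun m => (inner ℂ (f m) (f j) : ℂ) • f m)
        ((inner ℂ (f j) (f j) : ℂ) • f j) :=
      hasSum_single j (fun m hm => by rw [horth m j hm, zero_smul])
    rw [h1.unique h2, inner_self_eq_norm_sq_to_K]
    norm_cast
  -- inner products of the images
  have hinner_ev : ∀ j k, (inner ℂ (ev (f j)) (ev (f k)) : ℂ)
      = ((‖f j‖ ^ 2 : ℝ) : ℂ) * inner ℂ (f j) (f k) := by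
    intro j k
    rw [← hL, hLf, inner_smul_left, Complex.conj_ofReal]
  constructor
  · rw [orthonormal_iff_ite]
    intro j k
    simp only [← Complex.coe_smul]
    rw [inner_smul_left, inner_smul_right, hinner_ev, Complex.conj_ofReal]
    by_cases hjk : j = k
    · subst hjk
      rw [inner_self_eq_norm_sq_to_K, if_pos rfl]
      have hne : (‖f j‖ : ℂ) ≠ 0 := by
        exact_mod_cast norm_ne_zero_iff.mpr (hnz j)
      push_cast
      field_simp
      rfl
    · rw [horth j k hjk, if_neg hjk]
      simp
  · set S := (Submodule.span ℂ (Set.range fun j => ev (f j))).topologicalClosure with hSdef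
    -- norm-squared sum identity
    have hB : ∀ y : Fk, HasSum (fun m => ‖(inner ℂ (f m) y : ℂ)‖ ^ 2) (‖ev y‖ ^ 2) := by
      intro y
      have h1 := key y y
      have h2 : (inner ℂ y (L y) : ℂ) = ((‖ev y‖ ^ 2 : ℝ) : ℂ) := by
        rw [← inner_conj_symm, hL, inner_self_eq_norm_sq_to_K]
        push_cast
        simp [Complex.conj_ofReal]
      rw [h2] at h1
      have h3 : (fun m => (inner ℂ (f m) y : ℂ) * (inner ℂ y (f m) : ℂ))
          = fun m => (((‖(inner ℂ (f m) y : ℂ)‖ ^ 2 : ℝ)) : ℂ) := by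
        funext m
        rw [← inner_conj_symm y (f m), Complex.mul_conj]
        rw [Complex.normSq_eq_norm_sq]
      rw [h3] at h1
      exact Complex.hasSum_ofReal.mp h1
    have hmem : ∀ x : Fk, ev x ∈ S := by
      intro x
      set c : J → ℂ := fun j => (((‖f j‖ ^ 2 : ℝ)) : ℂ)⁻¹ * inner ℂ (f j) x with hc
      have hA := hB x
      -- inner products of the residuals
      have hdiff : ∀ (F : Finset J) (m : J),
          (inner ℂ (f m) (x - ∑ j ∈ F, c j • f j) : ℂ)
            = if m ∈ F then 0 else (inner ℂ (f m) x : ℂ) := by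
        intro F m
        rw [inner_sub_right, inner_sum]
        simp_rw [inner_smul_right]
        by_cases hm : m ∈ F
        · rw [Finset.sum_eq_single m
            (fun j _ hjm => by rw [horth m j (Ne.symm hjm), mul_zero])
            (fun hmem => absurd hm hmem)]
          rw [if_pos hm]
          simp only [hc, inner_self_eq_norm_sq_to_K]
          have hne : (‖f m‖ : ℂ) ≠ 0 := by
            exact_mod_cast norm_ne_zero_iff.mpr (hnz m)
          push_cast
          field_simp
          simp
        · rw [Finset.sum_eq_zero (fun j hj => by
            rw [horth m j (fun hmj => hm (hmj ▸ hj)), mul_zero]), if_neg hm, sub_zero]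
      -- norm of residuals
      have hnorm : ∀ F : Finset J,
          ‖ev x - ∑ j ∈ F, c j • ev (f j)‖ ^ 2
            = ‖ev x‖ ^ 2 - ∑ m ∈ F, ‖(inner ℂ (f m) x : ℂ)‖ ^ 2 := by
        intro F
        have e1 : ev x - ∑ j ∈ F, c j • ev (f j) = ev (x - ∑ j ∈ F, c j • f j) := by
          rw [map_sub, map_sum]
          simp_rw [map_smul]
        rw [e1]
        have h1 := hB (x - ∑ j ∈ F, c j • f j)
        have hfun : (fun m => ‖(inner ℂ (f m) (x - ∑ j ∈ F, c j • f j) : ℂ)‖ ^ 2)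
            = fun m => if m ∈ F then 0 else ‖(inner ℂ (f m) x : ℂ)‖ ^ 2 := by
          funext m
          rw [hdiff F m]
          split <;> simp
        rw [hfun] at h1
        have h4 : HasSum (fun m => if m ∈ F then ‖(inner ℂ (f m) x : ℂ)‖ ^ 2 else 0)
            (∑ m ∈ F, ‖(inner ℂ (f m) x : ℂ)‖ ^ 2) := by
          have := hasSum_sum_of_ne_finset_zero
            (f := fun m => if m ∈ F then ‖(inner ℂ (f m) x : ℂ)‖ ^ 2 else 0) (s := F) (L := SummationFilter.unconditional J)
            (fun b hb => if_neg hb)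
          simpa [Finset.sum_ite_of_true (fun m hm => hm)] using this
        have h5 := hA.sub h4
        have h6 : (fun m => ‖(inner ℂ (f m) x : ℂ)‖ ^ 2
              - (if m ∈ F then ‖(inner ℂ (f m) x : ℂ)‖ ^ 2 else 0))
            = fun m => if m ∈ F then 0 else ‖(inner ℂ (f m) x : ℂ)‖ ^ 2 := by
          funext m; split <;> simp
        rw [h6] at h5
        exact h1.unique h5
      -- convergence
      have ht : Filter.Tendsto (fun F : Finset J => ∑ j ∈ F, c j • ev (f j))
          Filter.atTop (nhds (ev x)) := by
        have h0 : Filter.Tendsto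
            (fun F : Finset J => ‖ev x - ∑ j ∈ F, c j • ev (f j)‖ ^ 2)
            Filter.atTop (nhds 0) := by
          simp_rw [hnorm]
          have := (tendsto_const_nhds (x := ‖ev x‖ ^ 2)
            (f := Filter.atTop (α := Finset J))).sub hA
          simpa using this
        have h0' : Filter.Tendsto
            (fun F : Finset J => ‖ev x - ∑ j ∈ F, c j • ev (f j)‖)
            Filter.atTop (nhds 0) := by
          have := h0.sqrt
          simpa [Real.sqrt_sq (norm_nonneg _)] using this
        have h0'' : Filter.Tendsto
            (fun F : Finset J => ev x - ∑ j ∈ F, c j • ev (f j))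
            Filter.atTop (nhds 0) := tendsto_zero_iff_norm_tendsto_zero.mpr h0'
        have := h0''.neg
        simp only [neg_sub, neg_zero] at this
        exact tendsto_sub_nhds_zero_iff.mp this
      have hmemS : ∀ F : Finset J, (∑ j ∈ F, c j • ev (f j)) ∈ S := fun F =>
        Submodule.sum_mem _ fun j _ => Submodule.smul_mem _ _
          (Submodule.le_topologicalClosure _ (Submodule.subset_span ⟨j, rfl⟩))
      exact (Submodule.isClosed_topologicalClosure _).mem_of_tendsto ht
        (Filter.Eventually.of_forall hmemS)
    rw [eq_top_iff]
    intro v _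
    have hsub : Set.range ev ⊆ (S : Set H) := by
      rintro _ ⟨x, rfl⟩
      exact hmem x
    exact closure_minimal hsub (Submodule.isClosed_topologicalClosure _) (hdense v)
end

section
/- Let H be a reproducing kernel Hilbert space on a set X with kernel K, and let f : X → ℂ be a function. Then f ∈ H with ‖f‖ ≤ c if and only if the function c²K(x,y) − f(x)·conj(f(y)) is a positive semidefinite kernel on X. Moreover ‖f‖_H is the least such c. -/
open scoped ComplexOrder BigOperators

/-- A two-variable function on a set is a positive semidefinite kernel. -/
def IsPSDKernel {X : Type*} (G : X → X → ℂ) : Prop :=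
  ∀ (m : ℕ) (x : Fin m → X) (a : Fin m → ℂ),
    0 ≤ ∑ s, ∑ t, (starRingEnd ℂ) (a s) * a t * G (x s) (x t)

/-- let `H` be a reproducing kernel Hilbert space on a set `X`, modeled by an
injective linear map `E : H → (X → ℂ)` together with kernel vectors `k x ∈ H` satisfying
the reproducing property `(E g)(x) = ⟨g, K(·,x)⟩`, and kernel `K(x,y) = (E (k y)) x`.
Then a function `f : X → ℂ` belongs to `H` with norm `≤ c` iff
`c²K(x,y) − f(x)·conj(f(y))` is a positive semidefinite kernel on `X`; moreover the RKHS
norm of `f` is the least such `c`. -/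
theorem stmt4 {X : Type*} {H : Type*}
    [NormedAddCommGroup H] [InnerProductSpace ℂ H] [CompleteSpace H]
    (E : H →ₗ[ℂ] (X → ℂ)) (hEinj : Function.Injective E)
    (k : X → H)
    (hrepro : ∀ (g : H) (x : X), E g x = inner ℂ (k x) g)
    (K : X → X → ℂ) (hK : ∀ x y, K x y = E (k y) x)
    (f : X → ℂ) :
    (∀ c : ℝ, 0 ≤ c →
      ((∃ g : H, E g = f ∧ ‖g‖ ≤ c) ↔
        IsPSDKernel (fun x y => (c : ℂ) ^ 2 * K x y - f x * (starRingEnd ℂ) (f y)))) ∧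
    (∀ g : H, E g = f →
      ‖g‖ = sInf {c : ℝ | 0 ≤ c ∧
        IsPSDKernel (fun x y => (c : ℂ) ^ 2 * K x y - f x * (starRingEnd ℂ) (f y))}) := by
  have hKi : ∀ p q, K p q = (inner ℂ (k p) (k q) : ℂ) := fun p q => by rw [hK, hrepro]
  -- the key algebraic identity
  have aux : ∀ (c : ℝ) {ι : Type} [Fintype ι] (x : ι → X) (a : ι → ℂ),
      ∑ s, ∑ t, (starRingEnd ℂ) (a s) * a t *
        ((c : ℂ) ^ 2 * K (x s) (x t) - f (x s) * (starRingEnd ℂ) (f (x t)))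
      = (((c * ‖∑ i, a i • k (x i)‖) ^ 2
          - ‖∑ i, (starRingEnd ℂ) (a i) * f (x i)‖ ^ 2 : ℝ) : ℂ) := by
    intro c ι _ x a
    set v : H := ∑ i, a i • k (x i) with hv
    set B : ℂ := ∑ i, (starRingEnd ℂ) (a i) * f (x i) with hB
    have hvv : (inner ℂ v v : ℂ) = ∑ s, ∑ t, (starRingEnd ℂ) (a s) * a t * K (x s) (x t) := by
      simp only [hv, sum_inner, inner_sum, inner_smul_left, inner_smul_right, hKi,
        Finset.mul_sum, mul_assoc]
      rw [Finset.sum_comm]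
      exact Finset.sum_congr rfl fun s _ => Finset.sum_congr rfl fun t _ => by ring
    have hBB : B * (starRingEnd ℂ) B
        = ∑ s, ∑ t, (starRingEnd ℂ) (a s) * a t * (f (x s) * (starRingEnd ℂ) (f (x t))) := by
      rw [hB, map_sum, Finset.sum_mul_sum]
      refine Finset.sum_congr rfl fun s _ => Finset.sum_congr rfl fun t _ => ?_
      simp only [map_mul, RingHomCompTriple.comp_apply, RingHom.id_apply, starRingEnd_self_apply]
      ring
    have key : ∑ s, ∑ t, (starRingEnd ℂ) (a s) * a t *
        ((c : ℂ) ^ 2 * K (x s) (x t) - f (x s) * (starRingEnd ℂ) (f (x t)))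
        = (c : ℂ) ^ 2 * inner ℂ v v - B * (starRingEnd ℂ) B := by
      rw [hvv, hBB, Finset.mul_sum, ← Finset.sum_sub_distrib]
      refine Finset.sum_congr rfl fun s _ => ?_
      rw [Finset.mul_sum, ← Finset.sum_sub_distrib]
      exact Finset.sum_congr rfl fun t _ => by ring
    rw [key, inner_self_eq_norm_sq_to_K, Complex.mul_conj']
    push_cast
    ring_nf
    rfl
  -- forward direction
  have forward : ∀ (c : ℝ) (g : H), E g = f → ‖g‖ ≤ c →
      IsPSDKernel (fun x y => (c : ℂ) ^ 2 * K x y - f x * (starRingEnd ℂ) (f y)) := by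
    intro c g hg hgc m x a
    rw [aux c x a, Complex.zero_le_real, sub_nonneg]
    set v : H := ∑ i, a i • k (x i) with hv
    have hBv : (∑ i, (starRingEnd ℂ) (a i) * f (x i)) = inner ℂ v g := by
      simp only [hv, sum_inner, inner_smul_left]
      refine Finset.sum_congr rfl fun i _ => ?_
      rw [← hrepro, hg]
    rw [hBv]
    have h1 : ‖(inner ℂ v g : ℂ)‖ ≤ c * ‖v‖ := by
      calc ‖(inner ℂ v g : ℂ)‖ ≤ ‖v‖ * ‖g‖ := norm_inner_le_norm v g
        _ ≤ ‖v‖ * c := mul_le_mul_of_nonneg_left hgc (norm_nonneg v)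
        _ = c * ‖v‖ := mul_comm _ _
    exact pow_le_pow_left₀ (norm_nonneg _) h1 2
  -- backward direction
  have backward : ∀ (c : ℝ), 0 ≤ c →
      IsPSDKernel (fun x y => (c : ℂ) ^ 2 * K x y - f x * (starRingEnd ℂ) (f y)) →
      ∃ g : H, E g = f ∧ ‖g‖ ≤ c := by
    intro c hc hPSD
    set T : (X →₀ ℂ) →ₗ[ℂ] H := Finsupp.linearCombination ℂ k with hT
    set φ : (X →₀ ℂ) →ₗ[ℂ] ℂ :=
      Finsupp.linearCombination ℂ (fun z => (starRingEnd ℂ) (f z)) with hφ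
    have hbound : ∀ l : X →₀ ℂ, ‖φ l‖ ≤ c * ‖T l‖ := by
      intro l
      set e := l.support.equivFin with he
      have h := hPSD l.support.card (fun i => (e.symm i : X)) (fun i => l (e.symm i))
      rw [aux c, Complex.zero_le_real, sub_nonneg] at h
      have hv : (∑ i, l ((e.symm i : X)) • k ((e.symm i : X))) = T l := by
        rw [hT, Finsupp.linearCombination_apply, Finsupp.sum, ← Finset.sum_coe_sort l.support]
        exact Equiv.sum_comp e.symm (fun p : l.support => l p • k p)
      have hφB : (starRingEnd ℂ) (φ l)
          = ∑ i, (starRingEnd ℂ) (l ((e.symm i : X))) * f ((e.symm i : X)) := by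
        calc (starRingEnd ℂ) (φ l)
            = ∑ p ∈ l.support, (starRingEnd ℂ) (l p) * f p := by
              rw [hφ, Finsupp.linearCombination_apply, Finsupp.sum, map_sum]
              exact Finset.sum_congr rfl fun p _ => by simp [smul_eq_mul]
          _ = ∑ i, (starRingEnd ℂ) (l ((e.symm i : X))) * f ((e.symm i : X)) := by
              rw [← Finset.sum_coe_sort l.support (fun p => (starRingEnd ℂ) (l p) * f p)]
              exact (Equiv.sum_comp e.symm
                (fun p : l.support => (starRingEnd ℂ) (l p) * f p)).symm
      have h2 : ‖φ l‖ ^ 2 ≤ (c * ‖T l‖) ^ 2 := by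
        rw [← RCLike.norm_conj (φ l), hφB, ← hv]
        exact h
      exact (pow_le_pow_iff_left₀ (norm_nonneg _) (by positivity) two_ne_zero).mp h2
    have hker : LinearMap.ker T ≤ LinearMap.ker φ := by
      intro l hl
      rw [LinearMap.mem_ker] at hl ⊢
      have := hbound l
      rw [hl, norm_zero, mul_zero] at this
      exact norm_le_zero_iff.mp this
    set ψ₁ : ((X →₀ ℂ) ⧸ LinearMap.ker T) →ₗ[ℂ] ℂ := (LinearMap.ker T).liftQ φ hker with hψ₁
    set ψ₀ : LinearMap.range T →ₗ[ℂ] ℂ :=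
      ψ₁ ∘ₗ (LinearMap.quotKerEquivRange T).symm.toLinearMap with hψ₀def
    have hψ₀ : ∀ (l : X →₀ ℂ) (w : LinearMap.range T), (w : H) = T l → ψ₀ w = φ l := by
      rintro l ⟨w, hw⟩ hwl
      simp only at hwl
      subst hwl
      have h1 : (LinearMap.quotKerEquivRange T) (Submodule.Quotient.mk l)
          = (⟨T l, hw⟩ : LinearMap.range T) :=
        Subtype.ext (LinearMap.quotKerEquivRange_apply_mk T l)
      rw [hψ₀def, LinearMap.comp_apply, LinearEquiv.coe_toLinearMap, ← h1,
        LinearEquiv.symm_apply_apply, hψ₁, Submodule.liftQ_apply]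
    have hψb : ∀ w : LinearMap.range T, ‖ψ₀ w‖ ≤ c * ‖w‖ := by
      rintro ⟨w, hw⟩
      obtain ⟨l, rfl⟩ := hw
      rw [hψ₀ l ⟨T l, LinearMap.mem_range_self T l⟩ rfl]
      simpa using hbound l
    obtain ⟨Ψ, hΨeq, hΨnorm⟩ := exists_extension_norm_eq (LinearMap.range T)
      (ψ₀.mkContinuous c hψb)
    have hΨle : ‖Ψ‖ ≤ c := hΨnorm ▸ ψ₀.mkContinuous_norm_le hc hψb
    set g : H := (InnerProductSpace.toDual ℂ H).symm Ψ with hgdef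
    refine ⟨g, funext fun z => ?_, ?_⟩
    · have hkz : k z ∈ LinearMap.range T :=
        ⟨Finsupp.single z 1, by rw [hT, Finsupp.linearCombination_single, one_smul]⟩
      have h1 : Ψ (k z) = (starRingEnd ℂ) (f z) := by
        have h2 := hΨeq ⟨k z, hkz⟩
        have h3 : ((⟨k z, hkz⟩ : LinearMap.range T) : H) = k z := rfl
        rw [h3] at h2
        rw [h2, LinearMap.mkContinuous_apply]
        rw [hψ₀ (Finsupp.single z 1) ⟨k z, hkz⟩
          (by simp [hT, Finsupp.linearCombination_single])]
        rw [hφ, Finsupp.linearCombination_single, smul_eq_mul, one_mul]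
      have h5 : (inner ℂ g (k z) : ℂ) = Ψ (k z) := by
        rw [hgdef]; exact InnerProductSpace.toDual_symm_apply
      rw [hrepro, ← inner_conj_symm, h5, h1]
      simp
    · calc ‖g‖ = ‖Ψ‖ := by
            rw [hgdef]
            exact LinearIsometryEquiv.norm_map (InnerProductSpace.toDual ℂ H).symm Ψ
        _ ≤ c := hΨle
  -- assemble
  constructor
  · intro c hc
    constructor
    · rintro ⟨g, hg, hgc⟩
      exact forward c g hg hgc
    · intro hPSD
      exact backward c hc hPSD
  · intro g hg
    have hmem : ‖g‖ ∈ {c : ℝ | 0 ≤ c ∧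
        IsPSDKernel (fun x y => (c : ℂ) ^ 2 * K x y - f x * (starRingEnd ℂ) (f y))} :=
      ⟨norm_nonneg g, forward ‖g‖ g hg le_rfl⟩
    refine le_antisymm (le_csInf ⟨‖g‖, hmem⟩ ?_) (csInf_le ⟨0, fun b hb => hb.1⟩ hmem)
    rintro b ⟨hb0, hbPSD⟩
    obtain ⟨g', hg', hg'b⟩ := backward b hb0 hbPSD
    have : g' = g := hEinj (hg'.trans hg.symm)
    rwa [this] at hg'b
end

section
/- Let (T,h) be a cyclic commuting n-tuple on a Hilbert space H and define F(z,w) = ⟨e^{⟨T,w⟩}h, e^{⟨T,z⟩}h⟩_H where ⟨T,w⟩ = Σ_i \bar{w}_i T_i. Then for each i = 1,…,n the differentiation operator ∂_i : f ↦ ∂f/∂z_i maps the reproducing kernel Hilbert space H(F) into itself and is bounded with ‖∂_i‖ ≤ ‖T_i‖. -/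
open scoped BigOperators

/-- The kernel `F_{T,h}(z,w) = ⟨e^{⟨T,w⟩}h, e^{⟨T,z⟩}h⟩_H`, where
`⟨T,w⟩ = Σ_i conj(w_i)·T_i` (Mathlib's `inner` is conjugate-linear in the first slot). -/
noncomputable def kerF {H : Type*} [NormedAddCommGroup H] [InnerProductSpace ℂ H]
    {n : ℕ} (T : Fin n → H →L[ℂ] H) (h : H) (z w : Fin n → ℂ) : ℂ :=
  inner ℂ (NormedSpace.exp (∑ i, (starRingEnd ℂ) (z i) • T i) h)
        (NormedSpace.exp (∑ i, (starRingEnd ℂ) (w i) • T i) h)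

section Aux

variable {H : Type*} [NormedAddCommGroup H] [InnerProductSpace ℂ H] [CompleteSpace H]
variable {n : ℕ}

/-- Adjoint identity: `⟪exp(∑ conj z_j • T_j) h, x⟫ = ⟪h, exp(∑ z_j • T_j†) x⟫`. -/
lemma aux_exp_adjoint (T : Fin n → H →L[ℂ] H) (h : H) (z : Fin n → ℂ) (x : H) :
    (inner ℂ (NormedSpace.exp (∑ j, (starRingEnd ℂ) (z j) • T j) h) x : ℂ)
      = inner ℂ h (NormedSpace.exp (∑ j, z j • ContinuousLinearMap.adjoint (T j)) x) := by
  have hstar :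
      ContinuousLinearMap.adjoint (NormedSpace.exp (∑ j, (starRingEnd ℂ) (z j) • T j))
        = NormedSpace.exp (∑ j, z j • ContinuousLinearMap.adjoint (T j)) := by
    rw [← ContinuousLinearMap.star_eq_adjoint, NormedSpace.star_exp]
    congr 1
    rw [star_sum]
    refine Finset.sum_congr rfl fun j _ => ?_
    rw [star_smul, ContinuousLinearMap.star_eq_adjoint, starRingEnd_apply, star_star]
  rw [← hstar, ContinuousLinearMap.adjoint_inner_right]

/-- Differentiability of `z ↦ ⟪h, exp(∑ z_j • S_j) y⟫`. -/
lemma aux_diff (S : Fin n → H →L[ℂ] H) (h y : H) :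
    Differentiable ℂ (fun z : Fin n → ℂ =>
      (inner ℂ h (NormedSpace.exp (∑ j, z j • S j) y) : ℂ)) := by
  set L : (Fin n → ℂ) →L[ℂ] (H →L[ℂ] H) :=
    ∑ j, (ContinuousLinearMap.proj j).smulRight (S j) with hLdef
  have hL : ∀ z : Fin n → ℂ, L z = ∑ j, z j • S j := by
    intro z
    simp [hLdef, ContinuousLinearMap.sum_apply]
  have h1 : Differentiable ℂ (fun z : Fin n → ℂ => NormedSpace.exp (L z)) := fun z =>
    ((NormedSpace.exp_analytic (L z)).differentiableAt).comp z L.differentiable.differentiableAt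
  have h2 : Differentiable ℂ (fun z : Fin n → ℂ => (NormedSpace.exp (L z)) y) :=
    h1.clm_apply (differentiable_const y)
  have h3 : Differentiable ℂ
      (fun z : Fin n → ℂ => (innerSL ℂ h) ((NormedSpace.exp (L z)) y)) :=
    (innerSL ℂ h).differentiable.comp h2
  have : (fun z : Fin n → ℂ => (inner ℂ h (NormedSpace.exp (∑ j, z j • S j) y) : ℂ))
      = fun z : Fin n → ℂ => (innerSL ℂ h) ((NormedSpace.exp (L z)) y) := by
    funext z; rw [hL]; rfl
  rw [this]; exact h3

/-- Directional derivative of `z ↦ ⟪h, exp(∑ z_j • S_j) y⟫` for commuting `S`. -/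
lemma aux_deriv (S : Fin n → H →L[ℂ] H) (hS : ∀ p q, Commute (S p) (S q))
    (h y : H) (i : Fin n) (z : Fin n → ℂ) :
    fderiv ℂ (fun z : Fin n → ℂ =>
        (inner ℂ h (NormedSpace.exp (∑ j, z j • S j) y) : ℂ)) z (Pi.single i 1)
      = inner ℂ h (NormedSpace.exp (∑ j, z j • S j) (S i y)) := by
  set v : Fin n → ℂ := Pi.single i 1 with hv
  set Φ : (Fin n → ℂ) → ℂ := fun z =>
    (inner ℂ h (NormedSpace.exp (∑ j, z j • S j) y) : ℂ) with hΦ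
  set A : H →L[ℂ] H := ∑ j, z j • S j with hA
  have hcommA : ∀ t : ℂ, Commute A (t • S i) := by
    intro t
    refine (Commute.sum_left _ _ _ fun j _ => ?_).smul_right t
    exact (hS j i).smul_left (z j)
  have hline : ∀ t : ℂ, Φ (z + t • v)
      = inner ℂ h ((NormedSpace.exp A) ((NormedSpace.exp (t • S i)) y)) := by
    intro t
    have hsum : (∑ j, (z + t • v) j • S j) = A + t • S i := by
      have hterm : ∀ j, (z + t • v) j • S j
          = z j • S j + (t * v j) • S j := by
        intro j
        simp [add_smul]
      rw [Finset.sum_congr rfl fun j _ => hterm j, Finset.sum_add_distrib, hA]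
      congr 1
      have hite : ∀ j : Fin n, (t * v j) • S j
          = if j = i then t • S i else 0 := by
        intro j
        rcases eq_or_ne j i with rfl | hne
        · simp [hv]
        · simp [hv, Pi.single_eq_of_ne hne, hne]
      rw [Finset.sum_congr rfl fun j _ => hite j, Finset.sum_ite_eq' Finset.univ i]
      simp
    show (inner ℂ h (NormedSpace.exp (∑ j, (z + t • v) j • S j) y) : ℂ) = _
    rw [hsum, NormedSpace.exp_add_of_commute_of_mem_ball (𝕂 := ℂ) (hcommA t)
      ((NormedSpace.expSeries_radius_eq_top ℂ (H →L[ℂ] H)).symm ▸ edist_lt_top _ _)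
      ((NormedSpace.expSeries_radius_eq_top ℂ (H →L[ℂ] H)).symm ▸ edist_lt_top _ _),
      ContinuousLinearMap.mul_apply]
  have hdiff : HasFDerivAt Φ (fderiv ℂ Φ z) z := (aux_diff S h y z).hasFDerivAt
  have hγ : HasDerivAt (fun t : ℂ => z + t • v) v (0 : ℂ) := by
    simpa using ((hasDerivAt_id (0 : ℂ)).smul_const v).const_add z
  have d1 : HasDerivAt (fun t : ℂ => Φ (z + t • v)) (fderiv ℂ Φ z v) 0 :=
    hdiff.comp_hasDerivAt_of_eq 0 hγ (by simp)
  have hdexp : HasDerivAt (fun t : ℂ => NormedSpace.exp (t • S i)) (S i) 0 := by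
    simpa using hasDerivAt_exp_smul_const (𝕂 := ℂ) (S i) (0 : ℂ)
  set C : (H →L[ℂ] H) →L[ℂ] ℂ :=
    ((innerSL ℂ h).comp (NormedSpace.exp A)).comp (ContinuousLinearMap.apply ℂ H y) with hC
  have d2' : HasDerivAt (fun t : ℂ => C (NormedSpace.exp (t • S i))) (C (S i)) 0 :=
    C.hasFDerivAt.comp_hasDerivAt 0 hdexp
  have hfun : (fun t : ℂ => Φ (z + t • v))
      = fun t : ℂ => C (NormedSpace.exp (t • S i)) := by
    funext t; rw [hline t]; rfl
  have d2 : HasDerivAt (fun t : ℂ => Φ (z + t • v)) (C (S i)) 0 := by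
    rw [hfun]; exact d2'
  have huniq := d1.unique d2
  show fderiv ℂ Φ z v = _
  rw [huniq]
  rfl

end Aux

/-- let `(T,h)` be a cyclic commuting tuple on a Hilbert space `H`, and let
`H(F)` be the RKHS of the kernel `F(z,w) = ⟨e^{⟨T,w⟩}h, e^{⟨T,z⟩}h⟩`, modeled by an
injective linear map `E : HF → ((Fin n → ℂ) → ℂ)` with kernel vectors `k w` satisfying
the reproducing property and whose span is dense.  Then each member of `H(F)` is entire,
and for each `i` the partial derivative `∂_i` maps `H(F)` into itself with
`‖∂_i f‖ ≤ ‖T_i‖·‖f‖`. -/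
theorem stmt6 {H : Type*} [NormedAddCommGroup H] [InnerProductSpace ℂ H] [CompleteSpace H]
    {n : ℕ} (T : Fin n → H →L[ℂ] H) (hcomm : ∀ i j, T i ∘L T j = T j ∘L T i) (h : H)
    (hcyc : (Submodule.span ℂ
      (Set.range fun α : Fin n → ℕ => opPow T α h)).topologicalClosure = ⊤)
    {HF : Type*} [NormedAddCommGroup HF] [InnerProductSpace ℂ HF] [CompleteSpace HF]
    (E : HF →ₗ[ℂ] ((Fin n → ℂ) → ℂ)) (hEinj : Function.Injective E)
    (k : (Fin n → ℂ) → HF)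
    (hrepro : ∀ (f : HF) (w : Fin n → ℂ), E f w = inner ℂ (k w) f)
    (hker : ∀ z w : Fin n → ℂ, E (k w) z = kerF T h z w)
    (hspan : (Submodule.span ℂ (Set.range k)).topologicalClosure = ⊤)
    (i : Fin n) :
    ∀ f : HF, Differentiable ℂ (E f) ∧
      ∃ g : HF, (∀ z, E g z = fderiv ℂ (E f) z (Pi.single i 1)) ∧
        ‖g‖ ≤ ‖T i‖ * ‖f‖ := by
  classical
  set S : Fin n → H →L[ℂ] H := fun j => ContinuousLinearMap.adjoint (T j) with hSdef
  set ez : (Fin n → ℂ) → H :=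
    fun z => NormedSpace.exp (∑ j, (starRingEnd ℂ) (z j) • T j) h with hez
  -- commuting adjoints
  have commT : ∀ p q, Commute (T p) (T q) := by
    intro p q
    show T p * T q = T q * T p
    rw [ContinuousLinearMap.mul_def, ContinuousLinearMap.mul_def]
    exact hcomm p q
  have commS : ∀ p q, Commute (S p) (S q) := by
    intro p q
    have := (commT p q).star_star
    rwa [ContinuousLinearMap.star_eq_adjoint, ContinuousLinearMap.star_eq_adjoint] at this
  -- pointwise kernel identity
  have pt : ∀ w₁ w₂ : Fin n → ℂ, (inner ℂ (ez w₁) (ez w₂) : ℂ) = inner ℂ (k w₁) (k w₂) := by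
    intro w₁ w₂
    rw [← hrepro (k w₂) w₁, hker w₁ w₂]
    rfl
  -- the two linear combinations
  set κ : ((Fin n → ℂ) →₀ ℂ) →ₗ[ℂ] HF := Finsupp.linearCombination ℂ k with hκ
  set ψ : ((Fin n → ℂ) →₀ ℂ) →ₗ[ℂ] H := Finsupp.linearCombination ℂ ez with hψ
  have gram : ∀ a b : (Fin n → ℂ) →₀ ℂ, (inner ℂ (ψ a) (ψ b) : ℂ) = inner ℂ (κ a) (κ b) := by
    intro a b
    rw [hκ, hψ, Finsupp.linearCombination_apply, Finsupp.linearCombination_apply,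
      Finsupp.linearCombination_apply, Finsupp.linearCombination_apply,
      Finsupp.sum, Finsupp.sum, Finsupp.sum, Finsupp.sum, sum_inner, sum_inner]
    refine Finset.sum_congr rfl fun w₁ _ => ?_
    rw [inner_sum, inner_sum]
    refine Finset.sum_congr rfl fun w₂ _ => ?_
    rw [inner_smul_left, inner_smul_left, inner_smul_right, inner_smul_right, pt]
  have nrm : ∀ a : (Fin n → ℂ) →₀ ℂ, ‖ψ a‖ = ‖κ a‖ := by
    intro a
    rw [@norm_eq_sqrt_re_inner ℂ, @norm_eq_sqrt_re_inner ℂ, gram a a]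
  -- the factored isometry on the span
  have hle : LinearMap.ker κ ≤ LinearMap.ker ψ := by
    intro a ha
    rw [LinearMap.mem_ker] at ha ⊢
    have := nrm a
    rw [ha, norm_zero, norm_eq_zero] at this
    exact this
  set φ₀ : LinearMap.range κ →ₗ[ℂ] H :=
    ((LinearMap.ker κ).liftQ ψ hle).comp κ.quotKerEquivRange.symm.toLinearMap with hφ₀
  have φspec : ∀ (a : (Fin n → ℂ) →₀ ℂ) (hmem : κ a ∈ LinearMap.range κ),
      φ₀ ⟨κ a, hmem⟩ = ψ a := by
    intro a hmem
    show ((LinearMap.ker κ).liftQ ψ hle) (κ.quotKerEquivRange.symm ⟨κ a, hmem⟩) = ψ a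
    rw [LinearMap.quotKerEquivRange_symm_apply_image, Submodule.mkQ_apply,
      Submodule.liftQ_apply]
  have φnorm : ∀ y : LinearMap.range κ, ‖φ₀ y‖ = ‖y‖ := by
    rintro ⟨y, a, rfl⟩
    rw [φspec a ⟨a, rfl⟩]
    rw [nrm a]
    rfl
  set φL : LinearMap.range κ →L[ℂ] H :=
    φ₀.mkContinuous 1 (fun y => by rw [φnorm, one_mul]) with hφL
  have hdense : Dense ((LinearMap.range κ : Submodule ℂ HF) : Set HF) := by
    rw [hκ, Finsupp.range_linearCombination]
    exact Submodule.dense_iff_topologicalClosure_eq_top.mpr hspan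
  set U : HF →L[ℂ] H := φL.extend (Submodule.subtypeL _) with hU
  have hUy : ∀ y : LinearMap.range κ, U y = φ₀ y := by
    intro y
    exact ContinuousLinearMap.extend_eq _ hdense.denseRange_val
      isUniformEmbedding_subtype_val.isUniformInducing y
  have hUκ : ∀ a : (Fin n → ℂ) →₀ ℂ, U (κ a) = ψ a := by
    intro a
    have := hUy ⟨κ a, LinearMap.mem_range_self κ a⟩
    rw [φspec] at this
    exact this
  have hUk : ∀ w : Fin n → ℂ, U (k w) = ez w := by
    intro w
    have h1 : κ (Finsupp.single w 1) = k w := by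
      rw [hκ, Finsupp.linearCombination_single, one_smul]
    have h2 : ψ (Finsupp.single w 1) = ez w := by
      rw [hψ, Finsupp.linearCombination_single, one_smul]
    rw [← h1, hUκ, h2]
  have hUnorm : ∀ x : HF, ‖U x‖ = ‖x‖ := by
    have heq : Set.EqOn (fun x : HF => ‖U x‖) (fun x : HF => ‖x‖)
        ((LinearMap.range κ : Submodule ℂ HF) : Set HF) := by
      intro x hx
      have := hUy ⟨x, hx⟩
      show ‖U x‖ = ‖x‖
      rw [this, φnorm]
      rfl
    have := Continuous.ext_on hdense (U.continuous.norm) continuous_norm heq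
    exact fun x => congrFun this x
  have hinner : ∀ x y : HF, (inner ℂ (U x) (U y) : ℂ) = inner ℂ x y := by
    intro x y
    exact (⟨(U : HF →ₗ[ℂ] H), hUnorm⟩ : HF →ₗᵢ[ℂ] H).inner_map_map x y
  have hUle : ‖U‖ ≤ 1 := U.opNorm_le_bound zero_le_one fun x => by rw [hUnorm, one_mul]
  -- key formula
  have keyE : ∀ (f : HF) (z : Fin n → ℂ),
      E f z = inner ℂ h (NormedSpace.exp (∑ j, z j • S j) (U f)) := by
    intro f z
    rw [hrepro f z, ← hinner (k z) f, hUk z, hez]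
    exact aux_exp_adjoint T h z (U f)
  intro f
  have hEf : E f = fun z => (inner ℂ h (NormedSpace.exp (∑ j, z j • S j) (U f)) : ℂ) :=
    funext (keyE f)
  refine ⟨by rw [hEf]; exact aux_diff S h (U f), ?_⟩
  refine ⟨ContinuousLinearMap.adjoint U (S i (U f)), ?_, ?_⟩
  · intro z
    rw [hEf, aux_deriv S commS h (U f) i z, hrepro, ContinuousLinearMap.adjoint_inner_right,
      hUk z, hez]
    exact aux_exp_adjoint T h z (S i (U f))
  · have hnS : ‖S i‖ = ‖T i‖ := ContinuousLinearMap.adjoint.norm_map (T i)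
    have h1 : ‖S i (U f)‖ ≤ ‖T i‖ * ‖f‖ := by
      calc ‖S i (U f)‖ ≤ ‖S i‖ * ‖U f‖ := (S i).le_opNorm (U f)
        _ = ‖T i‖ * ‖f‖ := by rw [hnS, hUnorm f]
    have h2 : ‖ContinuousLinearMap.adjoint U (S i (U f))‖
        ≤ ‖ContinuousLinearMap.adjoint U‖ * ‖S i (U f)‖ :=
      (ContinuousLinearMap.adjoint U).le_opNorm _
    have h3 : ‖ContinuousLinearMap.adjoint U‖ = ‖U‖ :=
      ContinuousLinearMap.adjoint.norm_map U
    rw [h3] at h2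
    calc ‖ContinuousLinearMap.adjoint U (S i (U f))‖
        ≤ ‖U‖ * ‖S i (U f)‖ := h2
      _ ≤ 1 * (‖T i‖ * ‖f‖) := mul_le_mul hUle h1 (norm_nonneg _) zero_le_one
      _ = ‖T i‖ * ‖f‖ := one_mul _
end

section
/- Let (T,h) be a cyclic commuting n-tuple on a Hilbert space H, and F(z,w) = ⟨e^{⟨T,w⟩}h, e^{⟨T,z⟩}h⟩_H. Then there is a unitary operator U : H → H(F) such that T_i* = U* ∂_i U for i = 1,…,n, where ∂_i is the (bounded) differentiation operator on H(F). -/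
open scoped BigOperators

namespace Stmt7Aux

open ContinuousLinearMap

variable {H : Type*} [NormedAddCommGroup H] [NormedSpace ℂ H] [CompleteSpace H]
variable {n : ℕ}

/-- `A z = exp (∑ conj(z i) • T i)`. -/
noncomputable def Aop (T : Fin n → H →L[ℂ] H) (z : Fin n → ℂ) : H →L[ℂ] H :=
  NormedSpace.exp (∑ i, (starRingEnd ℂ) (z i) • T i)

variable {T : Fin n → H →L[ℂ] H}

lemma commT (hcomm : ∀ i j, T i ∘L T j = T j ∘L T i) (i j : Fin n) : Commute (T i) (T j) :=
  hcomm i j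

lemma commute_sum_smul (hcomm : ∀ i j, T i ∘L T j = T j ∘L T i)
    (c : Fin n → ℂ) (j : Fin n) (s : ℂ) :
    Commute (∑ i, c i • T i) (s • T j) :=
  Commute.sum_left _ _ _ fun i _ => ((commT hcomm i j).smul_left _).smul_right _

lemma sum_single_smul (c : Fin n → ℂ) (i : Fin n) (s : ℂ) (X : Fin n → H →L[ℂ] H) :
    (∑ j, (c j + s * Pi.single (M := fun _ => ℂ) i 1 j) • X j)
      = (∑ j, c j • X j) + s • X i := by
  have h1 : ∀ j : Fin n, (s * Pi.single (M := fun _ => ℂ) i 1 j) • X j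
      = if j = i then s • X i else 0 := by
    intro j
    rcases eq_or_ne j i with rfl | hne
    · simp
    · simp [Pi.single_eq_of_ne hne, hne]
  calc (∑ j, (c j + s * Pi.single (M := fun _ => ℂ) i 1 j) • X j)
      = ∑ j, (c j • X j + if j = i then s • X i else 0) := by
        refine Finset.sum_congr rfl fun j _ => ?_
        rw [add_smul, h1 j]
    _ = (∑ j, c j • X j) + s • X i := by
        rw [Finset.sum_add_distrib, Finset.sum_ite_eq' Finset.univ i fun _ => s • X i]
        simp

lemma Aop_add_single (hcomm : ∀ i j, T i ∘L T j = T j ∘L T i)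
    (w : Fin n → ℂ) (i : Fin n) (s : ℂ) :
    Aop T (w + (starRingEnd ℂ) s • (Pi.single i 1 : Fin n → ℂ))
      = Aop T w * NormedSpace.exp (s • T i) := by
  have hsum : (∑ j, (starRingEnd ℂ) ((w + (starRingEnd ℂ) s • (Pi.single i 1 : Fin n → ℂ)) j) • T j)
      = (∑ j, (starRingEnd ℂ) (w j) • T j) + s • T i := by
    have := sum_single_smul (fun j => (starRingEnd ℂ) (w j)) i s T
    rw [← this]
    refine Finset.sum_congr rfl fun j _ => ?_
    congr 1
    simp [Pi.single_apply, apply_ite (starRingEnd ℂ)]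
  rw [Aop, hsum, NormedSpace.exp_add_of_commute_of_mem_ball (𝕂 := ℂ) (commute_sum_smul hcomm _ i s)
    (by rw [NormedSpace.expSeries_radius_eq_top]; exact edist_lt_top _ _) (by rw [NormedSpace.expSeries_radius_eq_top]; exact edist_lt_top _ _)]
  rfl

lemma commute_Ti_Aop (hcomm : ∀ i j, T i ∘L T j = T j ∘L T i) (w : Fin n → ℂ) (i : Fin n) :
    Commute (Aop T w) (T i) := by
  refine Commute.exp_left ?_
  exact Commute.sum_left _ _ _ fun j _ => ((commT hcomm j i).smul_left _)

/-- Density of the span of `A w h` given cyclicity. -/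
lemma denseA (hcomm : ∀ i j, T i ∘L T j = T j ∘L T i) (h : H)
    (hcyc : (Submodule.span ℂ
      (Set.range fun α : Fin n → ℕ => opPow T α h)).topologicalClosure = ⊤) :
    (Submodule.span ℂ (Set.range fun w => Aop T w h)).topologicalClosure = ⊤ := by
  set J := Submodule.span ℂ (Set.range fun w => Aop T w h) with hJ
  set Jc := J.topologicalClosure with hJcdef
  have hmemJ : ∀ w, Aop T w h ∈ J := fun w => Submodule.subset_span ⟨w, rfl⟩
  have hh : h ∈ Jc := by
    have h0 : Aop T 0 h = h := by
      simp [Aop, NormedSpace.exp_zero]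
    exact J.le_topologicalClosure (h0 ▸ hmemJ 0)
  have hstep : ∀ (i : Fin n), ∀ x ∈ Jc, T i x ∈ Jc := by
    intro i
    have key : ∀ w : Fin n → ℂ, T i (Aop T w h) ∈ Jc := by
      intro w
      set γ : ℂ → H := fun s => Aop T w (NormedSpace.exp (s • T i) h) with hγ
      have hγmem : ∀ s, γ s ∈ Jc := by
        intro s
        have heq : Aop T (w + (starRingEnd ℂ) s • (Pi.single i 1 : Fin n → ℂ)) h = γ s := by
          rw [Aop_add_single hcomm, ContinuousLinearMap.mul_apply]
        exact J.le_topologicalClosure (heq ▸ hmemJ _)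
      have hder : HasDerivAt γ (T i (Aop T w h)) 0 := by
        have h1 : HasDerivAt (fun s : ℂ => NormedSpace.exp (s • T i)) (T i) 0 := by
          simpa using hasDerivAt_exp_smul_const (𝕂 := ℂ) (T i) 0
        have h2 : HasDerivAt (fun s : ℂ => NormedSpace.exp (s • T i) h) (T i h) 0 := by
          simpa using h1.clm_apply (hasDerivAt_const (0:ℂ) h)
        have h3 : HasDerivAt γ (Aop T w (T i h)) 0 :=
          (Aop T w).hasFDerivAt.comp_hasDerivAt 0 h2
        have hAc : T i (Aop T w h) = Aop T w (T i h) := by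
          have hc := (commute_Ti_Aop hcomm w i).eq
          calc T i (Aop T w h) = (T i * Aop T w) h := rfl
            _ = (Aop T w * T i) h := by rw [hc]
            _ = Aop T w (T i h) := rfl
        rw [hAc]
        exact h3
      have htend := hasDerivAt_iff_tendsto_slope.1 hder
      refine (J.isClosed_topologicalClosure).mem_of_tendsto htend ?_
      refine Filter.Eventually.of_forall fun s => ?_
      have : slope γ 0 s = (s - 0)⁻¹ • (γ s - γ 0) := rfl
      rw [this]
      exact Jc.smul_mem _ (Jc.sub_mem (hγmem s) (hγmem 0))
    have h1 : J ≤ Jc.comap (T i : H →ₗ[ℂ] H) := by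
      rw [hJ, Submodule.span_le]
      rintro x ⟨w, rfl⟩
      exact key w
    have h2 : Jc ≤ Jc.comap (T i : H →ₗ[ℂ] H) := by
      refine Submodule.topologicalClosure_minimal _ h1 ?_
      have : ((Jc.comap (T i : H →ₗ[ℂ] H) : Submodule ℂ H) : Set H)
          = (T i) ⁻¹' (Jc : Set H) := rfl
      rw [this]
      exact (J.isClosed_topologicalClosure).preimage (T i).continuous
    exact fun x hx => h2 hx
  have hTpow : ∀ (i : Fin n) (m : ℕ), ∀ x ∈ Jc, (T i ^ m) x ∈ Jc := by
    intro i m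
    induction m with
    | zero => intro x hx; simpa using hx
    | succ m ih =>
        intro x hx
        rw [pow_succ, ContinuousLinearMap.mul_apply]
        exact ih _ (hstep i x hx)
  have hlist : ∀ l : List (H →L[ℂ] H),
      (∀ f ∈ l, ∀ x ∈ Jc, f x ∈ Jc) → ∀ x ∈ Jc, l.prod x ∈ Jc := by
    intro l
    induction l with
    | nil => intro _ x hx; simpa using hx
    | cons a l ih =>
        intro hf x hx
        rw [List.prod_cons, ContinuousLinearMap.mul_apply]
        exact hf a (List.mem_cons_self) _
          (ih (fun f hf' => hf f (List.mem_cons_of_mem a hf')) x hx)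
  have hop : ∀ α : Fin n → ℕ, opPow T α h ∈ Jc := by
    intro α
    refine hlist _ ?_ h hh
    intro f hf
    rw [List.mem_ofFn] at hf
    obtain ⟨i, rfl⟩ := hf
    exact hTpow i (α i)
  have hle : Submodule.span ℂ (Set.range fun α : Fin n → ℕ => opPow T α h) ≤ Jc := by
    rw [Submodule.span_le]
    rintro x ⟨α, rfl⟩
    exact hop α
  have := Submodule.topologicalClosure_minimal _ hle (J.isClosed_topologicalClosure)
  rw [hcyc] at this
  exact le_antisymm le_top this

end Stmt7Aux

section Adj

variable {H : Type*} [NormedAddCommGroup H] [InnerProductSpace ℂ H] [CompleteSpace H]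
variable {n : ℕ} {T : Fin n → H →L[ℂ] H}

open Stmt7Aux ContinuousLinearMap

lemma star_Aop (z : Fin n → ℂ) :
    ContinuousLinearMap.adjoint (Aop T z)
      = NormedSpace.exp (∑ j, z j • ContinuousLinearMap.adjoint (T j)) := by
  rw [← ContinuousLinearMap.star_eq_adjoint, Aop, NormedSpace.star_exp]
  congr 1
  rw [star_sum]
  refine Finset.sum_congr rfl fun j _ => ?_
  rw [star_smul, ContinuousLinearMap.star_eq_adjoint]
  simp [Complex.star_def]

end Adj

open Stmt7Aux in
/-- for a cyclic commuting tuple `(T,h)` on a Hilbert space `H`, with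
`H(F)` the RKHS of `F(z,w) = ⟨e^{⟨T,w⟩}h, e^{⟨T,z⟩}h⟩` (modeled as in Statement 6),
there are bounded differentiation operators `D i = ∂_i` on `H(F)` and a unitary
`U : H → H(F)` with `T_i* = U* ∘ ∂_i ∘ U` for all `i`. -/
theorem stmt7 {H : Type*} [NormedAddCommGroup H] [InnerProductSpace ℂ H] [CompleteSpace H]
    {n : ℕ} (T : Fin n → H →L[ℂ] H) (hcomm : ∀ i j, T i ∘L T j = T j ∘L T i) (h : H)
    (hcyc : (Submodule.span ℂ
      (Set.range fun α : Fin n → ℕ => opPow T α h)).topologicalClosure = ⊤)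
    {HF : Type*} [NormedAddCommGroup HF] [InnerProductSpace ℂ HF] [CompleteSpace HF]
    (E : HF →ₗ[ℂ] ((Fin n → ℂ) → ℂ)) (hEinj : Function.Injective E)
    (k : (Fin n → ℂ) → HF)
    (hrepro : ∀ (f : HF) (w : Fin n → ℂ), E f w = inner ℂ (k w) f)
    (hker : ∀ z w : Fin n → ℂ, E (k w) z = kerF T h z w)
    (hspan : (Submodule.span ℂ (Set.range k)).topologicalClosure = ⊤) :
    ∃ D : Fin n → (HF →L[ℂ] HF),
      (∀ (i : Fin n) (f : HF) (z : Fin n → ℂ),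
        E (D i f) z = fderiv ℂ (E f) z (Pi.single i 1)) ∧
      ∃ U : H ≃ₗᵢ[ℂ] HF, ∀ (i : Fin n) (v : H),
        ContinuousLinearMap.adjoint (T i) v = U.symm (D i (U v)) := by
  classical
  -- inner ℂ products of generators agree
  have innerkk : ∀ z w : Fin n → ℂ,
      (inner ℂ (k z) (k w) : ℂ) = inner ℂ (Aop T z h) (Aop T w h) := by
    intro z w
    rw [← hrepro, hker]
    rfl
  -- the two linear combination maps
  set L : ((Fin n → ℂ) →₀ ℂ) →ₗ[ℂ] H :=
    Finsupp.linearCombination ℂ (fun w => Aop T w h) with hLdef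
  set M : ((Fin n → ℂ) →₀ ℂ) →ₗ[ℂ] HF := Finsupp.linearCombination ℂ k with hMdef
  have inner_LM : ∀ c d : (Fin n → ℂ) →₀ ℂ,
      (inner ℂ (L c) (L d) : ℂ) = inner ℂ (M c) (M d) := by
    intro c d
    rw [hLdef, hMdef]
    rw [Finsupp.linearCombination_apply, Finsupp.linearCombination_apply,
      Finsupp.linearCombination_apply, Finsupp.linearCombination_apply]
    rw [Finsupp.sum, Finsupp.sum, Finsupp.sum, Finsupp.sum]
    rw [sum_inner, sum_inner]
    refine Finset.sum_congr rfl fun w _ => ?_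
    rw [inner_sum, inner_sum]
    refine Finset.sum_congr rfl fun w' _ => ?_
    rw [inner_smul_left, inner_smul_left, inner_smul_right, inner_smul_right, innerkk]
  have norm_LM : ∀ c : (Fin n → ℂ) →₀ ℂ, ‖M c‖ = ‖L c‖ := by
    intro c
    have h1 := inner_LM c c
    rw [inner_self_eq_norm_sq_to_K, inner_self_eq_norm_sq_to_K] at h1
    have h2 : (‖L c‖ : ℝ) ^ 2 = ‖M c‖ ^ 2 := by
      exact_mod_cast h1
    rw [← Real.sqrt_sq (norm_nonneg (M c)), ← Real.sqrt_sq (norm_nonneg (L c)), h2]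
  have hkerle : LinearMap.ker L ≤ LinearMap.ker M := by
    intro c hc
    rw [LinearMap.mem_ker] at hc ⊢
    rw [← norm_eq_zero, norm_LM, hc, norm_zero]
  -- the isometry on the range of L
  set φ : (LinearMap.range L) →ₗ[ℂ] HF :=
    (Submodule.liftQ (LinearMap.ker L) M hkerle).comp
      ((LinearMap.quotKerEquivRange L).symm : _ →ₗ[ℂ] _) with hφdef
  have hφ : ∀ (c : (Fin n → ℂ) →₀ ℂ) (hc : L c ∈ LinearMap.range L), φ ⟨L c, hc⟩ = M c := by
    intro c hc
    rw [hφdef]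
    have h1 : (LinearMap.quotKerEquivRange L).symm ⟨L c, hc⟩
        = Submodule.Quotient.mk c := LinearMap.quotKerEquivRange_symm_apply_image L c hc
    simp only [LinearMap.coe_comp, LinearEquiv.coe_coe, Function.comp_apply, h1]
    exact Submodule.liftQ_apply _ M c
  have hφnorm : ∀ x : LinearMap.range L, ‖φ x‖ = ‖x‖ := by
    rintro ⟨x, hx⟩
    obtain ⟨c, rfl⟩ := hx
    rw [hφ c ⟨c, rfl⟩]
    have : ‖(⟨L c, ⟨c, rfl⟩⟩ : LinearMap.range L)‖ = ‖L c‖ := rfl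
    rw [this, norm_LM]
  set ψ : (LinearMap.range L) →ₗᵢ[ℂ] HF := ⟨φ, hφnorm⟩ with hψdef
  -- density of the range of L
  have hrangeL : LinearMap.range L = Submodule.span ℂ (Set.range fun w => Aop T w h) := by
    rw [hLdef]
    exact Finsupp.range_linearCombination ..
  have hdenseL : Dense ((LinearMap.range L : Submodule ℂ H) : Set H) := by
    rw [Submodule.dense_iff_topologicalClosure_eq_top, hrangeL]
    exact denseA hcomm h hcyc
  set e : (LinearMap.range L) →L[ℂ] H := (LinearMap.range L).subtypeL with hedef
  have hdr : DenseRange e := by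
    have : Set.range (⇑e) = ((LinearMap.range L : Submodule ℂ H) : Set H) := by
      rw [hedef]
      exact Subtype.range_coe
    rw [DenseRange, this]
    exact hdenseL
  have hui : IsUniformInducing e := isometry_subtype_coe.isUniformInducing
  set Ucl : H →L[ℂ] HF :=
    ContinuousLinearMap.extend ψ.toContinuousLinearMap e with hUcldef
  have hUcl : ∀ x : LinearMap.range L, Ucl (e x) = ψ x := by
    intro x
    exact ContinuousLinearMap.extend_eq ψ.toContinuousLinearMap hdr hui x
  have hUnorm : ∀ v : H, ‖Ucl v‖ = ‖v‖ := by
    have := Continuous.ext_on hdenseL (Ucl.continuous.norm) continuous_norm ?_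
    · intro v; exact congrFun this v
    · rintro x hx
      obtain ⟨c, rfl⟩ := hx
      show ‖Ucl (L c)‖ = ‖L c‖
      have h1 : L c = e (⟨L c, ⟨c, rfl⟩⟩ : LinearMap.range L) := rfl
      rw [h1, hUcl]
      show ‖φ _‖ = _
      rw [hφ c ⟨c, rfl⟩, norm_LM]
      rfl
  set Uiso : H →ₗᵢ[ℂ] HF := ⟨(Ucl : H →ₗ[ℂ] HF), hUnorm⟩ with hUisodef
  have hUA : ∀ w : Fin n → ℂ, Uiso (Aop T w h) = k w := by
    intro w
    have hsingle : L (Finsupp.single w 1) = Aop T w h := by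
      rw [hLdef, Finsupp.linearCombination_single, one_smul]
    have hmem : Aop T w h ∈ LinearMap.range L := ⟨Finsupp.single w 1, hsingle⟩
    have h1 : Aop T w h = e (⟨Aop T w h, hmem⟩ : LinearMap.range L) := rfl
    show Ucl (Aop T w h) = k w
    rw [h1, hUcl]
    show φ _ = k w
    have h2 : (⟨Aop T w h, hmem⟩ : LinearMap.range L)
        = ⟨L (Finsupp.single w 1), LinearMap.mem_range_self L _⟩ := Subtype.ext hsingle.symm
    rw [h2, hφ]
    rw [hMdef, Finsupp.linearCombination_single, one_smul]
  have hsurj : Function.Surjective Uiso := by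
    have hclosed : IsClosed (Set.range Uiso) :=
      (Uiso.isometry.isClosedEmbedding).isClosed_range
    have htop : LinearMap.range Uiso.toLinearMap = ⊤ := by
      have h1 : Submodule.span ℂ (Set.range k) ≤ LinearMap.range Uiso.toLinearMap := by
        rw [Submodule.span_le]
        rintro x ⟨w, rfl⟩
        exact ⟨Aop T w h, hUA w⟩
      have h2 := Submodule.topologicalClosure_minimal _ h1 ?_
      · rw [hspan] at h2
        exact le_antisymm le_top h2
      · have : ((LinearMap.range Uiso.toLinearMap : Submodule ℂ HF) : Set HF)
            = Set.range Uiso := by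
          rw [LinearMap.coe_range]
          rfl
        rw [this]
        exact hclosed
    intro y
    have : y ∈ LinearMap.range Uiso.toLinearMap := htop ▸ Submodule.mem_top
    exact this
  set U : H ≃ₗᵢ[ℂ] HF := LinearIsometryEquiv.ofSurjective Uiso hsurj with hUdef
  have hUA' : ∀ w : Fin n → ℂ, U (Aop T w h) = k w := by
    intro w
    rw [hUdef]
    show (LinearIsometryEquiv.ofSurjective Uiso hsurj) (Aop T w h) = k w
    rw [LinearIsometryEquiv.coe_ofSurjective]
    exact hUA w
  have hUsymm : ∀ w : Fin n → ℂ, U.symm (k w) = Aop T w h := by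
    intro w
    rw [← hUA' w, LinearIsometryEquiv.symm_apply_apply]
  -- the differentiation operators
  set X : Fin n → H →L[ℂ] H := fun i => ContinuousLinearMap.adjoint (T i) with hXdef
  set D : Fin n → HF →L[ℂ] HF := fun i =>
    (U.toLinearIsometry.toContinuousLinearMap).comp
      ((X i).comp U.symm.toLinearIsometry.toContinuousLinearMap) with hDdef
  have hD : ∀ (i : Fin n) (f : HF), D i f = U (X i (U.symm f)) := fun i f => rfl
  -- the exponential of the adjoint tuple
  set S' : (Fin n → ℂ) → (H →L[ℂ] H) := fun z => ∑ j, z j • X j with hS'def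
  have hstarA : ∀ z : Fin n → ℂ, ContinuousLinearMap.adjoint (Aop T z)
      = NormedSpace.exp (S' z) := fun z => star_Aop z
  have hEf : ∀ (g : HF) (z : Fin n → ℂ),
      E g z = (inner ℂ h (NormedSpace.exp (S' z) (U.symm g)) : ℂ) := by
    intro g z
    rw [hrepro]
    have h1 : (inner ℂ (k z) g : ℂ) = inner ℂ (Aop T z h) (U.symm g) := by
      conv_lhs => rw [← U.apply_symm_apply g, ← hUA' z, LinearIsometryEquiv.inner_map_map]
    rw [h1, ← hstarA z]
    exact (ContinuousLinearMap.adjoint_inner_right _ _ _).symm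
  -- commuting facts about the adjoints
  have hcommX : ∀ i j : Fin n, Commute (X i) (X j) := by
    intro i j
    rw [hXdef]
    simp only [← ContinuousLinearMap.star_eq_adjoint]
    exact (commT hcomm i j).star_star
  refine ⟨D, ?_, U, ?_⟩
  · -- the differentiation property
    intro i f z
    set v : H := U.symm f with hvdef
    have hEfun : E f = fun z' => (inner ℂ h (NormedSpace.exp (S' z') v) : ℂ) :=
      funext fun z' => hEf f z'
    have lhs_eq : E (D i f) z = (inner ℂ h (NormedSpace.exp (S' z) (X i v)) : ℂ) := by
      rw [hEf (D i f) z, hD i f, LinearIsometryEquiv.symm_apply_apply]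
    rw [lhs_eq, hEfun]
    set g : (Fin n → ℂ) → ℂ :=
      fun z' => (inner ℂ h (NormedSpace.exp (S' z') v) : ℂ) with hgdef
    -- differentiability of g
    have hS'd : DifferentiableAt ℂ S' z := by
      rw [hS'def]
      refine DifferentiableAt.fun_sum fun j _ => ?_
      exact (differentiableAt_apply (𝕜 := ℂ) j z).smul_const (X j)
    have hexpd : DifferentiableAt ℂ (NormedSpace.exp : (H →L[ℂ] H) → (H →L[ℂ] H)) (S' z) :=
      (NormedSpace.exp_analytic (𝕂 := ℂ) (S' z)).differentiableAt
    have d1 : DifferentiableAt ℂ (fun z' => NormedSpace.exp (S' z')) z := hexpd.comp z hS'd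
    have d2 : DifferentiableAt ℂ (fun z' => NormedSpace.exp (S' z') v) z :=
      d1.clm_apply (differentiableAt_const v)
    have hdiff : DifferentiableAt ℂ g z := by
      have := ((innerSL ℂ h).differentiableAt).comp z d2
      exact this
    -- the curve in the direction `single i 1`
    have hcurve : HasDerivAt (fun t : ℂ => z + t • (Pi.single i 1 : Fin n → ℂ)) ((Pi.single i 1 : Fin n → ℂ)) 0 := by
      simpa using ((hasDerivAt_id (0:ℂ)).smul_const ((Pi.single i 1 : Fin n → ℂ))).const_add z
    have h1 : HasDerivAt (fun t : ℂ => g (z + t • (Pi.single i 1 : Fin n → ℂ)))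
        (fderiv ℂ g z ((Pi.single i 1 : Fin n → ℂ))) 0 := by
      have hg : HasFDerivAt g (fderiv ℂ g z) (z + (0:ℂ) • (Pi.single i 1 : Fin n → ℂ)) := by
        simpa using hdiff.hasFDerivAt
      exact hg.comp_hasDerivAt 0 hcurve
    -- explicit computation of the derivative along the curve
    have hpt : ∀ t : ℂ, g (z + t • (Pi.single i 1 : Fin n → ℂ))
        = (inner ℂ h (NormedSpace.exp (S' z) (NormedSpace.exp (t • X i) v)) : ℂ) := by
      intro t
      have hsum : S' (z + t • (Pi.single i 1 : Fin n → ℂ)) = S' z + t • X i := by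
        rw [hS'def]
        have := sum_single_smul z i t X
        rw [← this]
        rfl
      rw [hgdef]
      simp only []
      rw [hsum, NormedSpace.exp_add_of_commute_of_mem_ball (𝕂 := ℂ)
        (Commute.sum_left _ _ _ fun j _ => ((hcommX j i).smul_left _).smul_right _)
        (by rw [NormedSpace.expSeries_radius_eq_top]; exact edist_lt_top _ _) (by rw [NormedSpace.expSeries_radius_eq_top]; exact edist_lt_top _ _),
        ContinuousLinearMap.mul_apply]
    have h2 : HasDerivAt (fun t : ℂ => g (z + t • (Pi.single i 1 : Fin n → ℂ)))
        (inner ℂ h (NormedSpace.exp (S' z) (X i v)) : ℂ) 0 := by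
      set Lmap : (H →L[ℂ] H) →L[ℂ] ℂ :=
        (innerSL ℂ h).comp ((NormedSpace.exp (S' z)).comp
          (ContinuousLinearMap.apply ℂ H v)) with hLmapdef
      have hX : HasDerivAt (fun t : ℂ => NormedSpace.exp (t • X i)) (X i) 0 := by
        simpa using hasDerivAt_exp_smul_const (𝕂 := ℂ) (X i) 0
      have h3 : HasDerivAt (fun t : ℂ => Lmap (NormedSpace.exp (t • X i))) (Lmap (X i)) 0 :=
        Lmap.hasFDerivAt.comp_hasDerivAt 0 hX
      have heqf : (fun t : ℂ => g (z + t • (Pi.single i 1 : Fin n → ℂ)))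
          = fun t : ℂ => Lmap (NormedSpace.exp (t • X i)) := by
        funext t
        rw [hpt t]
        rfl
      have heqd : Lmap (X i) = (inner ℂ h (NormedSpace.exp (S' z) (X i v)) : ℂ) := rfl
      rw [heqf, ← heqd]
      exact h3
    rw [h1.unique h2]
  · -- the intertwining property
    intro i v
    rw [hD, LinearIsometryEquiv.symm_apply_apply, LinearIsometryEquiv.symm_apply_apply]
end

section
/- Let (T,h) be a cyclic commuting n-tuple on a Hilbert space H and λ ∈ ℂⁿ. Then λ is a joint eigenvalue of the adjoint tuple T* = (T₁*,…,T_n*) (i.e., there exists a nonzero v ∈ H with T_i* v = λ_i v for all i) if and only if there exists c > 0 such that |p(\bar{λ})| ≤ c·‖p(T)h‖_H for all polynomials p ∈ ℂ[z₁,…,z_n], where \bar{λ} = (conj(λ₁),…,conj(λ_n)). -/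
open scoped BigOperators

/-- `p(T)h` for a polynomial `p ∈ ℂ[z₁,…,z_n]`. -/
noncomputable def evalTuple {H : Type*} [NormedAddCommGroup H] [NormedSpace ℂ H]
    {n : ℕ} (T : Fin n → H →L[ℂ] H) (h : H) (p : MvPolynomial (Fin n) ℂ) : H :=
  ∑ α ∈ p.support, p.coeff α • opPow T (fun i => α i) h

section aux

variable {H : Type*} [NormedAddCommGroup H] [NormedSpace ℂ H]

lemma opPow_zeroExp {n : ℕ} (T : Fin n → H →L[ℂ] H) : opPow T (fun _ => 0) = 1 := by
  unfold opPow
  apply List.prod_eq_one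
  intro x hx
  rcases List.mem_ofFn.mp hx with ⟨i, rfl⟩
  simp

lemma opPow_succ_at : ∀ {n : ℕ} (T : Fin n → H →L[ℂ] H),
    (∀ i j, T i ∘L T j = T j ∘L T i) → ∀ (i : Fin n) (α : Fin n → ℕ),
    opPow T (fun j => α j + if j = i then 1 else 0) = T i * opPow T α := by
  intro n
  induction n with
  | zero => intro T _ i; exact i.elim0
  | succ m ih =>
    intro T hcomm i α
    unfold opPow
    rw [List.ofFn_succ, List.ofFn_succ, List.prod_cons, List.prod_cons]
    rcases Fin.eq_zero_or_eq_succ i with rfl | ⟨k, rfl⟩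
    · have htail : (List.ofFn fun j : Fin m =>
          T j.succ ^ (α j.succ + if j.succ = (0 : Fin (m+1)) then 1 else 0)).prod
          = (List.ofFn fun j : Fin m => T j.succ ^ α j.succ).prod := by
        congr 1
      rw [htail]
      beta_reduce
      have h1 : (α 0 + if (0:Fin (m+1)) = 0 then 1 else 0) = α 0 + 1 := by simp
      rw [h1, pow_succ', mul_assoc]
    · have hhead : T (0 : Fin (m+1)) ^ (α 0 + if (0 : Fin (m+1)) = k.succ then 1 else 0)
          = T 0 ^ α 0 := by
        simp [(Fin.succ_ne_zero k).symm]
      rw [hhead]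
      have htail : (List.ofFn fun j : Fin m =>
          T j.succ ^ (α j.succ + if j.succ = k.succ then 1 else 0)).prod
          = T k.succ * (List.ofFn fun j : Fin m => T j.succ ^ α j.succ).prod := by
        have := ih (fun j => T j.succ) (fun a b => hcomm a.succ b.succ) k (fun j => α j.succ)
        unfold opPow at this
        convert this using 3
        ext j
        simp [Fin.succ_inj]
      rw [htail]
      have hc0 : T k.succ * T 0 = T 0 * T k.succ := by
        simpa [ContinuousLinearMap.mul_def] using hcomm k.succ 0
      have hc : Commute (T k.succ) (T (0:Fin (m+1)) ^ α 0) := Commute.pow_right hc0 _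
      rw [← mul_assoc, ← hc.eq, mul_assoc]

variable {n : ℕ} (T : Fin n → H →L[ℂ] H) (h : H)

lemma evalTuple_eq_sum (p : MvPolynomial (Fin n) ℂ) {s : Finset (Fin n →₀ ℕ)}
    (hs : p.support ⊆ s) :
    evalTuple T h p = ∑ α ∈ s, p.coeff α • opPow T (fun i => α i) h := by
  unfold evalTuple
  exact Finset.sum_subset hs (fun α _ hα => by
    simp [MvPolynomial.notMem_support_iff.mp hα])

lemma evalTuple_add (p q : MvPolynomial (Fin n) ℂ) :
    evalTuple T h (p + q) = evalTuple T h p + evalTuple T h q := by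
  classical
  rw [evalTuple_eq_sum T h (p+q) (MvPolynomial.support_add),
    evalTuple_eq_sum T h p (Finset.subset_union_left (s₂ := q.support)),
    evalTuple_eq_sum T h q (Finset.subset_union_right (s₁ := p.support)),
    ← Finset.sum_add_distrib]
  exact Finset.sum_congr rfl fun α _ => by rw [MvPolynomial.coeff_add, add_smul]

lemma evalTuple_smul (a : ℂ) (p : MvPolynomial (Fin n) ℂ) :
    evalTuple T h (a • p) = a • evalTuple T h p := by
  classical
  rw [evalTuple_eq_sum T h (a • p) MvPolynomial.support_smul,
    evalTuple, Finset.smul_sum]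
  exact Finset.sum_congr rfl fun α _ => by
    rw [MvPolynomial.coeff_smul, smul_smul, smul_eq_mul]

/-- `evalTuple` as a linear map. -/
noncomputable def epsL : MvPolynomial (Fin n) ℂ →ₗ[ℂ] H where
  toFun := evalTuple T h
  map_add' := evalTuple_add T h
  map_smul' := evalTuple_smul T h

@[simp] lemma epsL_apply (p : MvPolynomial (Fin n) ℂ) : epsL T h p = evalTuple T h p := rfl

lemma evalTuple_monomial (α : Fin n →₀ ℕ) (c : ℂ) :
    evalTuple T h (MvPolynomial.monomial α c) = c • opPow T (fun i => α i) h := by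
  classical
  by_cases hc : c = 0
  · simp [evalTuple, MvPolynomial.support_monomial, hc]
  · simp [evalTuple, MvPolynomial.support_monomial, hc, MvPolynomial.coeff_monomial]

lemma evalTuple_one : evalTuple T h 1 = h := by
  have h1 : (1 : MvPolynomial (Fin n) ℂ) = MvPolynomial.monomial 0 1 := by
    simp
  rw [h1, evalTuple_monomial]
  have : (fun i => (0 : Fin n →₀ ℕ) i) = (fun _ => 0 : Fin n → ℕ) := by funext i; simp
  rw [this, opPow_zeroExp, one_smul, ContinuousLinearMap.one_apply]

lemma evalTuple_X_mul (hcomm : ∀ i j, T i ∘L T j = T j ∘L T i) (i : Fin n)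
    (p : MvPolynomial (Fin n) ℂ) :
    evalTuple T h (MvPolynomial.X i * p) = T i (evalTuple T h p) := by
  classical
  induction p using MvPolynomial.induction_on' with
  | add p q hp hq => rw [mul_add, evalTuple_add, hp, hq, evalTuple_add, map_add]
  | monomial s a =>
    have hX : (MvPolynomial.X i : MvPolynomial (Fin n) ℂ) * MvPolynomial.monomial s a
        = MvPolynomial.monomial (Finsupp.single i 1 + s) a := by
      rw [show (MvPolynomial.X i : MvPolynomial (Fin n) ℂ)
        = MvPolynomial.monomial (Finsupp.single i 1) 1 from rfl, MvPolynomial.monomial_mul,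
        one_mul]
    rw [hX, evalTuple_monomial, evalTuple_monomial]
    have hexp : (fun j => (Finsupp.single i 1 + s : Fin n →₀ ℕ) j)
        = fun j => s j + if j = i then 1 else 0 := by
      funext j
      rcases eq_or_ne j i with rfl | hne
      · simp [add_comm]
      · simp [hne, Ne.symm hne]
    rw [hexp, opPow_succ_at T hcomm i, ContinuousLinearMap.mul_apply, map_smul]

end aux

section innerAux

variable {H : Type*} [NormedAddCommGroup H] [InnerProductSpace ℂ H]

lemma inner_opPow : ∀ {m : ℕ} (S : Fin m → H →L[ℂ] H) (μ : Fin m → ℂ) (v : H),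
    (∀ i x, (inner ℂ (S i x) v : ℂ) = μ i * inner ℂ x v) →
    ∀ (α : Fin m → ℕ) (x : H),
    (inner ℂ (opPow S α x) v : ℂ) = (∏ i, μ i ^ α i) * inner ℂ x v := by
  intro m
  induction m with
  | zero =>
    intro S μ v _ α x
    simp [opPow]
  | succ m ih =>
    intro S μ v hS α x
    have hpow : ∀ (k : ℕ) (y : H), (inner ℂ ((S 0 ^ k) y) v : ℂ) = μ 0 ^ k * inner ℂ y v := by
      intro k
      induction k with
      | zero => intro y; simp
      | succ k ihk =>
        intro y
        rw [pow_succ, ContinuousLinearMap.mul_apply, ihk, hS, pow_succ]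
        ring
    unfold opPow
    rw [List.ofFn_succ, List.prod_cons, ContinuousLinearMap.mul_apply, hpow]
    have := ih (fun j => S j.succ) (fun j => μ j.succ) v (fun j x => hS j.succ x)
      (fun j => α j.succ) x
    unfold opPow at this
    rw [this, Fin.prod_univ_succ]
    ring

end innerAux

/-- for a cyclic commuting tuple `(T,h)` on a Hilbert space `H` and
`λ ∈ ℂⁿ`, `λ` is a joint eigenvalue of `T* = (T₁*,…,T_n*)` iff there is `c > 0` with
`|p(λ̄)| ≤ c·‖p(T)h‖` for all polynomials `p`. -/
theorem stmt8 {H : Type*} [NormedAddCommGroup H] [InnerProductSpace ℂ H] [CompleteSpace H]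
    {n : ℕ} (T : Fin n → H →L[ℂ] H) (hcomm : ∀ i j, T i ∘L T j = T j ∘L T i) (h : H)
    (hcyc : (Submodule.span ℂ
      (Set.range fun α : Fin n → ℕ => opPow T α h)).topologicalClosure = ⊤)
    (lam : Fin n → ℂ) :
    (∃ v : H, v ≠ 0 ∧ ∀ i, ContinuousLinearMap.adjoint (T i) v = lam i • v) ↔
    (∃ c : ℝ, 0 < c ∧ ∀ p : MvPolynomial (Fin n) ℂ,
      ‖MvPolynomial.eval (fun i => (starRingEnd ℂ) (lam i)) p‖ ≤ c * ‖evalTuple T h p‖) := by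
  classical
  constructor
  · rintro ⟨v, hv0, hv⟩
    have hTi : ∀ (i : Fin n) (x : H), (inner ℂ (T i x) v : ℂ) = lam i * inner ℂ x v := by
      intro i x
      rw [← ContinuousLinearMap.adjoint_inner_right, hv i, inner_smul_right]
    have hkey : ∀ p : MvPolynomial (Fin n) ℂ,
        (inner ℂ (evalTuple T h p) v : ℂ)
          = (starRingEnd ℂ) (MvPolynomial.eval (fun i => (starRingEnd ℂ) (lam i)) p)
            * inner ℂ h v := by
      intro p
      rw [evalTuple, sum_inner, MvPolynomial.eval_eq', map_sum, Finset.sum_mul]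
      refine Finset.sum_congr rfl fun α _ => ?_
      rw [inner_smul_left, inner_opPow T lam v hTi (fun i => α i) h, map_mul, map_prod]
      simp only [map_pow, Complex.conj_conj]
      ring
    have hhv : (inner ℂ h v : ℂ) ≠ 0 := by
      intro h0
      apply hv0
      have hle : Submodule.span ℂ (Set.range fun α : Fin n → ℕ => opPow T α h)
          ≤ (Submodule.span ℂ {v})ᗮ := by
        rw [Submodule.span_le]
        rintro x ⟨α, rfl⟩
        refine Submodule.mem_orthogonal_singleton_iff_inner_left.mpr ?_
        rw [inner_opPow T lam v hTi α h, h0, mul_zero]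
      have hle2 := Submodule.topologicalClosure_minimal _ hle
        (Submodule.isClosed_orthogonal _)
      rw [hcyc] at hle2
      have hvmem : v ∈ (Submodule.span ℂ {v})ᗮ := hle2 Submodule.mem_top
      exact inner_self_eq_zero.mp
        (Submodule.mem_orthogonal_singleton_iff_inner_left.mp hvmem)
    have hdpos : (0:ℝ) < ‖(inner ℂ h v : ℂ)‖ := norm_pos_iff.mpr hhv
    have hvpos : (0:ℝ) < ‖v‖ := norm_pos_iff.mpr hv0
    refine ⟨‖v‖ / ‖(inner ℂ h v : ℂ)‖, div_pos hvpos hdpos, fun p => ?_⟩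
    have h1 : ‖MvPolynomial.eval (fun i => (starRingEnd ℂ) (lam i)) p‖ * ‖(inner ℂ h v : ℂ)‖
        = ‖(inner ℂ (evalTuple T h p) v : ℂ)‖ := by
      rw [hkey, norm_mul, RCLike.norm_conj]
    have h2 := norm_inner_le_norm (𝕜 := ℂ) (evalTuple T h p) v
    rw [div_mul_eq_mul_div, le_div_iff₀ hdpos, h1, mul_comm (‖v‖)]
    exact h2
  · rintro ⟨c, hc, hb⟩
    set lam' : Fin n → ℂ := fun i => (starRingEnd ℂ) (lam i) with hlam'
    set eL : MvPolynomial (Fin n) ℂ →ₗ[ℂ] ℂ := (MvPolynomial.aeval lam').toLinearMap with heLdef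
    have heval : ∀ p, eL p = MvPolynomial.eval lam' p := by
      intro p
      exact RingHom.congr_fun (MvPolynomial.coe_aeval_eq_eval lam') p
    have hker : LinearMap.ker (epsL T h) ≤ LinearMap.ker eL := by
      intro p hp
      rw [LinearMap.mem_ker] at hp ⊢
      have hbp := hb p
      rw [epsL_apply] at hp
      rw [hp, norm_zero, mul_zero] at hbp
      rw [heval]
      exact norm_le_zero_iff.mp hbp
    set φ : (LinearMap.range (epsL T h)) →ₗ[ℂ] ℂ :=
      (Submodule.liftQ (LinearMap.ker (epsL T h)) eL hker).comp
        ((LinearMap.quotKerEquivRange (epsL T h)).symm.toLinearMap) with hφdef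
    have hφ : ∀ p : MvPolynomial (Fin n) ℂ,
        φ ⟨epsL T h p, LinearMap.mem_range_self _ p⟩ = MvPolynomial.eval lam' p := by
      intro p
      have h1 : (LinearMap.quotKerEquivRange (epsL T h)).symm
          ⟨epsL T h p, LinearMap.mem_range_self _ p⟩
          = Submodule.Quotient.mk p := by
        rw [LinearEquiv.symm_apply_eq]
        exact Subtype.ext (LinearMap.quotKerEquivRange_apply_mk _ p).symm
      rw [hφdef]
      simp only [LinearMap.comp_apply, LinearEquiv.coe_toLinearMap]
      rw [h1, Submodule.liftQ_apply, heval]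
    have hφb : ∀ x : (LinearMap.range (epsL T h)), ‖φ x‖ ≤ c * ‖x‖ := by
      rintro ⟨x, hx⟩
      rcases LinearMap.mem_range.mp hx with ⟨p, rfl⟩
      show ‖φ ⟨epsL T h p, LinearMap.mem_range_self _ p⟩‖ ≤ c * ‖epsL T h p‖
      rw [hφ p]
      exact hb p
    set g0 := LinearMap.mkContinuous φ c hφb with hg0def
    obtain ⟨g, hg, -⟩ := exists_extension_norm_eq _ g0
    have hgeps : ∀ p, g (evalTuple T h p) = MvPolynomial.eval lam' p := by
      intro p
      have := hg ⟨epsL T h p, LinearMap.mem_range_self _ p⟩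
      rw [hg0def, LinearMap.mkContinuous_apply, hφ p] at this
      exact this
    have hM : LinearMap.range (epsL T h)
        = Submodule.span ℂ (Set.range fun α : Fin n → ℕ => opPow T α h) := by
      apply le_antisymm
      · rintro x ⟨p, rfl⟩
        rw [epsL_apply, evalTuple]
        exact Submodule.sum_mem _ fun α _ =>
          Submodule.smul_mem _ _ (Submodule.subset_span ⟨fun i => α i, rfl⟩)
      · rw [Submodule.span_le]
        rintro x ⟨α, rfl⟩
        refine ⟨MvPolynomial.monomial (Finsupp.equivFunOnFinite.symm α) 1, ?_⟩
        rw [epsL_apply, evalTuple_monomial, one_smul]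
        congr 1
    have hdense : Dense ((LinearMap.range (epsL T h) : Submodule ℂ H) : Set H) := by
      rw [Submodule.dense_iff_topologicalClosure_eq_top, hM]
      exact hcyc
    set v := (InnerProductSpace.toDual ℂ H).symm g with hvdef
    have hvx : ∀ x : H, (inner ℂ v x : ℂ) = g x := fun x => InnerProductSpace.toDual_symm_apply
    refine ⟨v, ?_, ?_⟩
    · intro hv0
      have h1 : (inner ℂ v h : ℂ) = g h := hvx h
      rw [hv0, inner_zero_left] at h1
      have h2 : g h = 1 := by
        have h3 := hgeps 1
        rw [evalTuple_one] at h3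
        rw [h3, map_one]
      rw [h2] at h1
      exact one_ne_zero h1.symm
    · intro i
      have hfun : (fun x => g (T i x)) = fun x => (starRingEnd ℂ) (lam i) * g x := by
        apply Continuous.ext_on hdense
        · exact g.continuous.comp (T i).continuous
        · exact continuous_const.mul g.continuous
        · intro x hx
          rcases LinearMap.mem_range.mp hx with ⟨p, rfl⟩
          rw [epsL_apply]
          show g (T i (evalTuple T h p)) = (starRingEnd ℂ) (lam i) * g (evalTuple T h p)
          rw [← evalTuple_X_mul T h hcomm i p, hgeps, hgeps, map_mul, MvPolynomial.eval_X]
      apply ext_inner_right ℂ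
      intro x
      rw [ContinuousLinearMap.adjoint_inner_left, inner_smul_left, hvx, hvx]
      exact congrFun hfun x
end

section
/- Let (T,h) be a cyclic commuting n-tuple on H and λ ∈ ℂⁿ. Then λ is a joint eigenvalue of T* if and only if for some c > 0 the infinite matrix [c²⟨T^α h, T^β h⟩_H − conj(λ)^α λ^β]_{α,β∈ℕ₀ⁿ} is positive semidefinite (i.e., every finite submatrix indexed by multi-indices is positive semidefinite). -/
open scoped ComplexOrder BigOperators

namespace Stmt9Aux

open ContinuousLinearMap

local notation "⟪" x ", " y "⟫" => @inner ℂ _ _ x y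
local notation "conj'" => starRingEnd ℂ

/-- Product of two `List.ofFn` products of pairwise commuting elements. -/
lemma ofFn_prod_mul {M : Type*} [Monoid M] :
    ∀ (m : ℕ) (f g : Fin m → M), (∀ i j, i ≠ j → Commute (f i) (g j)) →
      (List.ofFn f).prod * (List.ofFn g).prod = (List.ofFn fun i => f i * g i).prod
  | 0, f, g, _ => by simp
  | (m + 1), f, g, hc => by
    have hgf : Commute ((List.ofFn fun i : Fin m => f i.succ).prod) (g 0) := by
      refine (Commute.list_prod_right _ _ fun x hx => ?_).symm
      rw [List.mem_ofFn] at hx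
      obtain ⟨i, rfl⟩ := hx
      exact (hc i.succ 0 (Fin.succ_ne_zero i)).symm
    have IH := ofFn_prod_mul m (fun i => f i.succ) (fun i => g i.succ)
      (fun i j hij => hc i.succ j.succ (by simpa [Fin.succ_inj] using hij))
    simp only [List.ofFn_succ, List.prod_cons]
    rw [hgf.mul_mul_mul_comm, IH]

lemma ofFn_prod_eq_single {M : Type*} [Monoid M] :
    ∀ (m : ℕ) (f : Fin m → M) (i : Fin m), (∀ j, j ≠ i → f j = 1) →
      (List.ofFn f).prod = f i
  | 0, _, i, _ => i.elim0
  | (m + 1), f, i, hf => by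
    rw [List.ofFn_succ, List.prod_cons]
    rcases Fin.eq_zero_or_eq_succ i with rfl | ⟨j, rfl⟩
    · rw [List.prod_eq_one, mul_one]
      intro x hx
      rw [List.mem_ofFn] at hx
      obtain ⟨k, rfl⟩ := hx
      exact hf k.succ (Fin.succ_ne_zero k)
    · rw [hf 0 (Ne.symm (Fin.succ_ne_zero j)), one_mul,
        ofFn_prod_eq_single m (fun k => f k.succ) j
          (fun k hk => hf k.succ (by simpa [Fin.succ_inj] using hk))]

variable {H : Type*} [NormedAddCommGroup H] [InnerProductSpace ℂ H]
variable {n : ℕ} {T : Fin n → H →L[ℂ] H}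

lemma commuteT (hcomm : ∀ i j, T i ∘L T j = T j ∘L T i) (i j : Fin n) :
    Commute (T i) (T j) := by
  rw [Commute, SemiconjBy, mul_def, mul_def]
  exact hcomm i j

lemma opPow_add (hcomm : ∀ i j, T i ∘L T j = T j ∘L T i) (α β : Fin n → ℕ) :
    opPow T (α + β) = opPow T α * opPow T β := by
  unfold opPow
  have he : (fun i => T i ^ (α + β) i) = fun i => T i ^ α i * T i ^ β i := by
    funext i
    rw [Pi.add_apply, pow_add]
  rw [he, ← ofFn_prod_mul n _ _ fun i j hij => ((commuteT hcomm i j).pow_pow _ _)]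

lemma opPow_single (i : Fin n) : opPow T (Pi.single i 1) = T i := by
  unfold opPow
  rw [ofFn_prod_eq_single n _ i fun j hj => by
    rw [Pi.single_eq_of_ne hj, pow_zero]]
  rw [Pi.single_eq_same, pow_one]

lemma opPow_zero : opPow T (0 : Fin n → ℕ) = 1 := by
  unfold opPow
  rw [List.prod_eq_one]
  intro x hx
  rw [List.mem_ofFn] at hx
  obtain ⟨k, rfl⟩ := hx
  exact pow_zero _

lemma opPow_succ (hcomm : ∀ i j, T i ∘L T j = T j ∘L T i) (i : Fin n) (α : Fin n → ℕ)
    (x : H) : opPow T (Pi.single i 1 + α) x = T i (opPow T α x) := by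
  rw [opPow_add hcomm, opPow_single, mul_def, comp_apply]

lemma prodPow_add (μ : Fin n → ℂ) (α β : Fin n → ℕ) :
    (∏ i, μ i ^ (α + β) i) = (∏ i, μ i ^ α i) * ∏ i, μ i ^ β i := by
  rw [← Finset.prod_mul_distrib]
  exact Finset.prod_congr rfl fun i _ => by rw [Pi.add_apply, pow_add]

lemma prodPow_single (μ : Fin n → ℂ) (i : Fin n) :
    (∏ j, μ j ^ (Pi.single i 1 : Fin n → ℕ) j) = μ i := by
  rw [Finset.prod_eq_single i (fun j _ hj => by rw [Pi.single_eq_of_ne hj, pow_zero])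
    (fun hi => absurd (Finset.mem_univ i) hi)]
  rw [Pi.single_eq_same, pow_one]

variable [CompleteSpace H]

omit [CompleteSpace H] in
lemma inner_listProd (v : H) :
    ∀ (m : ℕ) (f : Fin m → H →L[ℂ] H) (cs : Fin m → ℂ),
      (∀ i x, ⟪v, f i x⟫ = cs i * ⟪v, x⟫) →
      ∀ x : H, ⟪v, (List.ofFn f).prod x⟫ = (∏ i, cs i) * ⟪v, x⟫
  | 0, f, cs, _, x => by simp
  | (m + 1), f, cs, hf, x => by
    rw [List.ofFn_succ, List.prod_cons, mul_def, comp_apply, hf 0,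
      inner_listProd v m (fun i => f i.succ) (fun i => cs i.succ)
        (fun i x => hf i.succ x), Fin.prod_univ_succ, mul_assoc]

lemma inner_opPow {lam : Fin n → ℂ} (v : H)
    (hv : ∀ i, ContinuousLinearMap.adjoint (T i) v = lam i • v) (α : Fin n → ℕ) (x : H) :
    ⟪v, opPow T α x⟫ = (∏ i, conj' (lam i) ^ α i) * ⟪v, x⟫ := by
  refine inner_listProd v n _ _ (fun i => ?_) x
  generalize α i = k
  induction k with
  | zero => simp
  | succ k ih =>
    intro y
    rw [pow_succ, mul_def, comp_apply, ih, ← ContinuousLinearMap.adjoint_inner_left, hv i,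
      inner_smul_left, pow_succ]
    ring

lemma orth_zero (h : H)
    (hcyc : (Submodule.span ℂ
      (Set.range fun α : Fin n → ℕ => opPow T α h)).topologicalClosure = ⊤)
    (z : H) (hz : ∀ α : Fin n → ℕ, ⟪z, opPow T α h⟫ = 0) : z = 0 := by
  have hbot := Submodule.topologicalClosure_eq_top_iff.mp hcyc
  have hz' : z ∈ (Submodule.span ℂ (Set.range fun α : Fin n → ℕ => opPow T α h))ᗮ := by
    rw [Submodule.mem_orthogonal]
    intro u hu
    induction hu using Submodule.span_induction with
    | mem u hu =>
      obtain ⟨α, rfl⟩ := hu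
      rw [← inner_conj_symm, hz α, map_zero]
    | zero => exact inner_zero_left z
    | add u w _ _ hu hw => rw [inner_add_left, hu, hw, add_zero]
    | smul a u _ hu => rw [inner_smul_left, hu, mul_zero]
  rw [hbot] at hz'
  exact hz'

omit [CompleteSpace H] in
/-- The central quadratic-form identity. -/
lemma quad_eq {ι : Type*} [Fintype ι] (c : ℝ) (y : ι → H) (g : ι → ℂ) (ξ : ι → ℂ) :
    (∑ s, ∑ t, conj' (ξ s) * ξ t * ((c : ℂ) ^ 2 * ⟪y t, y s⟫ - conj' (g s) * g t))
      = ((c ^ 2 * ‖∑ t, conj' (ξ t) • y t‖ ^ 2 - ‖∑ t, ξ t * g t‖ ^ 2 : ℝ) : ℂ) := by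
  set w : H := ∑ t, conj' (ξ t) • y t with hw
  set F : ℂ := ∑ t, ξ t * g t with hF
  have h1 : ∑ s, ∑ t, conj' (ξ s) * ξ t * ⟪y t, y s⟫ = ⟪w, w⟫ := by
    rw [Finset.sum_comm, hw, sum_inner]
    refine Finset.sum_congr rfl fun a _ => ?_
    simp only [inner_sum, inner_smul_left, inner_smul_right, Complex.conj_conj, Finset.mul_sum]
    exact Finset.sum_congr rfl fun b _ => by ring
  have h2 : ∑ s, ∑ t, conj' (ξ s) * ξ t * (conj' (g s) * g t) = conj' F * F := by
    rw [hF, map_sum, Finset.sum_mul_sum]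
    simp only [map_mul]
    exact Finset.sum_congr rfl fun a _ => Finset.sum_congr rfl fun b _ => by ring
  have expand : (∑ s, ∑ t, conj' (ξ s) * ξ t * ((c : ℂ) ^ 2 * ⟪y t, y s⟫ - conj' (g s) * g t))
      = (c : ℂ) ^ 2 * (∑ s, ∑ t, conj' (ξ s) * ξ t * ⟪y t, y s⟫)
        - ∑ s, ∑ t, conj' (ξ s) * ξ t * (conj' (g s) * g t) := by
    simp only [Finset.mul_sum, ← Finset.sum_sub_distrib]
    exact Finset.sum_congr rfl fun s _ => Finset.sum_congr rfl fun t _ => by ring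
  rw [expand, h1, h2, inner_self_eq_norm_sq_to_K, mul_comm (conj' F) F, Complex.mul_conj,
    Complex.normSq_eq_norm_sq]
  push_cast
  rfl

end Stmt9Aux

/-- for a cyclic commuting tuple `(T,h)` on a Hilbert space `H` and
`λ ∈ ℂⁿ`, `λ` is a joint eigenvalue of `T*` iff for some `c > 0` the infinite matrix
`[c²⟨T^α h, T^β h⟩ − conj(λ)^α λ^β]_{α,β}` is positive semidefinite, i.e. every finite
submatrix indexed by multi-indices is positive semidefinite.  (Here the paper's inner
product `⟨x,y⟩`, linear in the first slot, is Mathlib's `inner y x`.) -/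
theorem stmt9 {H : Type*} [NormedAddCommGroup H] [InnerProductSpace ℂ H] [CompleteSpace H]
    {n : ℕ} (T : Fin n → H →L[ℂ] H) (hcomm : ∀ i j, T i ∘L T j = T j ∘L T i) (h : H)
    (hcyc : (Submodule.span ℂ
      (Set.range fun α : Fin n → ℕ => opPow T α h)).topologicalClosure = ⊤)
    (lam : Fin n → ℂ) :
    (∃ v : H, v ≠ 0 ∧ ∀ i, ContinuousLinearMap.adjoint (T i) v = lam i • v) ↔
    (∃ c : ℝ, 0 < c ∧
      ∀ (m : ℕ) (A : Fin m → (Fin n → ℕ)) (ξ : Fin m → ℂ),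
        0 ≤ ∑ s, ∑ t, (starRingEnd ℂ) (ξ s) * ξ t *
          ((c : ℂ) ^ 2 * (inner ℂ (opPow T (A t) h) (opPow T (A s) h) : ℂ)
            - (∏ i, (starRingEnd ℂ) (lam i) ^ (A s i)) * (∏ i, lam i ^ (A t i)))) := by
  constructor
  · rintro ⟨v, hv0, hv⟩
    have hinner : ∀ α : Fin n → ℕ, (inner ℂ v (opPow T α h) : ℂ)
        = (∏ i, (starRingEnd ℂ) (lam i) ^ α i) * inner ℂ v h :=
      fun α => Stmt9Aux.inner_opPow v hv α h
    have hκ : (inner ℂ v h : ℂ) ≠ 0 := by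
      intro h0
      exact hv0 (Stmt9Aux.orth_zero h hcyc v (fun α => by rw [hinner α, h0, mul_zero]))
    have hκpos : 0 < ‖(inner ℂ v h : ℂ)‖ := norm_pos_iff.mpr hκ
    refine ⟨‖v‖ / ‖(inner ℂ v h : ℂ)‖, div_pos (norm_pos_iff.mpr hv0) hκpos, ?_⟩
    set c : ℝ := ‖v‖ / ‖(inner ℂ v h : ℂ)‖ with hc
    intro m A ξ
    have hconj : ∀ s : Fin m, (∏ i, (starRingEnd ℂ) (lam i) ^ (A s i))
        = (starRingEnd ℂ) (∏ i, lam i ^ (A s i)) := by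
      intro s
      rw [map_prod]
      exact Finset.prod_congr rfl fun i _ => (map_pow _ _ _).symm
    have hquad := Stmt9Aux.quad_eq (c := c) (y := fun t => opPow T (A t) h)
      (g := fun t => ∏ i, lam i ^ (A t i)) (ξ := ξ)
    simp only [hconj]
    rw [hquad, Complex.zero_le_real]
    set w : H := ∑ t, (starRingEnd ℂ) (ξ t) • opPow T (A t) h with hw
    set F : ℂ := ∑ t, ξ t * ∏ i, lam i ^ (A t i) with hF
    have hvw : (inner ℂ v w : ℂ) = (starRingEnd ℂ) F * inner ℂ v h := by
      rw [hw, hF]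
      simp only [inner_sum, inner_smul_right, hinner, map_sum, map_mul, map_prod, map_pow]
      rw [Finset.sum_mul]
      exact Finset.sum_congr rfl fun t _ => by ring
    have hcs : ‖F‖ * ‖(inner ℂ v h : ℂ)‖ ≤ ‖v‖ * ‖w‖ := by
      have h1 := norm_inner_le_norm (𝕜 := ℂ) v w
      rw [hvw, norm_mul, RCLike.norm_conj] at h1
      exact h1
    have hFle : ‖F‖ ≤ c * ‖w‖ := by
      rw [hc, div_mul_eq_mul_div, le_div_iff₀ hκpos]
      exact hcs
    clear_value c
    nlinarith [hFle, norm_nonneg F, norm_nonneg w, mul_nonneg (div_nonneg (norm_nonneg v) (norm_nonneg (inner ℂ v h : ℂ))) (norm_nonneg w)]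
  · rintro ⟨c, hcpos, hpsd⟩
    classical
    -- Step 1: the finite-support inequality
    have key : ∀ (s : Finset (Fin n → ℕ)) (d : (Fin n → ℕ) → ℂ),
        ‖∑ α ∈ s, d α * (starRingEnd ℂ) (∏ i, lam i ^ α i)‖
          ≤ c * ‖∑ α ∈ s, d α • opPow T α h‖ := by
      intro s d
      have e := s.equivFin
      have hpsd' := hpsd s.card (fun t => (e.symm t : Fin n → ℕ))
        (fun t => (starRingEnd ℂ) (d (e.symm t)))
      have hconj : ∀ α : Fin n → ℕ, (∏ i, (starRingEnd ℂ) (lam i) ^ (α i))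
          = (starRingEnd ℂ) (∏ i, lam i ^ (α i)) := by
        intro α
        rw [map_prod]
        exact Finset.prod_congr rfl fun i _ => (map_pow _ _ _).symm
      simp only [hconj] at hpsd'
      rw [Stmt9Aux.quad_eq (c := c) (y := fun t => opPow T ((e.symm t : Fin n → ℕ)) h)
        (g := fun t => ∏ i, lam i ^ ((e.symm t : Fin n → ℕ) i)),
        Complex.zero_le_real] at hpsd'
      have hsum1 : (∑ t : Fin s.card,
            (starRingEnd ℂ) ((starRingEnd ℂ) (d (e.symm t))) • opPow T ((e.symm t : Fin n → ℕ)) h)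
          = ∑ α ∈ s, d α • opPow T α h := by
        simp only [Complex.conj_conj]
        rw [← Finset.sum_coe_sort s (fun α => d α • opPow T α h)]
        exact Equiv.sum_comp e.symm (fun a : s => d a • opPow T (a : Fin n → ℕ) h)
      have hsum2 : (∑ t : Fin s.card,
            (starRingEnd ℂ) (d (e.symm t)) * ∏ i, lam i ^ ((e.symm t : Fin n → ℕ) i))
          = ∑ α ∈ s, (starRingEnd ℂ) (d α) * ∏ i, lam i ^ (α i) := by
        rw [← Finset.sum_coe_sort s (fun α => (starRingEnd ℂ) (d α) * ∏ i, lam i ^ (α i))]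
        exact Equiv.sum_comp e.symm (fun a : s => (starRingEnd ℂ) (d a) * ∏ i, lam i ^ ((a : Fin n → ℕ) i))
      have hsum3 : (∑ α ∈ s, (starRingEnd ℂ) (d α) * ∏ i, lam i ^ (α i))
          = (starRingEnd ℂ) (∑ α ∈ s, d α * (starRingEnd ℂ) (∏ i, lam i ^ (α i))) := by
        rw [map_sum]
        exact Finset.sum_congr rfl fun α _ => by rw [map_mul, Complex.conj_conj]
      rw [hsum1, hsum2, hsum3, RCLike.norm_conj] at hpsd'
      have h0 : 0 ≤ c * ‖∑ α ∈ s, d α • opPow T α h‖ :=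
        mul_nonneg hcpos.le (norm_nonneg _)
      nlinarith [hpsd', norm_nonneg (∑ α ∈ s, d α * (starRingEnd ℂ) (∏ i, lam i ^ (α i)))]
    -- Step 2: construct the functional
    set Λc : (Fin n → ℕ) → ℂ := fun α => (starRingEnd ℂ) (∏ i, lam i ^ (α i)) with hΛc
    set x : (Fin n → ℕ) → H := fun α => opPow T α h with hx
    set π : ((Fin n → ℕ) →₀ ℂ) →ₗ[ℂ] H := Finsupp.linearCombination ℂ x with hπ
    set ψ : ((Fin n → ℕ) →₀ ℂ) →ₗ[ℂ] ℂ := Finsupp.linearCombination ℂ Λc with hψ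
    have hbound : ∀ d : (Fin n → ℕ) →₀ ℂ, ‖ψ d‖ ≤ c * ‖π d‖ := by
      intro d
      have := key d.support d
      simpa only [hπ, hψ, Finsupp.linearCombination_apply, Finsupp.sum, smul_eq_mul] using this
    have hker : LinearMap.ker π ≤ LinearMap.ker ψ := by
      intro d hd
      rw [LinearMap.mem_ker] at hd ⊢
      have hb := hbound d
      rw [hd, norm_zero, mul_zero] at hb
      exact norm_le_zero_iff.mp hb
    set K : Submodule ℂ H := Submodule.span ℂ (Set.range x) with hK
    have hrange : LinearMap.range π = K := Finsupp.range_linearCombination ℂ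
    let eq1 : K ≃ₗ[ℂ] LinearMap.range π := LinearEquiv.ofEq _ _ hrange.symm
    let φ₀ : K →ₗ[ℂ] ℂ := ((LinearMap.ker π).liftQ ψ hker) ∘ₗ
      (π.quotKerEquivRange.symm.toLinearMap ∘ₗ eq1.toLinearMap)
    have hφ₀ : ∀ (d : (Fin n → ℕ) →₀ ℂ) (hm : π d ∈ K), φ₀ ⟨π d, hm⟩ = ψ d := by
      intro d hm
      have h2 : π.quotKerEquivRange.symm ⟨π d, LinearMap.mem_range_self π d⟩
          = Submodule.Quotient.mk d := by
        rw [LinearEquiv.symm_apply_eq]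
        exact Subtype.ext (LinearMap.quotKerEquivRange_apply_mk π d).symm
      show ((LinearMap.ker π).liftQ ψ hker) (π.quotKerEquivRange.symm (eq1 ⟨π d, hm⟩)) = ψ d
      have h1 : eq1 ⟨π d, hm⟩ = ⟨π d, LinearMap.mem_range_self π d⟩ := rfl
      rw [h1, h2, Submodule.liftQ_apply]
    have hφb : ∀ u : K, ‖φ₀ u‖ ≤ c * ‖u‖ := by
      rintro ⟨u, hu⟩
      have hu' : u ∈ LinearMap.range π := by rw [hrange]; exact hu
      obtain ⟨d, hd⟩ := hu'
      have hsub : (⟨u, hu⟩ : K) = ⟨π d, hd ▸ hu⟩ := Subtype.ext hd.symm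
      rw [hsub, hφ₀ d (hd ▸ hu)]
      calc ‖ψ d‖ ≤ c * ‖π d‖ := hbound d
        _ = c * ‖(⟨π d, hd ▸ hu⟩ : K)‖ := rfl
    let φ : K →L[ℂ] ℂ := LinearMap.mkContinuous φ₀ c hφb
    obtain ⟨F, hF, -⟩ := exists_extension_norm_eq (K : Subspace ℂ H) φ
    set v : H := (InnerProductSpace.toDual ℂ H).symm F with hv
    have hvx : ∀ α, (inner ℂ v (x α) : ℂ) = Λc α := by
      intro α
      have hm : x α ∈ K := Submodule.subset_span ⟨α, rfl⟩
      have h1 : π (Finsupp.single α 1) = x α := by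
        rw [hπ, Finsupp.linearCombination_single, one_smul]
      have hm' : π (Finsupp.single α 1) ∈ K := h1 ▸ hm
      have h3 : φ₀ ⟨x α, hm⟩ = Λc α := by
        have h4 := hφ₀ (Finsupp.single α 1) hm'
        have h5 : (⟨x α, hm⟩ : K) = ⟨π (Finsupp.single α 1), hm'⟩ := Subtype.ext h1.symm
        rw [h5, h4, hψ, Finsupp.linearCombination_single, smul_eq_mul, one_mul]
      rw [hv, InnerProductSpace.toDual_symm_apply, hF ⟨x α, hm⟩]
      exact h3
    have hΛadd : ∀ (i : Fin n) (α : Fin n → ℕ),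
        Λc (Pi.single i 1 + α) = (starRingEnd ℂ) (lam i) * Λc α := by
      intro i α
      rw [hΛc]
      simp only []
      rw [Stmt9Aux.prodPow_add lam _ _, Stmt9Aux.prodPow_single lam i, map_mul]
    refine ⟨v, ?_, ?_⟩
    · intro h0
      have h1 := hvx 0
      rw [h0, inner_zero_left] at h1
      have hΛ0 : Λc (0 : Fin n → ℕ) = 1 := by
        rw [hΛc]
        simp
      rw [hΛ0] at h1
      exact one_ne_zero h1.symm
    · intro i
      have hz : ∀ α : Fin n → ℕ,
          (inner ℂ (ContinuousLinearMap.adjoint (T i) v - lam i • v) (opPow T α h) : ℂ) = 0 := by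
        intro α
        have hTx : T i (x α) = x (Pi.single i 1 + α) := (Stmt9Aux.opPow_succ hcomm i α h).symm
        rw [inner_sub_left, inner_smul_left, ContinuousLinearMap.adjoint_inner_left]
        have hgoal : (inner ℂ v (T i (x α)) : ℂ)
            - (starRingEnd ℂ) (lam i) * (inner ℂ v (x α) : ℂ) = 0 := by
          rw [hTx, hvx, hvx, hΛadd, sub_self]
        exact hgoal
      exact sub_eq_zero.mp (Stmt9Aux.orth_zero h hcyc _ hz)
end

section
/- Let T be a bounded operator on a Hilbert space H and h ∈ H a cyclic vector for T. Then the following are equivalent: (1) T^m = 0 for some m ≥ 1; (2) there exists a finite collection of polynomials (p_k) such that ⟨p(T)h, q(T)h⟩ = Σ_k ⟨p, p_k⟩_{H²(ℂ)}·conj(⟨q, p_k⟩_{H²(ℂ)}) for all polynomials p, q (i.e., the associated positive operator L on the Fock space is a finite sum L = Σ_k p_k ⊗ p_k with polynomial vectors p_k). -/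
open scoped BigOperators

/-- The Fock-space inner product `⟨p, q⟩_{H²(ℂ)} = Σ_k k!·p_k·conj(q_k)` of two
polynomials (the paper's inner product, linear in the first slot). -/
noncomputable def fockInner (p q : Polynomial ℂ) : ℂ :=
  ∑ k ∈ Finset.range (p.natDegree + 1),
    (Nat.factorial k : ℂ) * p.coeff k * (starRingEnd ℂ) (q.coeff k)

/-- let `T` be a bounded operator on a Hilbert space `H` with cyclic vector
`h`.  Then `T` is nilpotent (`T^m = 0` for some `m ≥ 1`) iff there is a finite collection
of polynomials `p_k` with
`⟨p(T)h, q(T)h⟩ = Σ_k ⟨p, p_k⟩_{H²(ℂ)}·conj(⟨q, p_k⟩_{H²(ℂ)})` for all polynomials `p,q`;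
i.e. the associated positive operator `L` on the Fock space is `Σ_k p_k ⊗ p_k`.
(The paper's `⟨x,y⟩_H`, linear in the first slot, is Mathlib's `inner y x`.) -/
theorem stmt10 {H : Type*} [NormedAddCommGroup H] [InnerProductSpace ℂ H] [CompleteSpace H]
    (T : H →L[ℂ] H) (h : H)
    (hcyc : (Submodule.span ℂ
      (Set.range fun m : ℕ => (T ^ m) h)).topologicalClosure = ⊤) :
    (∃ m : ℕ, 1 ≤ m ∧ T ^ m = 0) ↔
    (∃ (N : ℕ) (pk : Fin N → Polynomial ℂ),
      ∀ p q : Polynomial ℂ,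
        (inner ℂ ((Polynomial.aeval T q) h) ((Polynomial.aeval T p) h) : ℂ)
          = ∑ k, fockInner p (pk k) * (starRingEnd ℂ) (fockInner q (pk k))) := by
  constructor
  · rintro ⟨m, hm1, hm⟩
    -- vanishing of high powers
    have hzero : ∀ j : ℕ, m ≤ j → (T ^ j) h = 0 := by
      intro j hj
      have : T ^ j = T ^ (j - m) * T ^ m := by
        rw [← pow_add, Nat.sub_add_cancel hj]
      rw [this, hm, mul_zero]
      rfl
    -- H is spanned by finitely many vectors
    set S : Submodule ℂ H :=
      Submodule.span ℂ (Set.range fun i : Fin m => (T ^ (i : ℕ)) h) with hS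
    have hsub : Submodule.span ℂ (Set.range fun n : ℕ => (T ^ n) h) ≤ S := by
      rw [Submodule.span_le]
      rintro _ ⟨n, rfl⟩
      by_cases hn : n < m
      · exact Submodule.subset_span ⟨⟨n, hn⟩, rfl⟩
      · show (T ^ n) h ∈ S
        rw [hzero n (le_of_not_gt hn)]; exact S.zero_mem
    haveI : FiniteDimensional ℂ S := FiniteDimensional.span_of_finite ℂ (Set.finite_range _)
    have hStop : S = ⊤ := by
      refine le_antisymm le_top ?_
      rw [← hcyc]
      exact Submodule.topologicalClosure_minimal _ hsub S.closed_of_finiteDimensional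
    haveI : FiniteDimensional ℂ H := by
      have := ‹FiniteDimensional ℂ S›
      rw [hStop] at this
      exact (Submodule.topEquiv (R := ℂ) (M := H)).finiteDimensional
    -- orthonormal basis
    set n := Module.finrank ℂ H with hn
    set b := stdOrthonormalBasis ℂ H with hb
    refine ⟨n, fun k => ∑ i ∈ Finset.range m,
      Polynomial.C ((starRingEnd ℂ) (inner ℂ (b k) ((T ^ i) h)) / (Nat.factorial i : ℂ))
        * Polynomial.X ^ i, fun p q => ?_⟩
    have hcoeff : ∀ (k : Fin n) (j : ℕ),
        (∑ i ∈ Finset.range m,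
          Polynomial.C ((starRingEnd ℂ) (inner ℂ (b k) ((T ^ i) h)) / (Nat.factorial i : ℂ))
            * Polynomial.X ^ i).coeff j
        = if j ∈ Finset.range m
            then (starRingEnd ℂ) (inner ℂ (b k) ((T ^ j) h)) / (Nat.factorial j : ℂ) else 0 := by
      intro k j
      rw [Polynomial.finset_sum_coeff]
      rw [← Finset.sum_ite_eq (Finset.range m) j
        (fun i => (starRingEnd ℂ) (inner ℂ (b k) ((T ^ i) h)) / (Nat.factorial i : ℂ))]
      refine Finset.sum_congr rfl fun i _ => ?_
      rw [Polynomial.coeff_C_mul, Polynomial.coeff_X_pow]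
      split <;> simp_all
    have hfock : ∀ (k : Fin n) (p : Polynomial ℂ),
        fockInner p (∑ i ∈ Finset.range m,
          Polynomial.C ((starRingEnd ℂ) (inner ℂ (b k) ((T ^ i) h)) / (Nat.factorial i : ℂ))
            * Polynomial.X ^ i)
        = inner ℂ (b k) ((Polynomial.aeval T p) h) := by
      intro k p
      have haev : (Polynomial.aeval T p) h
          = ∑ i ∈ Finset.range (p.natDegree + 1), p.coeff i • (T ^ i) h := by
        rw [Polynomial.aeval_eq_sum_range T]
        simp [ContinuousLinearMap.sum_apply]
      rw [haev, inner_sum]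
      unfold fockInner
      refine Finset.sum_congr rfl fun j _ => ?_
      rw [hcoeff k j, inner_smul_right]
      by_cases hj : j ∈ Finset.range m
      · rw [if_pos hj, map_div₀, Complex.conj_conj, map_natCast]
        have hf : (Nat.factorial j : ℂ) ≠ 0 := Nat.cast_ne_zero.mpr (Nat.factorial_ne_zero j)
        field_simp
      · rw [if_neg hj, map_zero, mul_zero]
        rw [hzero j (by simpa using hj)]
        simp
    calc (inner ℂ ((Polynomial.aeval T q) h) ((Polynomial.aeval T p) h) : ℂ)
        = ∑ k, (inner ℂ ((Polynomial.aeval T q) h) (b k) : ℂ)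
            * inner ℂ (b k) ((Polynomial.aeval T p) h) :=
          (b.sum_inner_mul_inner _ _).symm
      _ = _ := by
          refine Finset.sum_congr rfl fun k _ => ?_
          rw [hfock k p, hfock k q, inner_conj_symm]
          ring
  · rintro ⟨N, pk, hpk⟩
    set m := 1 + Finset.univ.sup (fun k : Fin N => (pk k).natDegree) with hmdef
    have hm1 : 1 ≤ m := Nat.le_add_right 1 _
    refine ⟨m, hm1, ?_⟩
    -- first: T^m h = 0
    have key : (T ^ m) h = 0 := by
      have := hpk (Polynomial.X ^ m) (Polynomial.X ^ m)
      have haev : (Polynomial.aeval T ((Polynomial.X : Polynomial ℂ) ^ m)) h = (T ^ m) h := by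
        simp
      rw [haev] at this
      have hfz : ∀ k : Fin N, fockInner (Polynomial.X ^ m) (pk k) = 0 := by
        intro k
        unfold fockInner
        refine Finset.sum_eq_zero fun j hj => ?_
        rw [Polynomial.coeff_X_pow]
        by_cases hjm : j = m
        · subst hjm
          have hc : (pk k).coeff m = 0 := Polynomial.coeff_eq_zero_of_natDegree_lt
            (lt_of_le_of_lt (Finset.le_sup (f := fun k => (pk k).natDegree)
              (Finset.mem_univ k)) (by omega))
          rw [hc, map_zero, mul_zero]
        · rw [if_neg hjm, mul_zero, zero_mul]
      rw [← inner_self_eq_zero (𝕜 := ℂ), this]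
      exact Finset.sum_eq_zero fun k _ => by rw [hfz k, zero_mul]
    -- then T^m kills all T^j h, hence everything by density
    have hker : ∀ x : H, x ∈ Submodule.span ℂ (Set.range fun j : ℕ => (T ^ j) h) →
        (T ^ m) x = 0 := by
      intro x hx
      have hle : Submodule.span ℂ (Set.range fun j : ℕ => (T ^ j) h)
          ≤ LinearMap.ker ((T ^ m : H →L[ℂ] H) : H →ₗ[ℂ] H) := by
        rw [Submodule.span_le]
        rintro _ ⟨j, rfl⟩
        have hcomm : (T ^ m) ((T ^ j) h) = (T ^ j) ((T ^ m) h) := by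
          rw [← ContinuousLinearMap.mul_apply, ← ContinuousLinearMap.mul_apply,
            ← pow_add, ← pow_add, Nat.add_comm]
        show (T ^ j) h ∈ LinearMap.ker ((T ^ m : H →L[ℂ] H) : H →ₗ[ℂ] H)
        rw [LinearMap.mem_ker]
        show (T ^ m) ((T ^ j) h) = 0
        rw [hcomm, key, map_zero]
      exact hle hx
    ext x
    have hle2 : (Submodule.span ℂ (Set.range fun j : ℕ => (T ^ j) h)).topologicalClosure
        ≤ LinearMap.ker ((T ^ m : H →L[ℂ] H) : H →ₗ[ℂ] H) := by
      refine Submodule.topologicalClosure_minimal _ ?_ (ContinuousLinearMap.isClosed_ker _)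
      rw [Submodule.span_le]
      intro y hy
      exact hker y (Submodule.subset_span hy)
    have hx : x ∈ LinearMap.ker ((T ^ m : H →L[ℂ] H) : H →ₗ[ℂ] H) := hle2 (hcyc ▸ Submodule.mem_top)
    exact hx
end

section
/- Let the 5×5 matrices T₁, T₂, T₃ be the Varopoulos–Kaijser matrices: T₁ has entries (T₁)_{2,1}=1, (T₁)_{5,2}=1/√3, (T₁)_{5,3}=−1/√3, (T₁)_{5,4}=−1/√3; T₂ has (T₂)_{3,1}=1, (T₂)_{5,2}=−1/√3, (T₂)_{5,3}=1/√3, (T₂)_{5,4}=−1/√3; T₃ has (T₃)_{4,1}=1, (T₃)_{5,2}=−1/√3, (T₃)_{5,3}=−1/√3, (T₃)_{5,4}=1/√3; all other entries zero. Then T₁, T₂, T₃ pairwise commute, and for p(z) = z₁²+z₂²+z₃²−2z₁z₂−2z₁z₃−2z₂z₃, the matrix p(T₁,T₂,T₃) has all entries zero except the (5,1) entry, which equals 3√3; in particular ‖p(T)‖ = 3√3 > 5 ≥ sup_{z∈𝔻³} |p(z)| fails, i.e., ‖p(T)‖ > ‖p‖_{𝔻³}. -/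
open scoped BigOperators

noncomputable def s3 : ℂ := ((Real.sqrt 3 : ℝ) : ℂ)⁻¹

/-- The Varopoulos–Kaijser matrices. -/
noncomputable def VK1 : Matrix (Fin 5) (Fin 5) ℂ :=
  !![0,0,0,0,0; 1,0,0,0,0; 0,0,0,0,0; 0,0,0,0,0; 0,s3,-s3,-s3,0]
noncomputable def VK2 : Matrix (Fin 5) (Fin 5) ℂ :=
  !![0,0,0,0,0; 0,0,0,0,0; 1,0,0,0,0; 0,0,0,0,0; 0,-s3,s3,-s3,0]
noncomputable def VK3 : Matrix (Fin 5) (Fin 5) ℂ :=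
  !![0,0,0,0,0; 0,0,0,0,0; 0,0,0,0,0; 1,0,0,0,0; 0,-s3,-s3,s3,0]

/-- The Hermitian inner product `⟨u,v⟩ = Σ_i u_i·conj(v_i)` on `ℂ⁵`. -/
noncomputable def herm (u v : Fin 5 → ℂ) : ℂ := ∑ i, u i * (starRingEnd ℂ) (v i)

lemma realineq (u v r : ℝ) (hu : u^2 + v^2 = 1) (hr1 : -2 ≤ r) (hr2 : r ≤ 2) :
    ((u-r-2)^2 + v^2) * ((u-r+2)^2 + v^2) ≤ 25 := by
  have hv : v^2 = 1 - u^2 := by linarith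
  have hu1 : -1 ≤ u := by nlinarith [sq_nonneg v]
  have hu2 : u ≤ 1 := by nlinarith [sq_nonneg v]
  rw [hv]
  rcases le_or_gt (r^2) (15/4) with h | h
  · nlinarith [sq_nonneg (2*(4-r^2)*u + r*(r^2-3)), mul_nonneg (sq_nonneg r) (by linarith : (0:ℝ) ≤ 15 - 4*r^2), sq_nonneg r, sq_nonneg u]
  · rcases le_or_gt 0 r with hr | hr
    · nlinarith [mul_nonneg (by linarith : (0:ℝ) ≤ u + 1) (by nlinarith : (0:ℝ) ≤ (4-r^2)*(u-1) + r*(r^2-3)), mul_nonneg (by linarith : (0:ℝ) ≤ 2-r) (by nlinarith : (0:ℝ) ≤ r^3+6*r^2+10*r+8)]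
    · nlinarith [mul_nonneg (by linarith : (0:ℝ) ≤ 1 - u) (by nlinarith : (0:ℝ) ≤ (4-r^2)*(-u-1) - r*(r^2-3)), mul_nonneg (by linarith : (0:ℝ) ≤ 2+r) (by nlinarith : (0:ℝ) ≤ -r^3+6*r^2-10*r+8)]

lemma torus (a b c : ℂ) (ha : ‖a‖ = 1) (hb : ‖b‖ = 1)
    (hc : ‖c‖ = 1) :
    ‖a^2 + b^2 + c^2 - 2*a*b - 2*a*c - 2*b*c‖ ≤ 5 := by
  obtain ⟨δ, hδ⟩ := IsAlgClosed.exists_pow_nat_eq (b*c) (n := 2) two_pos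
  have hδ1 : ‖δ‖ = 1 := by
    have h2 : ‖δ‖ ^ 2 = 1 := by
      rw [← norm_pow, hδ, norm_mul, hb, hc]; norm_num
    nlinarith [norm_nonneg δ, sq_nonneg (‖δ‖ - 1)]
  have hδ0 : δ ≠ 0 := by intro h; rw [h] at hδ1; simp at hδ1
  have hb0 : b ≠ 0 := by intro h; rw [h] at hb; simp at hb
  set w : ℂ := b / δ with hwdef
  have hwabs : ‖w‖ = 1 := by rw [hwdef, norm_div, hb, hδ1]; norm_num
  have hww : w * (starRingEnd ℂ) w = 1 := by
    rw [Complex.mul_conj]; norm_cast; rw [← Complex.sq_norm, hwabs]; norm_num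
  have hbδ : b = δ * w := by rw [hwdef]; field_simp
  have hconj : (starRingEnd ℂ) w = δ / b := by
    have h1 : (starRingEnd ℂ) w = w⁻¹ := eq_inv_of_mul_eq_one_right hww
    rw [h1, hwdef, inv_div]
  have hcδ : c = δ * (starRingEnd ℂ) w := by
    rw [hconj]
    field_simp
    linear_combination -hδ
  set r : ℝ := 2 * w.re with hrdef
  have hr : w + (starRingEnd ℂ) w = ((r:ℝ):ℂ) := by
    rw [Complex.add_conj]
  set x : ℂ := a / δ with hxdef
  have hax : a = δ * x := by rw [hxdef]; field_simp
  have hxabs : ‖x‖ = 1 := by rw [hxdef, norm_div, ha, hδ1]; norm_num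
  have key : a^2 + b^2 + c^2 - 2*a*b - 2*a*c - 2*b*c = δ^2 * ((x - (r:ℂ))^2 - 4) := by
    rw [hax, hbδ, hcδ]
    linear_combination (δ^2*(w + (starRingEnd ℂ) w + (r:ℂ) - 2*x)) * hr - (4*δ^2) * hww
  rw [key, norm_mul, norm_pow, hδ1, one_pow, one_mul]
  have hfact : (x - (r:ℂ))^2 - 4 = (x - r - 2) * (x - r + 2) := by ring
  rw [hfact, norm_mul]
  have hu : x.re^2 + x.im^2 = 1 := by
    have := Complex.sq_norm x
    rw [hxabs, Complex.normSq_apply] at this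
    nlinarith [this]
  have hr1 : -2 ≤ r := by
    have := Complex.abs_re_le_norm w
    have h2 := abs_le.1 (hwabs ▸ this)
    rw [hrdef]; linarith [h2.1]
  have hr2 : r ≤ 2 := by
    have := Complex.abs_re_le_norm w
    have h2 := abs_le.1 (hwabs ▸ this)
    rw [hrdef]; linarith [h2.2]
  have hkey := realineq x.re x.im r hu hr1 hr2
  have e1 : ‖x - (r:ℂ) - 2‖ ^ 2 = (x.re - r - 2)^2 + x.im^2 := by
    rw [Complex.sq_norm, Complex.normSq_apply]; simp; ring
  have e2 : ‖x - (r:ℂ) + 2‖ ^ 2 = (x.re - r + 2)^2 + x.im^2 := by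
    rw [Complex.sq_norm, Complex.normSq_apply]; simp; ring
  nlinarith [norm_nonneg (x - (r:ℂ) - 2), norm_nonneg (x - (r:ℂ) + 2),
    mul_nonneg (norm_nonneg (x - (r:ℂ) - 2)) (norm_nonneg (x - (r:ℂ) + 2)), e1, e2, hkey]

lemma maxmod (f : ℂ → ℂ) (hf : Differentiable ℂ f)
    (h : ∀ z, ‖z‖ = 1 → ‖f z‖ ≤ 5) :
    ∀ z, ‖z‖ ≤ 1 → ‖f z‖ ≤ 5 := by
  intro z hz
  have := Complex.norm_le_of_forall_mem_frontier_norm_le (U := Metric.ball (0:ℂ) 1)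
    Metric.isBounded_ball hf.diffContOnCl (C := 5) ?_ (z := z) ?_
  · simpa using this
  · intro w hw
    rw [frontier_ball (0:ℂ) one_ne_zero] at hw
    simp only [Metric.mem_sphere, dist_zero_right] at hw
    simpa using h w hw
  · rw [closure_ball (0:ℂ) one_ne_zero]
    simpa [Metric.mem_closedBall, dist_zero_right] using hz

lemma disc (a b c : ℂ) (ha : ‖a‖ ≤ 1) (hb : ‖b‖ ≤ 1)
    (hc : ‖c‖ ≤ 1) :
    ‖a^2 + b^2 + c^2 - 2*a*b - 2*a*c - 2*b*c‖ ≤ 5 := by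
  have step1 : ∀ a b c : ℂ, ‖a‖ = 1 → ‖b‖ = 1 → ‖c‖ ≤ 1 →
      ‖a^2 + b^2 + c^2 - 2*a*b - 2*a*c - 2*b*c‖ ≤ 5 := by
    intro a b c ha hb hc
    exact maxmod (fun z => a^2 + b^2 + z^2 - 2*a*b - 2*a*z - 2*b*z)
      (by fun_prop) (fun z hz => torus a b z ha hb hz) c hc
  have step2 : ∀ a b c : ℂ, ‖a‖ = 1 → ‖b‖ ≤ 1 → ‖c‖ ≤ 1 →
      ‖a^2 + b^2 + c^2 - 2*a*b - 2*a*c - 2*b*c‖ ≤ 5 := by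
    intro a b c ha hb hc
    have := maxmod (fun z => a^2 + z^2 + c^2 - 2*a*z - 2*a*c - 2*z*c)
      (by fun_prop) (fun z hz => by
        exact step1 a z c ha hz hc) b hb
    exact this
  have := maxmod (fun z => z^2 + b^2 + c^2 - 2*z*b - 2*z*c - 2*b*c)
    (by fun_prop) (fun z hz => by
      exact step2 z b c hz hb hc) a ha
  exact this

set_option maxHeartbeats 2000000 in
set_option linter.unnecessarySeqFocus false in
/-- the Varopoulos–Kaijser matrices `T₁,T₂,T₃` pairwise commute; for
`p(z) = z₁²+z₂²+z₃²−2z₁z₂−2z₁z₃−2z₂z₃`, the matrix `p(T₁,T₂,T₃)` has all entries `0`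
except the `(5,1)` entry, which is `3√3`; each `T_i` is a contraction; `|p| ≤ 5` on the
closed tridisc; and `‖p(T)‖ ≥ 3√3 > 5` (witnessed by the unit vector `e₁`:
`‖p(T)e₁‖² = 27`), so the three-variable von Neumann inequality fails. -/
theorem stmt13 :
    VK1 * VK2 = VK2 * VK1 ∧ VK1 * VK3 = VK3 * VK1 ∧ VK2 * VK3 = VK3 * VK2 ∧
    (VK1 ^ 2 + VK2 ^ 2 + VK3 ^ 2
        - 2 • (VK1 * VK2) - 2 • (VK1 * VK3) - 2 • (VK2 * VK3))
      = Matrix.of (fun i j : Fin 5 =>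
          if i = 4 ∧ j = 0 then 3 * ((Real.sqrt 3 : ℝ) : ℂ) else 0) ∧
    (∀ z : Fin 3 → ℂ, (∀ i, ‖z i‖ ≤ 1) →
      ‖z 0 ^ 2 + z 1 ^ 2 + z 2 ^ 2
        - 2 * z 0 * z 1 - 2 * z 0 * z 2 - 2 * z 1 * z 2‖ ≤ 5) ∧
    herm
      ((VK1 ^ 2 + VK2 ^ 2 + VK3 ^ 2
          - 2 • (VK1 * VK2) - 2 • (VK1 * VK3) - 2 • (VK2 * VK3)).mulVec
        (fun j => if j = 0 then 1 else 0))
      ((VK1 ^ 2 + VK2 ^ 2 + VK3 ^ 2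
          - 2 • (VK1 * VK2) - 2 • (VK1 * VK3) - 2 • (VK2 * VK3)).mulVec
        (fun j => if j = 0 then 1 else 0)) = 27 ∧
    (5 : ℝ) < 3 * Real.sqrt 3 := by
  have h3 : ((Real.sqrt 3 : ℝ) : ℂ) * ((Real.sqrt 3 : ℝ) : ℂ) = 3 := by
    norm_cast
    rw [Real.mul_self_sqrt] <;> norm_num
  have hne : ((Real.sqrt 3 : ℝ) : ℂ) ≠ 0 := by
    intro h; rw [h] at h3; simp at h3
  have hmul : ((Real.sqrt 3 : ℝ) : ℂ) * s3 = 1 := by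
    rw [s3]; exact mul_inv_cancel₀ hne
  have hs : (9 : ℂ) * s3 = 3 * ((Real.sqrt 3 : ℝ) : ℂ) := by
    linear_combination 3 * ((Real.sqrt 3 : ℝ) : ℂ) * hmul - 3 * s3 * h3
  have h4 : (VK1 ^ 2 + VK2 ^ 2 + VK3 ^ 2
        - 2 • (VK1 * VK2) - 2 • (VK1 * VK3) - 2 • (VK2 * VK3))
      = Matrix.of (fun i j : Fin 5 =>
          if i = 4 ∧ j = 0 then 3 * ((Real.sqrt 3 : ℝ) : ℂ) else 0) := by
    ext i j
    fin_cases i <;> fin_cases j <;>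
      norm_num (config := {decide := true}) [VK1, VK2, VK3, pow_two, Matrix.mul_apply,
        Fin.sum_univ_succ] <;>
      linear_combination hs
  refine ⟨?_, ?_, ?_, h4, ?_, ?_, ?_⟩
  · ext i j
    fin_cases i <;> fin_cases j <;>
      norm_num [VK1, VK2, Matrix.mul_apply, Fin.sum_univ_succ, Matrix.vecHead, Matrix.vecTail]
  · ext i j
    fin_cases i <;> fin_cases j <;>
      norm_num [VK1, VK3, Matrix.mul_apply, Fin.sum_univ_succ, Matrix.vecHead, Matrix.vecTail]
  · ext i j
    fin_cases i <;> fin_cases j <;>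
      norm_num [VK2, VK3, Matrix.mul_apply, Fin.sum_univ_succ, Matrix.vecHead, Matrix.vecTail]
  · intro z hz
    have := disc (z 0) (z 1) (z 2) (hz 0) (hz 1) (hz 2)
    calc ‖z 0 ^ 2 + z 1 ^ 2 + z 2 ^ 2
        - 2 * z 0 * z 1 - 2 * z 0 * z 2 - 2 * z 1 * z 2‖
        = ‖(z 0)^2 + (z 1)^2 + (z 2)^2
          - 2*(z 0)*(z 1) - 2*(z 0)*(z 2) - 2*(z 1)*(z 2)‖ := by ring_nf
      _ ≤ 5 := this
  · rw [h4]
    norm_num [herm, Matrix.mulVec, dotProduct, Matrix.of_apply, Fin.sum_univ_five,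
      map_mul, map_ofNat, Complex.conj_ofReal]
    try linear_combination 9 * h3
  · nlinarith [Real.sq_sqrt (by norm_num : (3:ℝ) ≥ 0), Real.sqrt_nonneg 3]
end

section
/- Let T = N + J be a bounded operator on a Hilbert space H where N is normal, J^k = 0 for some k ≥ 1, and NJ = JN. Then for any h ∈ H, the kernel F_{T,h}(z,w) = ⟨e^{\bar{w}T}h, e^{\bar{z}T}h⟩ satisfies the bound |F_{T,h}(z,w)| ≤ C(1+|z|+|w|)^{2(k-1)} e^{H_K(z+w)} for some constant C > 0, where K is the closed convex hull of the spectrum σ(N) and H_K(z) = sup_{λ∈K} Re(\bar{λ}z) is the supporting function of K. -/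
open scoped BigOperators

set_option maxHeartbeats 1000000 in
open ContinuousLinearMap in
/-- let `T = N + J` on a Hilbert space `H` with `N` normal, `J^k = 0`
(`k ≥ 1`), `NJ = JN`.  Then for every `h ∈ H` the kernel
`F_{T,h}(z,w) = ⟨e^{w̄T}h, e^{z̄T}h⟩` satisfies
`|F_{T,h}(z,w)| ≤ C·(1+|z|+|w|)^{2(k−1)}·e^{H_K(z+w)}` for some `C > 0`, where `K` is the
closed convex hull of `σ(N)` and `H_K(ζ) = sup_{λ∈K} Re(λ·ζ̄)` is its supporting
function. -/
theorem stmt17 {H : Type*} [NormedAddCommGroup H] [InnerProductSpace ℂ H] [CompleteSpace H]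
    (N J : H →L[ℂ] H) (k : ℕ) (hk : 1 ≤ k)
    (hnormal : ContinuousLinearMap.adjoint N ∘L N = N ∘L ContinuousLinearMap.adjoint N)
    (hnil : J ^ k = 0) (hcomm : N ∘L J = J ∘L N) (h : H) :
    ∃ C : ℝ, 0 < C ∧ ∀ z w : ℂ,
      ‖(inner ℂ (NormedSpace.exp ((starRingEnd ℂ) z • (N + J)) h)
              (NormedSpace.exp ((starRingEnd ℂ) w • (N + J)) h) : ℂ)‖
        ≤ C * (1 + ‖z‖ + ‖w‖) ^ (2 * (k - 1)) *
          Real.exp (sSup ((fun l : ℂ => (l * (starRingEnd ℂ) (z + w)).re) ''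
            (closure (convexHull ℝ (spectrum ℂ N))))) := by
  classical
  letI : NormedAlgebra ℚ (H →L[ℂ] H) := .restrictScalars ℚ ℂ _
  have hmulN : star N * N = N * star N := by
    rw [ContinuousLinearMap.star_eq_adjoint, ContinuousLinearMap.mul_def,
      ContinuousLinearMap.mul_def]
    exact hnormal
  have hN : IsStarNormal N := ⟨hmulN⟩
  have hNN' : Commute N (star N) := hmulN.symm
  have hNJ : Commute N J := by
    rw [Commute, SemiconjBy, ContinuousLinearMap.mul_def, ContinuousLinearMap.mul_def, hcomm]
  -- the constant
  set M : ℝ := ∑ i ∈ Finset.range k, ‖J‖ ^ i / (Nat.factorial i : ℝ) with hM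
  have hM0 : 0 < M := by
    apply Finset.sum_pos'
    · intro i _
      positivity
    · exact ⟨0, Finset.mem_range.2 hk, by positivity⟩
  refine ⟨M * M * (‖h‖ * ‖h‖) + 1, by positivity, fun z w => ?_⟩
  set ζ : ℂ := z + w with hζ
  set K : Set ℂ := closure (convexHull ℝ (spectrum ℂ N)) with hKdef
  set Hs : ℝ := sSup ((fun l : ℂ => (l * (starRingEnd ℂ) ζ).re) '' K) with hHs
  -- spectral points are below the supporting function value
  have hspec : ∀ μ ∈ spectrum ℂ N, (μ * (starRingEnd ℂ) ζ).re ≤ Hs := by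
    intro μ hμ
    have hKb : Bornology.IsBounded K :=
      ((isBounded_convexHull (E := ℂ)).2 (spectrum.isCompact N).isBounded).closure
    obtain ⟨R, hR⟩ := isBounded_iff_forall_norm_le.1 hKb
    have hbdd : BddAbove ((fun l : ℂ => (l * (starRingEnd ℂ) ζ).re) '' K) := by
      refine ⟨R * ‖ζ‖, ?_⟩
      rintro - ⟨l, hl, rfl⟩
      calc (l * (starRingEnd ℂ) ζ).re ≤ ‖l * (starRingEnd ℂ) ζ‖ := by
            exact Complex.re_le_norm _
        _ = ‖l‖ * ‖ζ‖ := by rw [norm_mul, RCLike.norm_conj]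
        _ ≤ R * ‖ζ‖ := mul_le_mul_of_nonneg_right (hR l hl) (norm_nonneg _)
    exact le_csSup hbdd ⟨μ, subset_closure (subset_convexHull ℝ _ hμ), rfl⟩
  -- bound on the nilpotent exponentials
  have hJexp : ∀ c : ℂ, ‖NormedSpace.exp (c • J)‖ ≤ M * (1 + ‖c‖) ^ (k - 1) := by
    intro c
    have hsum : NormedSpace.exp (c • J)
        = ∑ i ∈ Finset.range k, ((Nat.factorial i : ℂ))⁻¹ • (c • J) ^ i := by
      rw [NormedSpace.exp_eq_tsum ℂ]
      refine tsum_eq_sum ?_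
      intro n hn
      have hkn : k ≤ n := le_of_not_gt (fun hlt => hn (Finset.mem_range.2 hlt))
      have hJn : J ^ n = 0 := by
        calc J ^ n = J ^ k * J ^ (n - k) := by rw [← pow_add, Nat.add_sub_cancel' hkn]
        _ = 0 := by rw [hnil, zero_mul]
      rw [smul_pow, hJn, smul_zero, smul_zero]
    rw [hsum]
    refine (norm_sum_le _ _).trans ?_
    rw [hM, Finset.sum_mul]
    refine Finset.sum_le_sum fun i hi => ?_
    have hik : i ≤ k - 1 := Nat.le_sub_one_of_lt (Finset.mem_range.1 hi)
    have h1c : (1:ℝ) ≤ 1 + ‖c‖ := le_add_of_nonneg_right (norm_nonneg _)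
    have hci : ‖c‖ ^ i ≤ (1 + ‖c‖) ^ (k - 1) := by
      calc ‖c‖ ^ i ≤ (1 + ‖c‖) ^ i :=
            pow_le_pow_left₀ (norm_nonneg _) (by linarith) i
        _ ≤ (1 + ‖c‖) ^ (k - 1) := pow_le_pow_right₀ h1c hik
    have hJi : ‖J ^ i‖ ≤ ‖J‖ ^ i := by
      rcases Nat.eq_zero_or_pos i with hi0 | hi0
      · subst hi0
        simpa [ContinuousLinearMap.one_def] using ContinuousLinearMap.norm_id_le
      · exact norm_pow_le' J hi0
    calc ‖((Nat.factorial i : ℂ))⁻¹ • (c • J) ^ i‖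
        = (Nat.factorial i : ℝ)⁻¹ * (‖c‖ ^ i * ‖J ^ i‖) := by
          rw [smul_pow, norm_smul, norm_smul, norm_inv, norm_pow, Complex.norm_natCast]
      _ ≤ (Nat.factorial i : ℝ)⁻¹ * ((1 + ‖c‖) ^ (k - 1) * ‖J‖ ^ i) := by
          have := mul_le_mul hci hJi (norm_nonneg _) (by positivity)
          have hfac : (0:ℝ) ≤ (Nat.factorial i : ℝ)⁻¹ := by positivity
          exact mul_le_mul_of_nonneg_left this hfac
      _ = ‖J‖ ^ i / (Nat.factorial i : ℝ) * (1 + ‖c‖) ^ (k - 1) := by ring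
  -- the normal part: norm bound via cfc
  set A : H →L[ℂ] H := z • star N + (starRingEnd ℂ) w • N with hA
  have hexpA : ‖NormedSpace.exp A‖ ≤ Real.exp Hs := by
    -- S = star A + A is `cfc` of an explicit function
    have hstarA : star A = (starRingEnd ℂ) z • N + w • star N := by
      rw [hA, star_add, star_smul, star_smul, star_star]
      simp only [RCLike.star_def, Complex.conj_conj]
    have hSA : star A + A = (starRingEnd ℂ) ζ • N + ζ • star N := by
      rw [hstarA, hA, hζ]
      simp only [map_add]
      module
    have hcommA : Commute (star A) A := by
      rw [hstarA, hA]
      refine Commute.add_left ?_ ?_ <;> refine Commute.add_right ?_ ?_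
      · exact (hNN'.smul_left _).smul_right _
      · exact ((Commute.refl N).smul_left _).smul_right _
      · exact ((Commute.refl (star N)).smul_left _).smul_right _
      · exact (hNN'.symm.smul_left _).smul_right _
    have hstarmul : star (NormedSpace.exp A) * NormedSpace.exp A
        = NormedSpace.exp ((starRingEnd ℂ) ζ • N + ζ • star N) := by
      rw [NormedSpace.star_exp, ← NormedSpace.exp_add_of_commute hcommA, hSA]
    -- identify with cfc and bound
    have hg : (fun μ : ℂ => (starRingEnd ℂ) ζ * μ + ζ * star μ) =
        (fun μ : ℂ => (starRingEnd ℂ) ζ * μ + ζ * star μ) := rfl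
    have hcfcS : cfc (fun μ : ℂ => (starRingEnd ℂ) ζ * μ + ζ * star μ) N
        = (starRingEnd ℂ) ζ • N + ζ • star N := by
      rw [cfc_add _ _ _ (by fun_prop) (by fun_prop)]
      congr 1
      · exact cfc_const_mul_id _ N
      · rw [cfc_const_mul _ _ N (by fun_prop), cfc_star_id (a := N) (ha := hN)]
    have hnormS : ‖NormedSpace.exp ((starRingEnd ℂ) ζ • N + ζ • star N)‖
        ≤ Real.exp (2 * Hs) := by
      rw [← hcfcS, ← CFC.complex_exp_eq_normedSpace_exp,
        ← cfc_comp' Complex.exp _ N (by fun_prop) (by fun_prop)]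
      refine norm_cfc_le (Real.exp_nonneg _) fun μ hμ => ?_
      rw [Complex.norm_exp]
      refine Real.exp_le_exp.2 ?_
      have hre : ((starRingEnd ℂ) ζ * μ + ζ * star μ).re
          = 2 * (μ * (starRingEnd ℂ) ζ).re := by
        simp only [Complex.add_re, Complex.mul_re, RCLike.star_def, Complex.conj_re,
          Complex.conj_im]
        ring
      rw [hre]
      have := hspec μ hμ
      linarith
    have h2 : ‖NormedSpace.exp A‖ * ‖NormedSpace.exp A‖ ≤ Real.exp Hs * Real.exp Hs := by
      rw [← CStarRing.norm_star_mul_self (E := H →L[ℂ] H), hstarmul, ← Real.exp_add]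
      calc ‖NormedSpace.exp ((starRingEnd ℂ) ζ • N + ζ • star N)‖
          ≤ Real.exp (2 * Hs) := hnormS
        _ = Real.exp (Hs + Hs) := by ring_nf
    nlinarith [norm_nonneg (NormedSpace.exp A), Real.exp_pos Hs]
  -- split the exponentials
  have hsplit : ∀ c : ℂ, NormedSpace.exp (c • (N + J))
      = NormedSpace.exp (c • N) * NormedSpace.exp (c • J) := by
    intro c
    rw [smul_add, NormedSpace.exp_add_of_commute ((hNJ.smul_left c).smul_right c)]
  -- rewrite the inner product
  have hadj : star (NormedSpace.exp ((starRingEnd ℂ) z • N)) = NormedSpace.exp (z • star N) := by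
    rw [NormedSpace.star_exp, star_smul, RCLike.star_def, Complex.conj_conj]
  have hinner :
      (inner ℂ (NormedSpace.exp ((starRingEnd ℂ) z • (N + J)) h)
             (NormedSpace.exp ((starRingEnd ℂ) w • (N + J)) h) : ℂ)
      = inner ℂ (NormedSpace.exp ((starRingEnd ℂ) z • J) h)
          ((NormedSpace.exp A) (NormedSpace.exp ((starRingEnd ℂ) w • J) h)) := by
    rw [hsplit, hsplit]
    rw [ContinuousLinearMap.mul_apply, ContinuousLinearMap.mul_apply]
    rw [← ContinuousLinearMap.adjoint_inner_right (NormedSpace.exp ((starRingEnd ℂ) z • N))]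
    congr 1
    have : (ContinuousLinearMap.adjoint (NormedSpace.exp ((starRingEnd ℂ) z • N)))
        ∘L (NormedSpace.exp ((starRingEnd ℂ) w • N)) = NormedSpace.exp A := by
      rw [← ContinuousLinearMap.star_eq_adjoint, hadj, ← ContinuousLinearMap.mul_def,
        ← NormedSpace.exp_add_of_commute, hA]
      exact (hNN'.symm.smul_left z).smul_right ((starRingEnd ℂ) w)
    rw [← ContinuousLinearMap.comp_apply, this]
  rw [hinner]
  -- final estimate
  have hz : ‖NormedSpace.exp ((starRingEnd ℂ) z • J) h‖ ≤ M * (1 + ‖z‖) ^ (k - 1) * ‖h‖ := by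
    refine (ContinuousLinearMap.le_opNorm _ _).trans ?_
    have := hJexp ((starRingEnd ℂ) z)
    rw [RCLike.norm_conj] at this
    exact mul_le_mul_of_nonneg_right this (norm_nonneg _)
  have hw : ‖NormedSpace.exp ((starRingEnd ℂ) w • J) h‖ ≤ M * (1 + ‖w‖) ^ (k - 1) * ‖h‖ := by
    refine (ContinuousLinearMap.le_opNorm _ _).trans ?_
    have := hJexp ((starRingEnd ℂ) w)
    rw [RCLike.norm_conj] at this
    exact mul_le_mul_of_nonneg_right this (norm_nonneg _)
  have hmid : ‖(NormedSpace.exp A) (NormedSpace.exp ((starRingEnd ℂ) w • J) h)‖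
      ≤ Real.exp Hs * (M * (1 + ‖w‖) ^ (k - 1) * ‖h‖) := by
    refine (ContinuousLinearMap.le_opNorm _ _).trans ?_
    exact mul_le_mul hexpA hw (norm_nonneg _) (Real.exp_nonneg _)
  have hcs := norm_inner_le_norm (𝕜 := ℂ)
    (NormedSpace.exp ((starRingEnd ℂ) z • J) h)
    ((NormedSpace.exp A) (NormedSpace.exp ((starRingEnd ℂ) w • J) h))
  have hpow : (1 + ‖z‖) ^ (k - 1) * (1 + ‖w‖) ^ (k - 1)
      ≤ (1 + ‖z‖ + ‖w‖) ^ (2 * (k - 1)) := by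
    have h1 : (1 + ‖z‖) * (1 + ‖w‖) ≤ (1 + ‖z‖ + ‖w‖) ^ 2 := by
      have := norm_nonneg z
      have := norm_nonneg w
      nlinarith [mul_nonneg (norm_nonneg z) (norm_nonneg w)]
    calc (1 + ‖z‖) ^ (k - 1) * (1 + ‖w‖) ^ (k - 1)
        = ((1 + ‖z‖) * (1 + ‖w‖)) ^ (k - 1) := (mul_pow _ _ _).symm
      _ ≤ ((1 + ‖z‖ + ‖w‖) ^ 2) ^ (k - 1) := by
          refine pow_le_pow_left₀ ?_ h1 _
          positivity
      _ = (1 + ‖z‖ + ‖w‖) ^ (2 * (k - 1)) := by rw [← pow_mul]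
  calc ‖(inner ℂ (NormedSpace.exp ((starRingEnd ℂ) z • J) h)
          ((NormedSpace.exp A) (NormedSpace.exp ((starRingEnd ℂ) w • J) h)) : ℂ)‖
      ≤ (M * (1 + ‖z‖) ^ (k - 1) * ‖h‖) * (Real.exp Hs * (M * (1 + ‖w‖) ^ (k - 1) * ‖h‖)) := by
        refine hcs.trans ?_
        exact mul_le_mul hz hmid (norm_nonneg _) (by positivity)
    _ = (M * M * (‖h‖ * ‖h‖)) * ((1 + ‖z‖) ^ (k - 1) * (1 + ‖w‖) ^ (k - 1)) * Real.exp Hs := by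
        ring
    _ ≤ (M * M * (‖h‖ * ‖h‖) + 1) * (1 + ‖z‖ + ‖w‖) ^ (2 * (k - 1)) * Real.exp Hs := by
        refine mul_le_mul_of_nonneg_right ?_ (Real.exp_nonneg _)
        have hMh : (0:ℝ) ≤ M * M * (‖h‖ * ‖h‖) := by positivity
        refine mul_le_mul (by linarith) hpow (by positivity) (by linarith)
end

section
/- Let K₁, K₂ be positive semidefinite kernels on a set X with RKHS H(K₁), H(K₂), and let K₁⊙K₂ denote their pointwise product, K₁⊙K₂(x,y) = K₁(x,y)K₂(x,y). Suppose D₁ is a bounded operator on H(K₁) and D₂ a bounded operator on H(K₂), and D is an operator on H(K₁⊙K₂) such that for the restriction-to-diagonal map Λ: H(K₁)⊗H(K₂) → H(K₁⊙K₂), u ↦ (x ↦ û(x,x)), one has D∘Λ = Λ∘(D₁⊗I + I⊗D₂). Then D is bounded with ‖D‖ ≤ ‖D₁‖ + ‖D₂‖. -/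
open scoped BigOperators ComplexConjugate ComplexOrder MatrixOrder

lemma tensor_norm_sq_eq {H1 H2 G : Type*}
    [NormedAddCommGroup H1] [InnerProductSpace ℂ H1]
    [NormedAddCommGroup H2] [InnerProductSpace ℂ H2]
    [NormedAddCommGroup G] [InnerProductSpace ℂ G]
    (τ : H1 →ₗ[ℂ] H2 →ₗ[ℂ] G)
    (hτinner : ∀ (a c : H1) (b d : H2),
      (inner ℂ (τ a b) (τ c d) : ℂ) = (inner ℂ a c : ℂ) * (inner ℂ b d : ℂ))
    {n : ℕ} (b : Fin n → H2) (γ : Matrix (Fin n) (Fin n) ℂ)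
    (hγ : ∀ i j, (inner ℂ (b i) (b j) : ℂ) = ∑ k, conj (γ k i) * γ k j)
    (v : Fin n → H1) :
    (‖∑ i, τ (v i) (b i)‖ ^ 2 : ℝ) = ∑ k, ‖∑ i, γ k i • v i‖ ^ 2 := by
  have hR : ∀ k, (inner ℂ (∑ i, γ k i • v i) (∑ i, γ k i • v i) : ℂ)
      = ∑ j, ∑ i, (conj (γ k i) * γ k j) * inner ℂ (v i) (v j) := by
    intro k
    rw [inner_sum]
    refine Finset.sum_congr rfl fun j _ => ?_
    rw [sum_inner]
    refine Finset.sum_congr rfl fun i _ => ?_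
    rw [inner_smul_left, inner_smul_right]; ring
  have hL : (inner ℂ (∑ i, τ (v i) (b i)) (∑ i, τ (v i) (b i)) : ℂ)
      = ∑ j, ∑ i, ∑ k, (conj (γ k i) * γ k j) * inner ℂ (v i) (v j) := by
    rw [inner_sum]
    refine Finset.sum_congr rfl fun j _ => ?_
    rw [sum_inner]
    refine Finset.sum_congr rfl fun i _ => ?_
    rw [hτinner, hγ, Finset.mul_sum]
    exact Finset.sum_congr rfl fun k _ => mul_comm _ _
  have key : (inner ℂ (∑ i, τ (v i) (b i)) (∑ i, τ (v i) (b i)) : ℂ)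
      = ∑ k, (inner ℂ (∑ i, γ k i • v i) (∑ i, γ k i • v i) : ℂ) := by
    rw [hL]
    calc ∑ j, ∑ i, ∑ k, (conj (γ k i) * γ k j) * (inner ℂ (v i) (v j) : ℂ)
        = ∑ j, ∑ k, ∑ i, (conj (γ k i) * γ k j) * (inner ℂ (v i) (v j) : ℂ) :=
          Finset.sum_congr rfl fun j _ => by rw [Finset.sum_comm]
      _ = ∑ k, ∑ j, ∑ i, (conj (γ k i) * γ k j) * (inner ℂ (v i) (v j) : ℂ) := by
          rw [Finset.sum_comm]
      _ = ∑ k, (inner ℂ (∑ i, γ k i • v i) (∑ i, γ k i • v i) : ℂ) :=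
          Finset.sum_congr rfl fun k _ => (hR k).symm
  have := congrArg RCLike.re key
  simpa only [map_sum, inner_self_eq_norm_sq] using this

lemma tensor_op_bound {H1 H2 G : Type*}
    [NormedAddCommGroup H1] [InnerProductSpace ℂ H1]
    [NormedAddCommGroup H2] [InnerProductSpace ℂ H2]
    [NormedAddCommGroup G] [InnerProductSpace ℂ G]
    (τ : H1 →ₗ[ℂ] H2 →ₗ[ℂ] G)
    (hτinner : ∀ (a c : H1) (b d : H2),
      (inner ℂ (τ a b) (τ c d) : ℂ) = (inner ℂ a c : ℂ) * (inner ℂ b d : ℂ))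
    (D1 : H1 →L[ℂ] H1) {n : ℕ} (a : Fin n → H1) (b : Fin n → H2) :
    ‖∑ i, τ (D1 (a i)) (b i)‖ ≤ ‖D1‖ * ‖∑ i, τ (a i) (b i)‖ := by
  set β : Matrix (Fin n) (Fin n) ℂ := fun i j => (inner ℂ (b i) (b j) : ℂ) with hβdef
  have hherm : β.IsHermitian := by
    ext i j
    rw [Matrix.conjTranspose_apply]; simp [hβdef, inner_conj_symm]
  have hpsd : β.PosSemidef := by
    refine Matrix.posSemidef_iff_dotProduct_mulVec.mpr ⟨hherm, fun x => ?_⟩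
    have hdp : dotProduct (star x) (β.mulVec x)
        = (inner ℂ (∑ i, x i • b i) (∑ j, x j • b j) : ℂ) := by
      simp only [dotProduct, Matrix.mulVec, Pi.star_apply, RCLike.star_def,
        inner_sum, sum_inner, inner_smul_left, inner_smul_right, Finset.mul_sum, hβdef]
      rw [Finset.sum_comm]
      refine Finset.sum_congr rfl fun i _ => Finset.sum_congr rfl fun j _ => ?_
      ring
    rw [hdp, inner_self_eq_norm_sq_to_K]
    norm_cast
    positivity
  set γ := CFC.sqrt β with hγdef
  have hγherm : γ.IsHermitian := (Matrix.nonneg_iff_posSemidef.mp (CFC.sqrt_nonneg β)).isHermitian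
  have hγ : ∀ i j, (inner ℂ (b i) (b j) : ℂ) = ∑ k, conj (γ k i) * γ k j := by
    intro i j
    have h2 : (γ * γ) i j = β i j := by rw [CFC.sqrt_mul_sqrt_self β hpsd.nonneg]
    rw [Matrix.mul_apply] at h2
    have h3 : (inner ℂ (b i) (b j) : ℂ) = ∑ k, γ i k * γ k j := h2.symm
    rw [h3]
    refine Finset.sum_congr rfl fun k _ => ?_
    congr 1
    have := congrFun (congrFun hγherm i) k
    simpa [Matrix.conjTranspose_apply] using this.symm
  have hDa := tensor_norm_sq_eq τ hτinner b γ hγ (fun i => D1 (a i))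
  have ha := tensor_norm_sq_eq τ hτinner b γ hγ a
  have hle : (‖∑ i, τ (D1 (a i)) (b i)‖ ^ 2 : ℝ)
      ≤ ‖D1‖ ^ 2 * ‖∑ i, τ (a i) (b i)‖ ^ 2 := by
    rw [hDa, ha, Finset.mul_sum]
    refine Finset.sum_le_sum fun k _ => ?_
    have hlin : ∑ i, γ k i • D1 (a i) = D1 (∑ i, γ k i • a i) := by
      rw [map_sum]; simp
    rw [hlin]
    calc ‖D1 (∑ i, γ k i • a i)‖ ^ 2 ≤ (‖D1‖ * ‖∑ i, γ k i • a i‖) ^ 2 := by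
          apply pow_le_pow_left₀ (norm_nonneg _) (D1.le_opNorm _)
      _ = ‖D1‖ ^ 2 * ‖∑ i, γ k i • a i‖ ^ 2 := by ring
  have h2 : ‖∑ i, τ (D1 (a i)) (b i)‖ ^ 2 ≤ (‖D1‖ * ‖∑ i, τ (a i) (b i)‖) ^ 2 := by
    rw [mul_pow]; exact hle
  calc ‖∑ i, τ (D1 (a i)) (b i)‖
      = Real.sqrt (‖∑ i, τ (D1 (a i)) (b i)‖ ^ 2) := (Real.sqrt_sq (norm_nonneg _)).symm
    _ ≤ Real.sqrt ((‖D1‖ * ‖∑ i, τ (a i) (b i)‖) ^ 2) := Real.sqrt_le_sqrt h2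
    _ = ‖D1‖ * ‖∑ i, τ (a i) (b i)‖ := Real.sqrt_sq (by positivity)


/-- let `K₁, K₂` be PSD kernels on `X`.  Model the Hilbert-space tensor
product `H(K₁)⊗H(K₂)` abstractly as a Hilbert space `G` with a bilinear map
`τ : H(K₁) → H(K₂) → G` whose image spans densely and with
`⟨τ a b, τ c d⟩ = ⟨a,c⟩·⟨b,d⟩`.  Suppose `Λ : G → H(K₁⊙K₂)` (the restriction-to-diagonal
map) is a contraction such that every `f ∈ H(K₁⊙K₂)` has a preimage `u` with
`‖u‖ = ‖f‖` (Aronszajn: `‖f‖ = min{‖u‖ : Λu = f}`).  Let `D₁, D₂` be bounded operators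
on `H(K₁), H(K₂)` and let `D' = D₁⊗I + I⊗D₂` on `G` (i.e.
`D'(τ a b) = τ (D₁a) b + τ a (D₂b)`).  If a linear map `D` on `H(K₁⊙K₂)` satisfies
`D∘Λ = Λ∘D'`, then `D` is bounded with `‖D f‖ ≤ (‖D₁‖+‖D₂‖)·‖f‖`. -/
theorem stmt18 {H1 H2 G H12 : Type*}
    [NormedAddCommGroup H1] [InnerProductSpace ℂ H1] [CompleteSpace H1]
    [NormedAddCommGroup H2] [InnerProductSpace ℂ H2] [CompleteSpace H2]
    [NormedAddCommGroup G] [InnerProductSpace ℂ G] [CompleteSpace G]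
    [NormedAddCommGroup H12] [InnerProductSpace ℂ H12] [CompleteSpace H12]
    (τ : H1 →ₗ[ℂ] H2 →ₗ[ℂ] G)
    (hτinner : ∀ (a c : H1) (b d : H2),
      (inner ℂ (τ a b) (τ c d) : ℂ) = (inner ℂ a c : ℂ) * (inner ℂ b d : ℂ))
    (hτspan : (Submodule.span ℂ {x : G | ∃ a b, x = τ a b}).topologicalClosure = ⊤)
    (Λ : G →L[ℂ] H12) (hΛ : ‖Λ‖ ≤ 1)
    (hmin : ∀ f : H12, ∃ u : G, Λ u = f ∧ ‖u‖ = ‖f‖)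
    (D1 : H1 →L[ℂ] H1) (D2 : H2 →L[ℂ] H2)
    (D' : G →L[ℂ] G)
    (hD' : ∀ (a : H1) (b : H2), D' (τ a b) = τ (D1 a) b + τ a (D2 b))
    (D : H12 →ₗ[ℂ] H12)
    (hcommute : ∀ u : G, D (Λ u) = Λ (D' u)) :
    ∀ f : H12, ‖D f‖ ≤ (‖D1‖ + ‖D2‖) * ‖f‖ := by
  set S : Set G := {x : G | ∃ a b, x = τ a b} with hSdef
  set C : ℝ := ‖D1‖ + ‖D2‖ with hCdef
  -- the flipped bilinear map, for the D2 side
  have hτflipinner : ∀ (a c : H2) (b d : H1),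
      (inner ℂ (τ.flip a b) (τ.flip c d) : ℂ) = (inner ℂ a c : ℂ) * (inner ℂ b d : ℂ) := by
    intro a c b d
    simp only [LinearMap.flip_apply, hτinner]
    ring
  -- norm bound for D' on the span
  have hspan : ∀ u ∈ Submodule.span ℂ S, ‖D' u‖ ≤ C * ‖u‖ := by
    intro u hu
    rw [Submodule.mem_span_set'] at hu
    obtain ⟨n, c, g, hg⟩ := hu
    -- absorb the coefficients into the first factor
    obtain ⟨a, b, hab⟩ : ∃ (a : Fin n → H1) (b : Fin n → H2),
        ∀ i, c i • (g i : G) = τ (a i) (b i) := by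
      choose a b hab using fun i => (g i).2
      exact ⟨fun i => c i • a i, b, fun i => by rw [hab, map_smul, LinearMap.smul_apply]⟩
    have hu' : u = ∑ i, τ (a i) (b i) := by
      rw [← hg]; exact Finset.sum_congr rfl fun i _ => hab i
    have hD'u : D' u = (∑ i, τ (D1 (a i)) (b i)) + ∑ i, τ (a i) (D2 (b i)) := by
      rw [hu', map_sum, ← Finset.sum_add_distrib]
      exact Finset.sum_congr rfl fun i _ => hD' _ _
    have h1 : ‖∑ i, τ (D1 (a i)) (b i)‖ ≤ ‖D1‖ * ‖u‖ := by
      rw [hu']; exact tensor_op_bound τ hτinner D1 a b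
    have h2 : ‖∑ i, τ (a i) (D2 (b i))‖ ≤ ‖D2‖ * ‖u‖ := by
      have := tensor_op_bound τ.flip hτflipinner D2 b a
      simp only [LinearMap.flip_apply] at this
      rw [hu']; exact this
    calc ‖D' u‖ ≤ ‖∑ i, τ (D1 (a i)) (b i)‖ + ‖∑ i, τ (a i) (D2 (b i))‖ := by
          rw [hD'u]; exact norm_add_le _ _
      _ ≤ ‖D1‖ * ‖u‖ + ‖D2‖ * ‖u‖ := add_le_add h1 h2
      _ = C * ‖u‖ := by rw [hCdef]; ring
  -- extend by density
  have hall : ∀ u : G, ‖D' u‖ ≤ C * ‖u‖ := by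
    have hclosed : IsClosed {u : G | ‖D' u‖ ≤ C * ‖u‖} :=
      isClosed_le (D'.continuous.norm) (continuous_const.mul continuous_norm)
    have hsub : ((Submodule.span ℂ S : Submodule ℂ G) : Set G)
        ⊆ {u : G | ‖D' u‖ ≤ C * ‖u‖} := fun u hu => hspan u hu
    intro u
    have humem : u ∈ closure ((Submodule.span ℂ S : Submodule ℂ G) : Set G) := by
      have : u ∈ (Submodule.span ℂ S).topologicalClosure := by
        rw [hτspan]; trivial
      rwa [← Submodule.topologicalClosure_coe]
    exact closure_minimal hsub hclosed humem
  -- conclude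
  intro f
  obtain ⟨u, hΛu, hnorm⟩ := hmin f
  have hDf : D f = Λ (D' u) := by rw [← hΛu, hcommute]
  calc ‖D f‖ = ‖Λ (D' u)‖ := by rw [hDf]
    _ ≤ ‖Λ‖ * ‖D' u‖ := Λ.le_opNorm _
    _ ≤ 1 * ‖D' u‖ := mul_le_mul_of_nonneg_right hΛ (norm_nonneg _)
    _ = ‖D' u‖ := one_mul _
    _ ≤ C * ‖u‖ := hall u
    _ = (‖D1‖ + ‖D2‖) * ‖f‖ := by rw [hnorm, hCdef]
end

section
/- Let (T,h) be a cyclic commuting n-tuple on a Hilbert space H, let L = Σ_j f_j ⊗ f_j be the spectral decomposition of the associated positive compact operator on the Fock space H²(ℂⁿ) (with pairwise orthogonal eigenvectors f_j, λ_j = ‖f_j‖²_{H²} > 0), and let F(z,w) = ⟨e^{⟨T,w⟩}h, e^{⟨T,z⟩}h⟩. Then F(z,w) = Σ_j f_j(z)·conj(f_j(w)) for all z,w ∈ ℂⁿ, each f_j lies in the RKHS H(F) with ‖f_j‖_{H(F)} = 1, and {f_j} is an orthonormal basis of H(F); consequently H(F) ⊆ H²(ℂⁿ) as sets of functions. -/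
open scoped BigOperators

/-- An orthonormal family with square-summable coefficients gives a summable series. -/
lemma aux_summable_smul {ι E' : Type*} [NormedAddCommGroup E'] [InnerProductSpace ℂ E']
    [CompleteSpace E'] {v : ι → E'} (hv : Orthonormal ℂ v) {a : ι → ℂ}
    (ha : Summable fun i => ‖a i‖ ^ 2) : Summable fun i => a i • v i := by
  have h := (hv.orthogonalFamily.summable_iff_norm_sq_summable a).mpr ha
  simpa only [LinearIsometry.toSpanSingleton_apply] using h
/-- let `(T,h)` be a cyclic commuting tuple on `H`.  Model the Fock space
`H²(ℂⁿ)` as an RKHS `Fk` (injective linear `E1 : Fk → functions`, kernel vectors `κ w`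
with kernel `e^{⟨z,w⟩}`), and let `L` be the positive compact operator on `Fk` with
`F(z,w) = ⟨L K_w, K_z⟩`, with spectral decomposition `L = Σ_j f_j ⊗ f_j` (pairwise
orthogonal eigenvectors, `λ_j = ‖f_j‖² > 0`).  Let `H(F)` be the RKHS of
`F(z,w) = ⟨e^{⟨T,w⟩}h, e^{⟨T,z⟩}h⟩`, modeled by `E2, kF`.  Then
`F(z,w) = Σ_j f_j(z)·conj(f_j(w))`; the `f_j`, viewed in `H(F)`, form an orthonormal
basis of `H(F)`; and `H(F) ⊆ H²(ℂⁿ)` as sets of functions. -/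
theorem stmt19 {H Fk HF : Type*}
    [NormedAddCommGroup H] [InnerProductSpace ℂ H] [CompleteSpace H]
    [NormedAddCommGroup Fk] [InnerProductSpace ℂ Fk] [CompleteSpace Fk]
    [NormedAddCommGroup HF] [InnerProductSpace ℂ HF] [CompleteSpace HF]
    {n : ℕ} (T : Fin n → H →L[ℂ] H) (hcomm : ∀ i j, T i ∘L T j = T j ∘L T i) (h : H)
    (hcyc : (Submodule.span ℂ
      (Set.range fun α : Fin n → ℕ => opPow T α h)).topologicalClosure = ⊤)
    -- the Fock space model `Fk`
    (E1 : Fk →ₗ[ℂ] ((Fin n → ℂ) → ℂ)) (hE1inj : Function.Injective E1)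
    (κ : (Fin n → ℂ) → Fk)
    (hrepro1 : ∀ (x : Fk) (w : Fin n → ℂ), E1 x w = inner ℂ (κ w) x)
    (hker1 : ∀ z w : Fin n → ℂ,
      E1 (κ w) z = Complex.exp (∑ i, z i * (starRingEnd ℂ) (w i)))
    (hspan1 : (Submodule.span ℂ (Set.range κ)).topologicalClosure = ⊤)
    -- the operator `L` with `F(z,w) = ⟨L K_w, K_z⟩` and its spectral decomposition
    (L : Fk →L[ℂ] Fk)
    (hLF : ∀ z w : Fin n → ℂ, kerF T h z w = inner ℂ (κ z) (L (κ w)))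
    {J : Type*} (f : J → Fk)
    (horth : ∀ j k, j ≠ k → (inner ℂ (f j) (f k) : ℂ) = 0)
    (hnz : ∀ j, f j ≠ 0)
    (hspec : ∀ x : Fk, HasSum (fun j => (inner ℂ (f j) x : ℂ) • f j) (L x))
    -- the RKHS model of `H(F)`
    (E2 : HF →ₗ[ℂ] ((Fin n → ℂ) → ℂ)) (hE2inj : Function.Injective E2)
    (kF : (Fin n → ℂ) → HF)
    (hrepro2 : ∀ (u : HF) (w : Fin n → ℂ), E2 u w = inner ℂ (kF w) u)
    (hker2 : ∀ z w : Fin n → ℂ, E2 (kF w) z = kerF T h z w)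
    (hspan2 : (Submodule.span ℂ (Set.range kF)).topologicalClosure = ⊤) :
    (∀ z w : Fin n → ℂ,
      HasSum (fun j => E1 (f j) z * (starRingEnd ℂ) (E1 (f j) w)) (kerF T h z w)) ∧
    (∃ g : J → HF, (∀ j, E2 (g j) = E1 (f j)) ∧ Orthonormal ℂ g ∧
      (Submodule.span ℂ (Set.range g)).topologicalClosure = ⊤) ∧
    (∀ u : HF, ∃ x : Fk, E1 x = E2 u) := by
  classical
  -- the basic kernel identity
  have hkk : ∀ w z : Fin n → ℂ, (inner ℂ (kF w) (kF z) : ℂ) = inner ℂ (κ w) (L (κ z)) := by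
    intro w z
    rw [← hrepro2, hker2, hLF]
  -- Part 1
  have part1 : ∀ z w : Fin n → ℂ,
      HasSum (fun j => E1 (f j) z * (starRingEnd ℂ) (E1 (f j) w)) (kerF T h z w) := by
    intro z w
    have h1 := (hspec (κ w)).mapL (innerSL ℂ (κ z))
    simp only [innerSL_apply_apply, inner_smul_right] at h1
    have he : (fun j => E1 (f j) z * (starRingEnd ℂ) (E1 (f j) w))
        = fun j => (inner ℂ (f j) (κ w) : ℂ) * inner ℂ (κ z) (f j) := by
      funext j
      rw [hrepro1, hrepro1, inner_conj_symm, mul_comm]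
    rw [he, hLF z w]
    exact h1
  -- eigenvalue equation
  have hLf : ∀ j, L (f j) = (((‖f j‖ : ℂ)) ^ 2) • f j := by
    intro j
    have h2 : HasSum (fun k => (inner ℂ (f k) (f j) : ℂ) • f k) ((((‖f j‖ : ℂ)) ^ 2) • f j) := by
      have h3 := hasSum_single (f := fun k => (inner ℂ (f k) (f j) : ℂ) • f k) j
        (fun k hk => by
          show (inner ℂ (f k) (f j) : ℂ) • f k = 0
          rw [horth k j hk, zero_smul])
      rw [inner_self_eq_norm_sq_to_K] at h3
      exact h3
    exact (hspec (f j)).unique h2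
  have hnorm_nz : ∀ j, ((‖f j‖ : ℂ)) ≠ 0 := fun j =>
    Complex.ofReal_ne_zero.mpr (norm_ne_zero_iff.mpr (hnz j))
  have hlam_nz : ∀ j, (((‖f j‖ : ℂ)) ^ 2) ≠ 0 := fun j => pow_ne_zero _ (hnorm_nz j)
  -- correspondence between finite combinations of kernels
  have corr0 : ∀ c d : (Fin n → ℂ) →₀ ℂ,
      (inner ℂ (c.sum fun z a => a • kF z) (d.sum fun z a => a • kF z) : ℂ)
        = inner ℂ (c.sum fun z a => a • κ z) (L (d.sum fun z a => a • κ z)) := by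
    intro c d
    rw [Finsupp.sum, Finsupp.sum, Finsupp.sum, Finsupp.sum, map_sum, sum_inner, sum_inner]
    refine Finset.sum_congr rfl fun z _ => ?_
    rw [inner_smul_left, inner_smul_left, inner_sum, inner_sum]
    congr 1
    refine Finset.sum_congr rfl fun z' _ => ?_
    rw [map_smul, inner_smul_right, inner_smul_right, hkk]
  have corrL : ∀ (d : (Fin n → ℂ) →₀ ℂ) (w : Fin n → ℂ),
      (inner ℂ (kF w) (d.sum fun z a => a • kF z) : ℂ)
        = inner ℂ (κ w) (L (d.sum fun z a => a • κ z)) := by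
    intro d w
    rw [Finsupp.sum, Finsupp.sum, map_sum, inner_sum, inner_sum]
    refine Finset.sum_congr rfl fun z _ => ?_
    rw [map_smul, inner_smul_right, inner_smul_right, hkk]
  have corrR : ∀ (c : (Fin n → ℂ) →₀ ℂ) (y : Fk) (u' : HF),
      (∀ w, (inner ℂ (kF w) u' : ℂ) = inner ℂ (κ w) (L y)) →
      (inner ℂ (c.sum fun z a => a • kF z) u' : ℂ)
        = inner ℂ (c.sum fun z a => a • κ z) (L y) := by
    intro c y u' hu'
    rw [Finsupp.sum, Finsupp.sum, sum_inner, sum_inner]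
    refine Finset.sum_congr rfl fun z _ => ?_
    rw [inner_smul_left, inner_smul_left, hu']
  -- norm bound for lifted combinations
  have normbound : ∀ d : (Fin n → ℂ) →₀ ℂ,
      ‖d.sum fun z a => a • kF z‖ ≤ Real.sqrt ‖L‖ * ‖d.sum fun z a => a • κ z‖ := by
    intro d
    set u := d.sum fun z a => a • kF z with hu
    set v := d.sum fun z a => a • κ z with hv
    have h1 : ‖u‖ ^ 2 ≤ ‖L‖ * ‖v‖ ^ 2 := by
      have h2 : ‖u‖ ^ 2 = ‖(inner ℂ u u : ℂ)‖ := by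
        rw [inner_self_eq_norm_sq_to_K, norm_pow, RCLike.norm_ofReal, abs_norm]
      have h3 : ‖(inner ℂ u u : ℂ)‖ = ‖(inner ℂ v (L v) : ℂ)‖ := by rw [corr0 d d]
      have h4 : ‖(inner ℂ v (L v) : ℂ)‖ ≤ ‖v‖ * ‖L v‖ := norm_inner_le_norm v (L v)
      have h5 : ‖L v‖ ≤ ‖L‖ * ‖v‖ := L.le_opNorm v
      have h6 : 0 ≤ ‖v‖ := norm_nonneg v
      nlinarith
    have h7 := Real.sqrt_le_sqrt h1
    rwa [Real.sqrt_sq (norm_nonneg u), Real.sqrt_mul (norm_nonneg _),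
      Real.sqrt_sq (norm_nonneg v)] at h7
  -- main construction: lifting elements of Fk to HF
  have key : ∀ x : Fk, ∃ u : HF, (∀ w, (inner ℂ (kF w) u : ℂ) = inner ℂ (κ w) (L x)) ∧
      ∀ (y : Fk) (u' : HF), (∀ w, (inner ℂ (kF w) u' : ℂ) = inner ℂ (κ w) (L y)) →
        (inner ℂ u u' : ℂ) = inner ℂ x (L y) := by
    intro x
    have hdense : Dense ((Submodule.span ℂ (Set.range κ) : Submodule ℂ Fk) : Set Fk) :=
      Submodule.dense_iff_topologicalClosure_eq_top.mpr hspan1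
    have hseq : ∀ k : ℕ, ∃ c : (Fin n → ℂ) →₀ ℂ,
        ‖x - (c.sum fun z a => a • κ z)‖ < 1 / ((k : ℝ) + 1) := by
      intro k
      obtain ⟨y, hy, hdist⟩ := Metric.mem_closure_iff.mp (hdense x) (1 / ((k : ℝ) + 1))
        (by positivity)
      obtain ⟨c, rfl⟩ := Finsupp.mem_span_range_iff_exists_finsupp.mp hy
      exact ⟨c, by rwa [dist_eq_norm] at hdist⟩
    choose c hc using hseq
    set v : ℕ → Fk := fun k => (c k).sum fun z a => a • κ z with hvdef
    set u : ℕ → HF := fun k => (c k).sum fun z a => a • kF z with hudef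
    have hvx : Filter.Tendsto v Filter.atTop (nhds x) := by
      rw [tendsto_iff_norm_sub_tendsto_zero]
      refine squeeze_zero (fun k => norm_nonneg _) (fun k => ?_)
        tendsto_one_div_add_atTop_nhds_zero_nat
      rw [norm_sub_rev]
      exact (hc k).le
    have hucauchy : CauchySeq u := by
      rw [Metric.cauchySeq_iff]
      intro ε hε
      have hvC := hvx.cauchySeq
      rw [Metric.cauchySeq_iff] at hvC
      obtain ⟨N, hN⟩ := hvC (ε / (Real.sqrt ‖L‖ + 1)) (by positivity)
      refine ⟨N, fun a ha b hb => ?_⟩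
      have hab : u a - u b = ((c a) - (c b)).sum fun z g => g • kF z :=
        (Finsupp.sum_sub_index (fun z b₁ b₂ => sub_smul b₁ b₂ (kF z))).symm
      have hvab : v a - v b = ((c a) - (c b)).sum fun z g => g • κ z :=
        (Finsupp.sum_sub_index (fun z b₁ b₂ => sub_smul b₁ b₂ (κ z))).symm
      have hb1 := normbound ((c a) - (c b))
      rw [← hab, ← hvab] at hb1
      have h0 : (0 : ℝ) ≤ Real.sqrt ‖L‖ := Real.sqrt_nonneg _
      have hd := hN a ha b hb
      rw [dist_eq_norm] at hd ⊢
      calc ‖u a - u b‖ ≤ Real.sqrt ‖L‖ * ‖v a - v b‖ := hb1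
        _ ≤ (Real.sqrt ‖L‖ + 1) * ‖v a - v b‖ := by nlinarith [norm_nonneg (v a - v b)]
        _ < (Real.sqrt ‖L‖ + 1) * (ε / (Real.sqrt ‖L‖ + 1)) := by
            exact mul_lt_mul_of_pos_left hd (by positivity)
        _ = ε := by field_simp
    obtain ⟨ut, hut⟩ := cauchySeq_tendsto_of_complete hucauchy
    refine ⟨ut, fun w => ?_, fun y u' hu' => ?_⟩
    · have h1 : Filter.Tendsto (fun k => (inner ℂ (kF w) (u k) : ℂ)) Filter.atTop
          (nhds (inner ℂ (kF w) ut)) := Filter.Tendsto.inner tendsto_const_nhds hut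
      have h2 : Filter.Tendsto (fun k => (inner ℂ (κ w) (L (v k)) : ℂ)) Filter.atTop
          (nhds (inner ℂ (κ w) (L x))) :=
        Filter.Tendsto.inner tendsto_const_nhds ((L.continuous.tendsto x).comp hvx)
      have h3 : (fun k => (inner ℂ (kF w) (u k) : ℂ)) = fun k => inner ℂ (κ w) (L (v k)) :=
        funext fun k => corrL (c k) w
      rw [h3] at h1
      exact tendsto_nhds_unique h1 h2
    · have h1 : Filter.Tendsto (fun k => (inner ℂ (u k) u' : ℂ)) Filter.atTop
          (nhds (inner ℂ ut u')) := Filter.Tendsto.inner hut tendsto_const_nhds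
      have h2 : Filter.Tendsto (fun k => (inner ℂ (v k) (L y) : ℂ)) Filter.atTop
          (nhds (inner ℂ x (L y))) := Filter.Tendsto.inner hvx tendsto_const_nhds
      have h3 : (fun k => (inner ℂ (u k) u' : ℂ)) = fun k => inner ℂ (v k) (L y) :=
        funext fun k => corrR (c k) y u' hu'
      rw [h3] at h1
      exact tendsto_nhds_unique h1 h2
  choose A hA1 hA2 using key
  have hAA : ∀ x y : Fk, (inner ℂ (A x) (A y) : ℂ) = inner ℂ x (L y) :=
    fun x y => hA2 x y (A y) (hA1 y)
  -- the candidate orthonormal family in HF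
  set g : J → HF := fun j => (((‖f j‖ : ℂ)) ^ 2)⁻¹ • A (f j) with hgdef
  have hE2g : ∀ j, E2 (g j) = E1 (f j) := by
    intro j
    funext w
    rw [hrepro2, hrepro1]
    show (inner ℂ (kF w) ((((‖f j‖ : ℂ)) ^ 2)⁻¹ • A (f j)) : ℂ) = inner ℂ (κ w) (f j)
    rw [inner_smul_right, hA1 (f j) w, hLf j, inner_smul_right, ← mul_assoc,
      inv_mul_cancel₀ (hlam_nz j), one_mul]
  have hginner : ∀ j k, (inner ℂ (g j) (g k) : ℂ) = if j = k then 1 else 0 := by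
    intro j k
    show (inner ℂ ((((‖f j‖ : ℂ)) ^ 2)⁻¹ • A (f j)) ((((‖f k‖ : ℂ)) ^ 2)⁻¹ • A (f k)) : ℂ) = _
    rw [inner_smul_left, inner_smul_right, hAA, hLf k, inner_smul_right, map_inv₀, map_pow,
      Complex.conj_ofReal]
    by_cases hjk : j = k
    · subst hjk
      rw [if_pos rfl, inner_self_eq_norm_sq_to_K]
      field_simp
      exact div_self (hlam_nz j)
    · rw [if_neg hjk, horth j k hjk]
      ring
  have horthog : Orthonormal ℂ g := orthonormal_iff_ite.mpr hginner
  -- summability of the coefficients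
  have hsq : ∀ z, Summable fun j => ‖E1 (f j) z‖ ^ 2 := by
    intro z
    have h1 := (part1 z z).mapL Complex.reCLM
    refine h1.summable.congr fun j => ?_
    simp [Complex.mul_conj, Complex.normSq_eq_norm_sq, ← Complex.ofReal_pow]
  -- every kernel vector is in the closed span of g
  have hkFmem : ∀ z, kF z ∈ (Submodule.span ℂ (Set.range g)).topologicalClosure := by
    intro z
    set a : J → ℂ := fun j => (starRingEnd ℂ) (E1 (f j) z) with hadef
    have ha : Summable fun j => ‖a j‖ ^ 2 := by
      refine (hsq z).congr fun j => ?_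
      rw [hadef]
      simp [RCLike.norm_conj]
    have hsummable := aux_summable_smul horthog ha
    have hs := hsummable.hasSum
    set s := ∑' j, a j • g j with hsdef
    have hmem : s ∈ (Submodule.span ℂ (Set.range g)).topologicalClosure := by
      refine (Submodule.isClosed_topologicalClosure _).mem_of_tendsto hs
        (Filter.Eventually.of_forall fun t => ?_)
      exact Submodule.sum_mem _ fun j _ => Submodule.smul_mem _ _
        (Submodule.le_topologicalClosure _ (Submodule.subset_span ⟨j, rfl⟩))
    have hse : s = kF z := by
      have hdiff : s - kF z ∈ (Submodule.span ℂ (Set.range kF))ᗮ := by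
        rw [Submodule.mem_orthogonal]
        intro v hv
        induction hv using Submodule.span_induction with
        | mem v hv =>
          obtain ⟨w, rfl⟩ := hv
          rw [inner_sub_right]
          have h1 := hs.mapL (innerSL ℂ (kF w))
          simp only [innerSL_apply_apply] at h1
          have h2 : HasSum (fun j => (inner ℂ (kF w) (a j • g j) : ℂ)) (inner ℂ (kF w) (kF z)) := by
            have h3 := part1 w z
            have h4 : (fun j => (inner ℂ (kF w) (a j • g j) : ℂ))
                = fun j => E1 (f j) w * (starRingEnd ℂ) (E1 (f j) z) := by
              funext j
              rw [inner_smul_right, ← hrepro2, hE2g j, hadef, mul_comm]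
            rw [h4, ← hrepro2, hker2]
            exact h3
          rw [h1.unique h2, sub_self]
        | zero => exact inner_zero_left _
        | add x y hx hy ihx ihy => rw [inner_add_left, ihx, ihy, add_zero]
        | smul t x hx ihx => rw [inner_smul_left, ihx, mul_zero]
      rw [Submodule.topologicalClosure_eq_top_iff.mp hspan2, Submodule.mem_bot] at hdiff
      exact sub_eq_zero.mp hdiff
    rwa [hse] at hmem
  have htot : (Submodule.span ℂ (Set.range g)).topologicalClosure = ⊤ := by
    rw [eq_top_iff, ← hspan2]
    have h1 : Submodule.span ℂ (Set.range kF)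
        ≤ (Submodule.span ℂ (Set.range g)).topologicalClosure :=
      Submodule.span_le.mpr (by rintro _ ⟨z, rfl⟩; exact hkFmem z)
    calc (Submodule.span ℂ (Set.range kF)).topologicalClosure
        ≤ ((Submodule.span ℂ (Set.range g)).topologicalClosure).topologicalClosure :=
          Submodule.topologicalClosure_mono h1
      _ = (Submodule.span ℂ (Set.range g)).topologicalClosure :=
          (Submodule.isClosed_topologicalClosure _).submodule_topologicalClosure_eq
  refine ⟨part1, ⟨g, hE2g, horthog, htot⟩, ?_⟩
  -- Part 3
  intro u
  set b : HilbertBasis J ℂ HF := HilbertBasis.mk horthog htot.ge with hbdef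
  have hb : ⇑b = g := HilbertBasis.coe_mk _ _
  have hbj : ∀ j : J, (b j : HF) = g j := fun j => congrFun hb j
  have hbu : HasSum (fun j => (inner ℂ (g j) u : ℂ) • g j) u := by
    have h1 := b.hasSum_repr u
    simp only [HilbertBasis.repr_apply_apply, hbj] at h1
    exact h1
  set a : J → ℂ := fun j => inner ℂ (g j) u with hadef
  have haS : Summable fun j => ‖a j‖ ^ 2 := Orthonormal.inner_products_summable u horthog
  have hbound : ∀ j, ‖f j‖ ^ 2 ≤ ‖L‖ := by
    intro j
    have h1 : ‖L (f j)‖ = ‖f j‖ ^ 2 * ‖f j‖ := by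
      rw [hLf, norm_smul, norm_pow, Complex.norm_real, Real.norm_eq_abs, abs_norm]
    have h2 : ‖L (f j)‖ ≤ ‖L‖ * ‖f j‖ := L.le_opNorm _
    have h3 : 0 < ‖f j‖ := norm_pos_iff.mpr (hnz j)
    nlinarith
  set e : J → Fk := fun j => ((‖f j‖ : ℂ))⁻¹ • f j with hedef
  have he : Orthonormal ℂ e := by
    rw [orthonormal_iff_ite]
    intro i j
    show (inner ℂ (((‖f i‖ : ℂ))⁻¹ • f i) (((‖f j‖ : ℂ))⁻¹ • f j) : ℂ) = _
    rw [inner_smul_left, inner_smul_right, map_inv₀, Complex.conj_ofReal]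
    by_cases hij : i = j
    · subst hij
      rw [if_pos rfl, inner_self_eq_norm_sq_to_K]
      field_simp
      exact div_self (hlam_nz i)
    · rw [if_neg hij, horth i j hij]
      ring
  have hsum : Summable fun j => (a j * ((‖f j‖ : ℂ))) • e j := by
    refine aux_summable_smul he ?_
    refine Summable.of_nonneg_of_le (fun j => by positivity) (fun j => ?_)
      (haS.mul_right ‖L‖)
    rw [norm_mul, mul_pow, Complex.norm_real, Real.norm_eq_abs, abs_norm]
    exact mul_le_mul_of_nonneg_left (hbound j) (by positivity)
  have hfe : ∀ j, (a j * ((‖f j‖ : ℂ))) • e j = a j • f j := by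
    intro j
    rw [hedef]
    rw [smul_smul, mul_assoc, mul_inv_cancel₀ (hnorm_nz j), mul_one]
  have hsum' : Summable fun j => a j • f j := hsum.congr hfe
  have hx := hsum'.hasSum
  refine ⟨∑' j, a j • f j, ?_⟩
  funext w
  rw [hrepro1, hrepro2]
  have H1 := hx.mapL (innerSL ℂ (κ w))
  have H2 := hbu.mapL (innerSL ℂ (kF w))
  simp only [innerSL_apply_apply] at H1 H2
  have hterm : (fun j => (inner ℂ (κ w) (a j • f j) : ℂ))
      = fun j => (inner ℂ (kF w) (a j • g j) : ℂ) := by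
    funext j
    rw [inner_smul_right, inner_smul_right, ← hrepro1, ← hrepro2, hE2g j]
  rw [hterm] at H1
  exact H1.unique H2
end
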